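/- arXiv:1607.08648 — 6 statements merged into one kernel-verified Lean document; each statement's English description precedes it below -/
import Mathlib

section
/- There are no Gaussian integers x, y, z with xyz ≠ 0 and gcd(x, y, z) a unit such that x^4 + y^4 = z^2. -/
open Zsqrtd
namespace FLT4GI

def pp : GaussianInt := ⟨1, 1⟩

lemma pp_sq : pp ^ 2 = ⟨0, 2⟩ := by ext <;> simp [pp, pow_two, Zsqrtd.re_mul, Zsqrtd.im_mul]
lemma pp_pow4 : pp ^ 4 = -4 := by
  have h : pp ^ 4 = (pp ^ 2) ^ 2 := by ring
  rw [h, pp_sq]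
  ext <;> simp [pow_two, Zsqrtd.re_mul, Zsqrtd.im_mul]

lemma norm_pp : Zsqrtd.norm pp = 2 := by decide

lemma prime_pp : Prime pp := by
  rw [← UniqueFactorizationMonoid.irreducible_iff_prime]
  constructor
  · intro h
    rw [← Zsqrtd.norm_eq_one_iff] at h
    simp [norm_pp] at h
  · intro a b hab
    have h2 : a.norm.natAbs * b.norm.natAbs = 2 := by
      rw [← Int.natAbs_mul, ← Zsqrtd.norm_mul, ← hab]; decide
    rcases Nat.prime_two.eq_one_or_self_of_dvd a.norm.natAbs ⟨_, h2.symm⟩ with h | h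
    · exact Or.inl (Zsqrtd.norm_eq_one_iff.mp h)
    · right
      apply Zsqrtd.norm_eq_one_iff.mp
      rw [h] at h2; omega

/-- divisibility by pp is parity of re+im -/
lemma pp_dvd_iff (x : GaussianInt) : pp ∣ x ↔ (2:ℤ) ∣ (x.re + x.im) := by
  constructor
  · rintro ⟨c, rfl⟩
    simp [pp, Zsqrtd.re_mul, Zsqrtd.im_mul]
    ring_nf
    exact ⟨c.re, by ring⟩
  · intro ⟨k, hk⟩
    refine ⟨⟨k, x.im - k⟩, ?_⟩
    ext <;> simp [pp, Zsqrtd.re_mul, Zsqrtd.im_mul] <;> omega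

end FLT4GI
namespace FLT4GI
open FLT4GI

lemma intCast_dvd (n : ℤ) (z : GaussianInt) : (n : GaussianInt) ∣ z ↔ n ∣ z.re ∧ n ∣ z.im :=
  Zsqrtd.intCast_dvd n z

lemma four_dvd (z : GaussianInt) : (4 : GaussianInt) ∣ z ↔ (4:ℤ) ∣ z.re ∧ (4:ℤ) ∣ z.im := by
  have := intCast_dvd 4 z
  norm_num at this
  exact this

lemma eight_dvd (z : GaussianInt) : (8 : GaussianInt) ∣ z ↔ (8:ℤ) ∣ z.re ∧ (8:ℤ) ∣ z.im := by
  have := intCast_dvd 8 z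
  norm_num at this
  exact this

lemma odd_sq {x : GaussianInt} (h : ¬ pp ∣ x) : ∃ u v : ℤ, x^2 = ⟨u, 4*v⟩ ∧ ¬ (2:ℤ) ∣ u := by
  rw [pp_dvd_iff] at h
  have him : x^2 = (⟨x.re*x.re - x.im*x.im, 2*(x.re*x.im)⟩ : GaussianInt) := by
    ext <;> simp [pow_two, Zsqrtd.re_mul, Zsqrtd.im_mul] <;> ring
  rcases Int.even_or_odd x.re with ⟨k, hk⟩ | ⟨k, hk⟩
  · obtain ⟨l, hl⟩ : Odd x.im := Int.odd_iff.mpr (by omega)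
    refine ⟨x.re*x.re - x.im*x.im, k * x.im, ?_, ?_⟩
    · rw [him]; congr 1; rw [hk]; ring
    · intro ⟨t, ht⟩
      rw [hk, hl] at ht
      have h2 : 2*t = 2*(2*k*k - 2*l*l - 2*l) - 1 := by linear_combination -ht
      omega
  · obtain ⟨l, hl⟩ : Even x.im := Int.even_iff.mpr (by omega)
    refine ⟨x.re*x.re - x.im*x.im, x.re * l, ?_, ?_⟩
    · rw [him]; congr 1; rw [hl]; ring
    · intro ⟨t, ht⟩
      rw [hk, hl] at ht
      have h2 : 2*t = 2*(2*k*k + 2*k - 2*l*l) + 1 := by linear_combination -ht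
      omega

lemma sq_mod4 {x : GaussianInt} (h : ¬ pp ∣ x) :
    (4 : GaussianInt) ∣ x^2 - 1 ∨ (4 : GaussianInt) ∣ x^2 + 1 := by
  obtain ⟨u, v, hx, hu⟩ := odd_sq h
  have h1 : (x^2 - 1 : GaussianInt) = ⟨u - 1, 4*v⟩ := by
    rw [hx]; ext <;> simp
  have h2 : (x^2 + 1 : GaussianInt) = ⟨u + 1, 4*v⟩ := by
    rw [hx]; ext <;> simp
  rcases (by omega : (4:ℤ) ∣ u - 1 ∨ (4:ℤ) ∣ u + 1) with h' | h'
  · left; rw [h1, four_dvd]; exact ⟨h', ⟨v, rfl⟩⟩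
  · right; rw [h2, four_dvd]; exact ⟨h', ⟨v, rfl⟩⟩

lemma pow4_mod8 {x : GaussianInt} (h : ¬ pp ∣ x) : (8 : GaussianInt) ∣ x^4 - 1 := by
  obtain ⟨u, v, hx, hu⟩ := odd_sq h
  have h4 : x^4 = (x^2)^2 := by ring
  obtain ⟨m, hm⟩ : Odd u := Int.odd_iff.mpr (by omega)
  obtain ⟨t, ht⟩ := Int.even_mul_succ_self m
  have hre : (x^4 - 1 : GaussianInt) = ⟨u*u + -1*(4*v)*(4*v) - 1, u*(4*v)+(4*v)*u⟩ := by
    rw [h4, hx]; ext <;> simp [pow_two, Zsqrtd.re_mul, Zsqrtd.im_mul]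
  rw [hre, eight_dvd]
  constructor
  · refine ⟨t - 2*(v*v), ?_⟩
    show u*u + -1*(4*v)*(4*v) - 1 = 8*(t - 2*(v*v))
    linear_combination (u + 2*m + 1)*hm + 4*ht
  · refine ⟨u*v, ?_⟩
    show u*(4*v)+(4*v)*u = 8*(u*v)
    ring

end FLT4GI
namespace FLT4GI

def ii : GaussianInt := ⟨0, 1⟩

lemma ii_sq : ii ^ 2 = -1 := by
  ext <;> simp [ii, pow_two, Zsqrtd.re_mul, Zsqrtd.im_mul]

lemma two_eq : (2 : GaussianInt) = -ii * pp ^ 2 := by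
  rw [pp_sq]; ext <;> simp [ii, Zsqrtd.re_mul, Zsqrtd.im_mul]

lemma four_eq : (4 : GaussianInt) = -(pp ^ 4) := by
  rw [pp_pow4]; ring

lemma eight_eq : (8 : GaussianInt) = ii * pp ^ 6 := by
  have h : pp ^ 6 = pp ^ 4 * pp ^ 2 := by ring
  rw [h, pp_pow4, pp_sq]; ext <;> simp [ii, Zsqrtd.re_mul, Zsqrtd.im_mul]

lemma pp_ne_zero : pp ≠ 0 := prime_pp.ne_zero

lemma isUnit_cases {u : GaussianInt} (h : IsUnit u) :
    u = 1 ∨ u = -1 ∨ u = ii ∨ u = -ii := by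
  have h1 : u.norm.natAbs = 1 := Zsqrtd.norm_eq_one_iff.mpr h
  have h2 : u.re * u.re + u.im * u.im = 1 := by
    have hn : u.norm = u.re * u.re - (-1) * u.im * u.im := rfl
    have hnn : 0 ≤ u.norm := Zsqrtd.norm_nonneg (by norm_num) u
    have h3 : u.norm = 1 ∨ u.norm = -1 := Int.natAbs_eq_iff.mp h1
    have h4 : u.norm = 1 := by omega
    linarith [h4 ▸ hn]
  have hre : -1 ≤ u.re ∧ u.re ≤ 1 := by constructor <;> nlinarith [mul_self_nonneg u.im]
  have him : -1 ≤ u.im ∧ u.im ≤ 1 := by constructor <;> nlinarith [mul_self_nonneg u.re]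
  have he : (u.re = 1 ∧ u.im = 0) ∨ (u.re = -1 ∧ u.im = 0) ∨
      (u.re = 0 ∧ u.im = 1) ∨ (u.re = 0 ∧ u.im = -1) := by
    obtain ⟨h4, h5⟩ := hre; obtain ⟨h6, h7⟩ := him
    interval_cases h : u.re <;> interval_cases h' : u.im <;> omega
  rcases he with ⟨h1, h2⟩ | ⟨h1, h2⟩ | ⟨h1, h2⟩ | ⟨h1, h2⟩
  · left; ext <;> simp [h1, h2]
  · right; left; ext <;> simp [h1, h2]
  · right; right; left; ext <;> simp [ii, h1, h2]
  · right; right; right; ext <;> simp [ii, h1, h2]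

lemma pp_not_unit : ¬ IsUnit pp := prime_pp.not_unit

lemma pp_dvd_sub_of_odd {s t : GaussianInt} (hs : ¬ pp ∣ s) (ht : ¬ pp ∣ t) :
    pp ∣ s - t := by
  rw [pp_dvd_iff] at *
  simp only [Zsqrtd.re_sub, Zsqrtd.im_sub]
  omega

lemma isCoprime_pp {b : GaussianInt} (hb : ¬ pp ∣ b) : IsCoprime pp b := by
  rw [← EuclideanDomain.gcd_isUnit_iff]
  set g := EuclideanDomain.gcd pp b with hg
  obtain ⟨c, hc⟩ : g ∣ pp := EuclideanDomain.gcd_dvd_left pp b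
  rcases prime_pp.irreducible.isUnit_or_isUnit hc with h | h
  · exact h
  · exfalso
    apply hb
    obtain ⟨v, hv⟩ := h.exists_right_inv
    have hppg : pp ∣ g := ⟨v, by linear_combination -v * hc - g * hv⟩
    exact dvd_trans hppg (EuclideanDomain.gcd_dvd_right pp b)

end FLT4GI
namespace FLT4GI

lemma step {m : ℕ} (hm : 2 ≤ m) {a b z d e2 s t : GaussianInt}
    (hd : IsUnit d) (he2 : IsUnit e2)
    (ha : ¬ pp ∣ a) (hb : ¬ pp ∣ b) (hab : IsCoprime a b)
    (hP : z + d * a ^ 2 = pp ^ 2 * s)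
    (hQ : z - d * a ^ 2 = pp ^ 2 * t)
    (hs : ¬ pp ∣ s)
    (hst : s * t = e2 * pp ^ (4 * m - 4) * b ^ 4) :
    ∃ c f e1' e2' w : GaussianInt, IsUnit e1' ∧ IsUnit e2' ∧
      ¬ pp ∣ c ∧ ¬ pp ∣ f ∧ ¬ pp ∣ w ∧ IsCoprime c f ∧
      e1' * c ^ 4 + e2' * pp ^ (4 * (m - 1)) * f ^ 4 = w ^ 2 := by
  have hk : 4 * m - 4 = 4 * (m - 1) := by omega
  rw [hk] at hst
  have hppow : pp ^ (4 * (m - 1)) ∣ t := by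
    apply prime_pp.pow_dvd_of_dvd_mul_left (4 * (m - 1)) hs
    rw [hst]
    exact ⟨e2 * b ^ 4, by ring⟩
  obtain ⟨t1, ht1⟩ := hppow
  have hcancel : s * t1 = e2 * b ^ 4 := by
    apply mul_left_cancel₀ (pow_ne_zero (4 * (m - 1)) pp_ne_zero)
    linear_combination hst - s * ht1
  have ht1odd : ¬ pp ∣ t1 := by
    intro h
    have h1 : pp ∣ e2 * b ^ 4 := hcancel ▸ Dvd.dvd.mul_left h s
    rcases prime_pp.dvd_or_dvd h1 with h2 | h2
    · exact pp_not_unit (isUnit_of_dvd_unit h2 he2)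
    · exact hb (prime_pp.dvd_of_dvd_pow h2)
  have hsub : s - pp ^ (4 * (m - 1)) * t1 = -ii * d * a ^ 2 := by
    apply mul_left_cancel₀ (pow_ne_zero 2 pp_ne_zero)
    linear_combination (hQ - hP) + pp ^ 2 * ht1 + d * a ^ 2 * two_eq
  have hii : IsUnit ii := IsUnit.of_mul_eq_one (a := ii) (-ii) (by linear_combination -ii_sq)
  have hu1 : IsUnit (-ii * d) := hii.neg.mul hd
  have hcop : IsCoprime s t1 := by
    rw [← EuclideanDomain.gcd_isUnit_iff]
    have hc1 : IsCoprime (-ii * d * a ^ 2) (e2 * b ^ 4) := by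
      apply (isCoprime_mul_unit_left_left hu1 _ _).mpr
      apply (isCoprime_mul_unit_left_right he2 _ _).mpr
      exact hab.pow
    apply hc1.isUnit_of_dvd'
    · rw [← hsub]
      exact dvd_sub (EuclideanDomain.gcd_dvd_left s t1)
        (Dvd.dvd.mul_left (EuclideanDomain.gcd_dvd_right s t1) _)
    · rw [← hcancel]
      exact Dvd.dvd.mul_right (EuclideanDomain.gcd_dvd_left s t1) t1
  obtain ⟨nu, hnu⟩ := he2
  have hfac1 : s * (↑nu⁻¹ * t1) = b ^ 4 := by
    rw [mul_left_comm, hcancel, ← hnu, ← mul_assoc, Units.inv_mul, one_mul]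
  have hcop2 : IsCoprime s (↑nu⁻¹ * t1) :=
    (isCoprime_mul_unit_left_right (Units.isUnit _) _ _).mpr hcop
  obtain ⟨c, hc⟩ := exists_associated_pow_of_mul_eq_pow' hcop2 hfac1
  obtain ⟨f, hf⟩ := exists_associated_pow_of_mul_eq_pow' hcop2.symm
    (by rw [mul_comm] at hfac1; exact hfac1)
  obtain ⟨u1, hu1e⟩ := hc
  obtain ⟨u2, hu2e⟩ := hf
  -- hu1e : c ^ 4 * ↑u1 = s ; hu2e : f ^ 4 * ↑u2 = ↑nu⁻¹ * t1
  have hf2 : ↑nu * (f ^ 4 * ↑u2) = t1 := by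
    rw [hu2e, ← mul_assoc, Units.mul_inv, one_mul]
  refine ⟨c, f, -ii * d * ↑u1, ii * d * ↑nu * ↑u2, -ii * d * a, ?_, ?_, ?_, ?_, ?_, ?_, ?_⟩
  · exact hu1.mul (Units.isUnit u1)
  · exact ((hii.mul hd).mul (Units.isUnit nu)).mul (Units.isUnit u2)
  · intro h
    exact hs (hu1e ▸ Dvd.dvd.mul_right (dvd_pow h (by norm_num)) _)
  · intro h
    apply ht1odd
    rw [← hf2]
    exact Dvd.dvd.mul_left (Dvd.dvd.mul_right (dvd_pow h (by norm_num)) _) _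
  · intro h
    rcases prime_pp.dvd_or_dvd h with h2 | h2
    · exact pp_not_unit (isUnit_of_dvd_unit h2 hu1)
    · exact ha h2
  · apply IsCoprime.of_isCoprime_of_dvd_left (IsCoprime.of_isCoprime_of_dvd_right hcop ?f1) ?f2
    case f1 => exact dvd_trans (dvd_pow_self f (n := 4) (by norm_num)) ⟨↑nu * ↑u2, by linear_combination -hf2⟩
    case f2 => exact dvd_trans (dvd_pow_self c (n := 4) (by norm_num)) ⟨↑u1, hu1e.symm⟩
  · linear_combination (-(ii*d)) * hu1e + (ii*d*pp^(4*(m-1))) * hf2 + (-(ii*d)) * hsub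

end FLT4GI
namespace FLT4GI

lemma descent : ∀ m : ℕ, 1 ≤ m → ∀ a b z e1 e2 : GaussianInt, IsUnit e1 → IsUnit e2 →
    ¬ pp ∣ a → ¬ pp ∣ b → ¬ pp ∣ z → IsCoprime a b →
    e1 * a ^ 4 + e2 * pp ^ (4 * m) * b ^ 4 = z ^ 2 → False := by
  intro m
  induction m using Nat.strong_induction_on with
  | _ m IH =>
  intro hm a b z e1 e2 he1 he2 ha hb hz hab heq
  have hsplit4 : pp ^ (4 * m) = pp ^ 4 * pp ^ (4 * m - 4) := by
    rw [← pow_add]; congr 1; omega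
  obtain ⟨q, hq⟩ := pow4_mod8 ha
  -- δ such that δ² = e1
  have hd : ∃ dl : GaussianInt, IsUnit dl ∧ dl ^ 2 = e1 := by
    have h4e : (4 : GaussianInt) ∣ z ^ 2 - e1 := by
      refine ⟨2 * e1 * q - e2 * pp ^ (4 * m - 4) * b ^ 4, ?_⟩
      linear_combination -heq + e1 * hq + e2 * b ^ 4 * pp ^ (4 * m - 4) * four_eq
        + e2 * b ^ 4 * hsplit4
    rcases isUnit_cases he1 with rfl | rfl | rfl | rfl
    · exact ⟨1, isUnit_one, by ring⟩
    · refine ⟨ii, ?_, by rw [ii_sq]⟩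
      exact IsUnit.of_mul_eq_one (a := ii) (-ii) (by linear_combination -ii_sq)
    · exfalso
      rcases sq_mod4 hz with h | h
      · have : (4 : GaussianInt) ∣ (z^2 - ii) - (z^2 - 1) := dvd_sub h4e h
        have h2 : (4 : GaussianInt) ∣ (⟨1, -1⟩ : GaussianInt) := by
          convert this using 1
          ext <;> simp [ii]
        rw [four_dvd] at h2
        exact absurd h2.1 (by decide)
      · have : (4 : GaussianInt) ∣ (z^2 - ii) - (z^2 + 1) := dvd_sub h4e h
        have h2 : (4 : GaussianInt) ∣ (⟨-1, -1⟩ : GaussianInt) := by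
          convert this using 1
          ext <;> simp [ii]
        rw [four_dvd] at h2
        exact absurd h2.1 (by decide)
    · exfalso
      rcases sq_mod4 hz with h | h
      · have : (4 : GaussianInt) ∣ (z^2 - -ii) - (z^2 - 1) := dvd_sub h4e h
        have h2 : (4 : GaussianInt) ∣ (⟨1, 1⟩ : GaussianInt) := by
          convert this using 1
          ext <;> simp [ii]
        rw [four_dvd] at h2
        exact absurd h2.1 (by decide)
      · have : (4 : GaussianInt) ∣ (z^2 - -ii) - (z^2 + 1) := dvd_sub h4e h
        have h2 : (4 : GaussianInt) ∣ (⟨-1, 1⟩ : GaussianInt) := by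
          convert this using 1
          ext <;> simp [ii]
        rw [four_dvd] at h2
        exact absurd h2.1 (by decide)
  obtain ⟨dl, hdl, hdlsq⟩ := hd
  have hPQ : (z + dl * a ^ 2) * (z - dl * a ^ 2) = e2 * pp ^ (4 * m) * b ^ 4 := by
    linear_combination -heq - a ^ 4 * hdlsq
  have hdiff : (z + dl * a ^ 2) - (z - dl * a ^ 2) = pp ^ 2 * (-ii * dl * a ^ 2) := by
    linear_combination dl * a ^ 2 * two_eq
  -- pp divides both factors
  have hpp1 : pp ∣ (z + dl * a ^ 2) ∧ pp ∣ (z - dl * a ^ 2) := by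
    have h1 : pp ∣ (z + dl * a ^ 2) * (z - dl * a ^ 2) := by
      rw [hPQ]
      exact Dvd.dvd.mul_right (Dvd.dvd.mul_left (dvd_pow_self pp (n := 4 * m) (by omega)) e2) _
    have h2 : pp ∣ (z + dl * a ^ 2) - (z - dl * a ^ 2) := by
      rw [hdiff]; exact Dvd.dvd.mul_right (dvd_pow_self pp two_ne_zero) _
    rcases prime_pp.dvd_or_dvd h1 with h | h
    · exact ⟨h, by have := dvd_sub h h2; simpa using this⟩
    · refine ⟨?_, h⟩
      have := dvd_add h h2
      simpa using this
  obtain ⟨⟨P1, hP1⟩, ⟨Q1, hQ1⟩⟩ := hpp1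
  have hsplit2 : pp ^ (4 * m) = pp ^ 2 * pp ^ (4 * m - 2) := by
    rw [← pow_add]; congr 1; omega
  have hP1Q1 : P1 * Q1 = e2 * pp ^ (4 * m - 2) * b ^ 4 := by
    apply mul_left_cancel₀ (pow_ne_zero 2 pp_ne_zero)
    linear_combination hPQ - Q1 * pp * hP1 - (z + dl * a ^ 2) * hQ1 + e2 * b ^ 4 * hsplit2
  -- pp^2 divides both factors
  have hpp2 : (∃ s, z + dl * a ^ 2 = pp ^ 2 * s) ∧ (∃ t, z - dl * a ^ 2 = pp ^ 2 * t) := by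
    have h1 : pp ∣ P1 * Q1 := by
      rw [hP1Q1]
      exact Dvd.dvd.mul_right (Dvd.dvd.mul_left (dvd_pow_self pp (n := 4 * m - 2) (by omega)) e2) _
    rcases prime_pp.dvd_or_dvd h1 with ⟨w, hw⟩ | ⟨w, hw⟩
    · have hPs : z + dl * a ^ 2 = pp ^ 2 * w := by
        rw [hP1, hw]; ring
      refine ⟨⟨w, hPs⟩, ⟨w - (-ii * dl * a ^ 2), ?_⟩⟩
      linear_combination -hdiff + hPs
    · have hQs : z - dl * a ^ 2 = pp ^ 2 * w := by
        rw [hQ1, hw]; ring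
      refine ⟨⟨w + (-ii * dl * a ^ 2), ?_⟩, ⟨w, hQs⟩⟩
      linear_combination hdiff + hQs
  obtain ⟨⟨s, hP2⟩, ⟨t, hQ2⟩⟩ := hpp2
  have hst : s * t = e2 * pp ^ (4 * m - 4) * b ^ 4 := by
    apply mul_left_cancel₀ (pow_ne_zero 4 pp_ne_zero)
    have h1 : pp ^ 4 * (s * t) = (z + dl * a ^ 2) * (z - dl * a ^ 2) := by
      rw [hP2, hQ2]; ring
    rw [h1, hPQ]
    linear_combination e2 * b ^ 4 * hsplit4
  have hsubst : s - t = -ii * dl * a ^ 2 := by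
    apply mul_left_cancel₀ (pow_ne_zero 2 pp_ne_zero)
    linear_combination hQ2 - hP2 + dl * a ^ 2 * two_eq
  have hppa2 : ¬ pp ∣ -ii * dl * a ^ 2 := by
    intro h
    rcases prime_pp.dvd_or_dvd h with h2 | h2
    · apply pp_not_unit
      apply isUnit_of_dvd_unit h2
      exact (IsUnit.of_mul_eq_one (a := ii) (-ii) (by linear_combination -ii_sq)).neg.mul hdl
    · exact ha (prime_pp.dvd_of_dvd_pow h2)
  rcases Nat.lt_or_ge m 2 with hm2 | hm2
  · -- base case m = 1
    have hm1 : m = 1 := by omega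
    subst hm1
    have hstodd : ¬ pp ∣ s ∧ ¬ pp ∣ t := by
      constructor <;> intro h <;>
      · have h1 : pp ∣ e2 * pp ^ (4 * 1 - 4) * b ^ 4 := by
          rw [← hst]
          first
          | exact Dvd.dvd.mul_right h t
          | exact Dvd.dvd.mul_left h s
        rcases prime_pp.dvd_or_dvd h1 with h2 | h2
        · rcases prime_pp.dvd_or_dvd h2 with h3 | h3
          · exact pp_not_unit (isUnit_of_dvd_unit h3 he2)
          · simp at h3
            exact pp_not_unit (isUnit_of_dvd_unit h3 isUnit_one)
        · exact hb (prime_pp.dvd_of_dvd_pow h2)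
    apply hppa2
    rw [← hsubst]
    exact pp_dvd_sub_of_odd hstodd.1 hstodd.2
  · -- descent case m ≥ 2
    have hnot : ¬ pp ∣ s ∨ ¬ pp ∣ t := by
      by_contra h
      push_neg at h
      apply hppa2
      rw [← hsubst]
      exact dvd_sub h.1 h.2
    have hkey : ∃ c f e1' e2' w : GaussianInt, IsUnit e1' ∧ IsUnit e2' ∧
        ¬ pp ∣ c ∧ ¬ pp ∣ f ∧ ¬ pp ∣ w ∧ IsCoprime c f ∧
        e1' * c ^ 4 + e2' * pp ^ (4 * (m - 1)) * f ^ 4 = w ^ 2 := by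
      rcases hnot with hodd | hodd
      · exact step hm2 hdl he2 ha hb hab hP2 hQ2 hodd hst
      · refine step (z := z) (s := t) (t := s) hm2 hdl.neg he2 ha hb hab ?_ ?_ hodd ?_
        · linear_combination hQ2
        · linear_combination hP2
        · linear_combination hst
    obtain ⟨c, f, e1', e2', w, hu1', hu2', hc, hf, hw, hcf, heq'⟩ := hkey
    exact IH (m - 1) (by omega) (by omega) c f w e1' e2' hu1' hu2' hc hf hw hcf heq'

end FLT4GI
namespace FLT4GI

lemma isUnit_ii : IsUnit ii := IsUnit.of_mul_eq_one (a := ii) (-ii) (by linear_combination -ii_sq)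

lemma both_odd {x y z : GaussianInt} (hx : ¬ pp ∣ x) (hy : ¬ pp ∣ y)
    (heq : x ^ 4 + y ^ 4 = z ^ 2) : False := by
  obtain ⟨q1, hq1⟩ := pow4_mod8 hx
  obtain ⟨q2, hq2⟩ := pow4_mod8 hy
  have hz2 : z ^ 2 = pp ^ 2 * (-ii + ii * pp ^ 4 * (q1 + q2)) := by
    linear_combination (hq1 + hq2 - heq) + two_eq + (q1 + q2) * eight_eq
  have hppz : pp ∣ z := by
    apply prime_pp.dvd_of_dvd_pow (n := 2)
    rw [hz2]
    exact Dvd.dvd.mul_right (dvd_pow_self pp two_ne_zero) _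
  obtain ⟨w, hw⟩ := hppz
  have hww : w ^ 2 = -ii + ii * pp ^ 4 * (q1 + q2) := by
    apply mul_left_cancel₀ (pow_ne_zero 2 pp_ne_zero)
    linear_combination hz2 - (z + pp * w) * hw
  have hwodd : ¬ pp ∣ w := by
    rintro ⟨v, hv⟩
    have hdvd : pp ∣ ii := ⟨ii * pp ^ 3 * (q1 + q2) - pp * v ^ 2, by
      linear_combination hww - (w + pp * v) * hv⟩
    exact pp_not_unit (isUnit_of_dvd_unit hdvd isUnit_ii)
  have h4w : (4 : GaussianInt) ∣ w ^ 2 + ii :=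
    ⟨-ii * (q1 + q2), by linear_combination hww + ii * (q1 + q2) * four_eq⟩
  rcases sq_mod4 hwodd with h | h
  · have h2 : (4 : GaussianInt) ∣ (⟨1, 1⟩ : GaussianInt) := by
      convert dvd_sub h4w h using 1
      ext <;> simp [ii]
    rw [four_dvd] at h2
    exact absurd h2.1 (by decide)
  · have h2 : (4 : GaussianInt) ∣ (⟨-1, 1⟩ : GaussianInt) := by
      convert dvd_sub h4w h using 1
      ext <;> simp [ii]
    rw [four_dvd] at h2
    exact absurd h2.1 (by decide)

lemma main_coprime {x y z b : GaussianInt} (hx : x ≠ 0) (hby : b ∣ y)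
    (hgcd : ∀ d : GaussianInt, d ∣ x → d ∣ y → d ∣ z → IsUnit d)
    (heq : x ^ 4 + y ^ 4 = z ^ 2) : IsCoprime x b := by
  rw [← EuclideanDomain.gcd_isUnit_iff]
  by_contra hng
  have hg0 : EuclideanDomain.gcd x b ≠ 0 := fun h => hx (EuclideanDomain.gcd_eq_zero_iff.mp h).1
  obtain ⟨p, hpirr, hpd⟩ := WfDvdMonoid.exists_irreducible_factor hng hg0
  have hp : Prime p := UniqueFactorizationMonoid.irreducible_iff_prime.mp hpirr
  have hpx : p ∣ x := hpd.trans (EuclideanDomain.gcd_dvd_left _ _)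
  have hpy : p ∣ y := (hpd.trans (EuclideanDomain.gcd_dvd_right _ _)).trans hby
  have hpz : p ∣ z := by
    apply hp.dvd_of_dvd_pow (n := 2)
    rw [← heq]
    exact dvd_add (dvd_pow hpx (by norm_num)) (dvd_pow hpy (by norm_num))
  exact hpirr.not_isUnit (hgcd p hpx hpy hpz)

lemma one_even {x y z : GaussianInt} (hx0 : x ≠ 0) (hy0 : y ≠ 0)
    (hpx : ¬ pp ∣ x) (hpy : pp ∣ y)
    (hgcd : ∀ d : GaussianInt, d ∣ x → d ∣ y → d ∣ z → IsUnit d)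
    (heq : x ^ 4 + y ^ 4 = z ^ 2) : False := by
  have hpz : ¬ pp ∣ z := by
    intro h
    apply hpx
    apply prime_pp.dvd_of_dvd_pow (n := 4)
    have h1 : x ^ 4 = z ^ 2 - y ^ 4 := by linear_combination heq
    rw [h1]
    exact dvd_sub (dvd_pow h two_ne_zero) (dvd_pow hpy (by norm_num))
  obtain ⟨n, b, hnb, hyb⟩ := WfDvdMonoid.max_power_factor hy0 prime_pp.irreducible
  have hn1 : 1 ≤ n := by
    rcases Nat.eq_zero_or_pos n with h | h
    · exfalso; apply hnb; rw [h, pow_zero, one_mul] at hyb; rwa [← hyb]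
    · exact h
  have hcob : IsCoprime x b := main_coprime hx0 ⟨pp ^ n, by rw [hyb]; ring⟩ hgcd heq
  apply descent n hn1 x b z 1 1 isUnit_one isUnit_one hpx hnb hpz hcob
  have hy4 : y ^ 4 = pp ^ (4 * n) * b ^ 4 := by
    rw [hyb, mul_pow, ← pow_mul, Nat.mul_comm n 4]
  linear_combination heq - hy4

end FLT4GI

open FLT4GI in
/-- The equation `x⁴ + y⁴ = z²` has no nontrivial solutions over the Gaussian
integers: there are no `x, y, z : ℤ[i]` with `x * y * z ≠ 0`, `gcd (x, y, z)`
a unit, and `x ^ 4 + y ^ 4 = z ^ 2`. -/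
theorem no_nontrivial_solution_x4_add_y4_eq_z2 :
    ¬ ∃ x y z : GaussianInt, x * y * z ≠ 0 ∧
      (∀ d : GaussianInt, d ∣ x → d ∣ y → d ∣ z → IsUnit d) ∧
      x ^ 4 + y ^ 4 = z ^ 2 := by
  rintro ⟨x, y, z, hne, hgcd, heq⟩
  have hx0 : x ≠ 0 := fun h => hne (by rw [h]; ring)
  have hy0 : y ≠ 0 := fun h => hne (by rw [h]; ring)
  by_cases hpx : pp ∣ x <;> by_cases hpy : pp ∣ y
  · have hpz : pp ∣ z := by
      apply prime_pp.dvd_of_dvd_pow (n := 2)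
      rw [← heq]
      exact dvd_add (dvd_pow hpx (by norm_num)) (dvd_pow hpy (by norm_num))
    exact pp_not_unit (hgcd pp hpx hpy hpz)
  · exact one_even hy0 hx0 hpy hpx (fun d h1 h2 h3 => hgcd d h2 h1 h3)
      (by linear_combination heq)
  · exact one_even hx0 hy0 hpx hpy hgcd heq
  · exact both_odd hpx hpy heq
end

section
/- There are no Gaussian integers x, y, z with xyz ≠ 0 and gcd(x, y, z) a unit such that x^4 + i·y^2 = z^4. -/
open Zsqrtd

namespace NoSol

abbrev GI := GaussianInt

def gp : GI := ⟨1, 1⟩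

lemma gp_sq : gp ^ 2 = 2 * sqrtd := by decide
lemma two_eq : (2 : GI) = -sqrtd * gp ^ 2 := by decide
lemma gp4 : gp ^ 4 = -4 := by decide
lemma i_sq : (sqrtd : GI) * sqrtd = -1 := by decide
lemma four_cast : (4 : GI) = ((4:ℤ) : GI) := by decide
lemma gp_norm : gp.norm = 2 := by decide

lemma gp_irred : Irreducible gp := by
  constructor
  · intro h
    have := Zsqrtd.norm_eq_one_iff.mpr h
    rw [gp_norm] at this
    simp at this
  · intro a b hab
    have hn : a.norm * b.norm = 2 := by rw [← Zsqrtd.norm_mul, ← hab, gp_norm]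
    have hn' : a.norm.natAbs * b.norm.natAbs = 2 := by
      rw [← Int.natAbs_mul, hn]; rfl
    rcases Nat.prime_two.eq_one_or_self_of_dvd a.norm.natAbs ⟨b.norm.natAbs, hn'.symm⟩ with h | h
    · exact Or.inl (Zsqrtd.norm_eq_one_iff.mp h)
    · rw [h] at hn'
      exact Or.inr (Zsqrtd.norm_eq_one_iff.mp (by omega))

lemma gp_prime : Prime gp := UniqueFactorizationMonoid.irreducible_iff_prime.mp gp_irred

lemma gp_dvd_iff (u : GI) : gp ∣ u ↔ (2:ℤ) ∣ (u.re + u.im) := by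
  constructor
  · rintro ⟨v, rfl⟩
    refine ⟨v.re, ?_⟩
    simp [gp, Zsqrtd.re_mul, Zsqrtd.im_mul]
    ring
  · rintro ⟨c, hc⟩
    refine ⟨⟨c, u.im - c⟩, ?_⟩
    ext <;> simp [gp, Zsqrtd.re_mul, Zsqrtd.im_mul] <;> omega


lemma odd_mul {u v : GI} (hu : ¬ gp ∣ u) (hv : ¬ gp ∣ v) : ¬ gp ∣ u * v := by
  intro h
  rcases gp_prime.2.2 _ _ h with h' | h' <;> [exact hu h'; exact hv h']

lemma odd_unit {u : GI} (hu : IsUnit u) : ¬ gp ∣ u := fun h =>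
  gp_prime.not_unit (isUnit_of_dvd_unit h hu)

lemma odd_ne_zero {u : GI} (hu : ¬ gp ∣ u) : u ≠ 0 := by
  rintro rfl; exact hu (dvd_zero _)

lemma unit_cases {e : GI} (he : IsUnit e) : e = 1 ∨ e = -1 ∨ e = sqrtd ∨ e = -sqrtd := by
  have h1 := Zsqrtd.norm_eq_one_iff.mpr he
  have h2 : e.norm = e.re * e.re + e.im * e.im := by unfold Zsqrtd.norm; ring
  have h3 : e.re * e.re + e.im * e.im = 1 := by
    have ha := mul_self_nonneg e.re
    have hb := mul_self_nonneg e.im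
    rw [h2] at h1
    omega
  have h5 : -1 ≤ e.re := by nlinarith [mul_self_nonneg e.im, mul_self_nonneg (e.re + 1)]
  have h6 : e.re ≤ 1 := by nlinarith [mul_self_nonneg e.im, mul_self_nonneg (e.re - 1)]
  have h7 : -1 ≤ e.im := by nlinarith [mul_self_nonneg e.re, mul_self_nonneg (e.im + 1)]
  have h8 : e.im ≤ 1 := by nlinarith [mul_self_nonneg e.re, mul_self_nonneg (e.im - 1)]
  have hcs : (e.re = 1 ∧ e.im = 0) ∨ (e.re = -1 ∧ e.im = 0) ∨
      (e.re = 0 ∧ e.im = 1) ∨ (e.re = 0 ∧ e.im = -1) := by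
    interval_cases h : e.re <;> interval_cases h' : e.im <;> omega
  rcases hcs with ⟨h,h'⟩ | ⟨h,h'⟩ | ⟨h,h'⟩ | ⟨h,h'⟩
  · exact Or.inl (by ext <;> simp [h, h'])
  · exact Or.inr (Or.inl (by ext <;> simp [h, h']))
  · exact Or.inr (Or.inr (Or.inl (by ext <;> simp [h, h'])))
  · exact Or.inr (Or.inr (Or.inr (by ext <;> simp [h, h'])))

lemma unit_sq {e : GI} (he : IsUnit e) : e ^ 2 = 1 ∨ e ^ 2 = -1 := by
  rcases unit_cases he with rfl | rfl | rfl | rfl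
  · exact Or.inl (by decide)
  · exact Or.inl (by decide)
  · exact Or.inr (by decide)
  · exact Or.inr (by decide)

lemma pow_inj : ∀ (a : ℕ) {b : ℕ} {u v : GI}, ¬ gp ∣ u → ¬ gp ∣ v →
    gp ^ a * u = gp ^ b * v → a = b ∧ u = v := by
  intro a
  induction a with
  | zero =>
    intro b u v hu hv h
    cases b with
    | zero => exact ⟨rfl, by simpa using h⟩
    | succ b =>
      exfalso
      apply hu
      rw [pow_zero, one_mul, pow_succ] at h
      exact ⟨gp ^ b * v, by rw [h]; ring⟩
  | succ a ih =>
    intro b u v hu hv h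
    cases b with
    | zero =>
      exfalso
      apply hv
      rw [pow_zero, one_mul] at h
      exact ⟨gp ^ a * u, by rw [← h, pow_succ]; ring⟩
    | succ b =>
      have hgp : gp ≠ 0 := gp_prime.ne_zero
      have h' : gp ^ a * u = gp ^ b * v := by
        apply mul_left_cancel₀ hgp
        rw [pow_succ] at h
        linear_combination h
      obtain ⟨h1, h2⟩ := ih hu hv h'
      exact ⟨by omega, h2⟩


lemma dvd4_iff (g : GI) : (4:GI) ∣ g ↔ (4:ℤ) ∣ g.re ∧ (4:ℤ) ∣ g.im := by
  rw [four_cast]; exact Zsqrtd.intCast_dvd 4 g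

lemma sq_re (u : GI) : (u ^ 2).re = u.re * u.re - u.im * u.im := by
  rw [pow_two, Zsqrtd.re_mul]; ring

lemma sq_im (u : GI) : (u ^ 2).im = 2 * (u.re * u.im) := by
  rw [pow_two, Zsqrtd.im_mul]; ring

lemma sq_mod4 {u : GI} (hu : ¬ gp ∣ u) : (4:GI) ∣ u ^ 2 - 1 ∨ (4:GI) ∣ u ^ 2 + 1 := by
  have hp : ¬ (2:ℤ) ∣ (u.re + u.im) := fun h => hu ((gp_dvd_iff u).mpr h)
  rcases Int.even_or_odd u.re with ⟨k, hk⟩ | ⟨k, hk⟩ <;>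
    rcases Int.even_or_odd u.im with ⟨l, hl⟩ | ⟨l, hl⟩
  · exact absurd ⟨k + l, by omega⟩ hp
  · refine Or.inr ((dvd4_iff _).mpr ⟨⟨k*k - l*l - l, ?_⟩, ⟨k*(2*l+1), ?_⟩⟩)
    · rw [Zsqrtd.re_add, sq_re, Zsqrtd.re_one, hk, hl]; ring
    · rw [Zsqrtd.im_add, sq_im, Zsqrtd.im_one, hk, hl]; ring
  · refine Or.inl ((dvd4_iff _).mpr ⟨⟨k*k + k - l*l, ?_⟩, ⟨l*(2*k+1), ?_⟩⟩)
    · rw [Zsqrtd.re_sub, sq_re, Zsqrtd.re_one, hk, hl]; ring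
    · rw [Zsqrtd.im_sub, sq_im, Zsqrtd.im_one, hk, hl]; ring
  · exact absurd ⟨k + l + 1, by omega⟩ hp

lemma pow4_mod4 {u : GI} (hu : ¬ gp ∣ u) : (4:GI) ∣ u ^ 4 - 1 := by
  have h : u ^ 4 - 1 = (u ^ 2 - 1) * (u ^ 2 + 1) := by ring
  rcases sq_mod4 hu with hd | hd
  · rw [h]; exact hd.mul_right _
  · rw [h]; exact hd.mul_left _


lemma baseH {Y A B e f : GI} (hY : ¬ gp ∣ Y) (hA : ¬ gp ∣ A) (hB : ¬ gp ∣ B)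
    (he : IsUnit e) (hf : IsUnit f) (heq : Y ^ 2 = e * A ^ 4 + f * B ^ 4) : False := by
  obtain ⟨a, ha⟩ : (4:GI) ∣ A ^ 4 - 1 := pow4_mod4 hA
  obtain ⟨b, hb⟩ : (4:GI) ∣ B ^ 4 - 1 := pow4_mod4 hB
  rcases sq_mod4 hY with ⟨c, hc⟩ | ⟨c, hc⟩
  · have hd : (4:GI) ∣ (1 - e - f) :=
      ⟨e * a + f * b - c, by linear_combination heq + e * ha + f * hb - hc⟩
    rcases unit_cases he with rfl | rfl | rfl | rfl <;>
      rcases unit_cases hf with rfl | rfl | rfl | rfl <;>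
      exact absurd ((dvd4_iff _).mp hd) (by decide)
  · have hd : (4:GI) ∣ (-1 - e - f) :=
      ⟨e * a + f * b - c, by linear_combination heq + e * ha + f * hb - hc⟩
    rcases unit_cases he with rfl | rfl | rfl | rfl <;>
      rcases unit_cases hf with rfl | rfl | rfl | rfl <;>
      exact absurd ((dvd4_iff _).mp hd) (by decide)

lemma base2 {S T W u1 u2 : GI} (hS : ¬ gp ∣ S) (hT : ¬ gp ∣ T) (hW : ¬ gp ∣ W)
    (h1 : u1 = 1 ∨ u1 = -1) (h2 : u2 = 1 ∨ u2 = -1)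
    (heq : u1 * T ^ 4 - u2 * S ^ 4 = -(2 * sqrtd * W ^ 2)) : False := by
  obtain ⟨a, ha⟩ : (4:GI) ∣ T ^ 4 - 1 := pow4_mod4 hT
  obtain ⟨b, hb⟩ : (4:GI) ∣ S ^ 4 - 1 := pow4_mod4 hS
  rcases sq_mod4 hW with ⟨c, hc⟩ | ⟨c, hc⟩
  · have hd : (4:GI) ∣ (u1 - u2 + 2 * sqrtd) :=
      ⟨u2 * b - u1 * a - 2 * sqrtd * c, by
        linear_combination heq - u1 * ha + u2 * hb - 2 * sqrtd * hc⟩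
    rcases h1 with rfl | rfl <;> rcases h2 with rfl | rfl <;>
      exact absurd ((dvd4_iff _).mp hd) (by decide)
  · have hd : (4:GI) ∣ (u1 - u2 - 2 * sqrtd) :=
      ⟨u2 * b - u1 * a - 2 * sqrtd * c, by
        linear_combination heq - u1 * ha + u2 * hb - 2 * sqrtd * hc⟩
    rcases h1 with rfl | rfl <;> rcases h2 with rfl | rfl <;>
      exact absurd ((dvd4_iff _).mp hd) (by decide)

lemma coprime_aux {a b : GI} (ha : a ≠ 0)
    (h : ∀ p : GI, Prime p → p ∣ a → p ∣ b → False) : IsCoprime a b :=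
  isCoprime_of_prime_dvd (fun hz => ha hz.1) (fun z hz hza hzb => h z hz hza hzb)


lemma unit_i : IsUnit (sqrtd : GI) := IsUnit.of_mul_eq_one (-sqrtd) (by decide)
lemma unit_negi : IsUnit (-sqrtd : GI) := IsUnit.of_mul_eq_one sqrtd (by decide)

lemma odd_pow4 {B : GI} (hB : ¬ gp ∣ B) : ¬ gp ∣ B ^ 4 :=
  fun h => hB (gp_prime.dvd_of_dvd_pow h)

lemma gp_dvd_two : gp ∣ (2 : GI) := ⟨-sqrtd * gp, by decide⟩

lemma not_dvd_two {p : GI} (hp : Prime p) {w : GI} (hw : ¬ gp ∣ w) (h : p ∣ w) :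
    ¬ p ∣ (2 : GI) := by
  intro h2
  have hsq : p ∣ gp ^ 2 := by
    have h3 : p ∣ -sqrtd * gp ^ 2 := two_eq ▸ h2
    have h4 : p ∣ (-sqrtd * gp ^ 2) * sqrtd := h3.mul_right _
    rwa [show (-sqrtd * gp ^ 2) * sqrtd = gp ^ 2 by decide] at h4
  have hpgp : p ∣ gp := hp.dvd_of_dvd_pow hsq
  have hassoc : Associated p gp := hp.irreducible.associated_of_dvd gp_irred hpgp
  exact hw (hassoc.symm.dvd.trans h)

lemma even_add_odd {u v : GI} (hu : ¬ gp ∣ u) (hv : ¬ gp ∣ v) : gp ∣ u + v := by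
  rw [gp_dvd_iff] at hu hv ⊢
  rw [Zsqrtd.re_add, Zsqrtd.im_add]
  omega

lemma lemH : ∀ (k : ℕ) (Y A B e f : GI), IsUnit e → IsUnit f →
    ¬ gp ∣ Y → ¬ gp ∣ A → ¬ gp ∣ B → B ≠ 0 →
    (∀ p : GI, Prime p → p ∣ Y → p ∣ A → False) →
    Y ^ 2 = e * A ^ 4 + f * gp ^ (4 * k) * B ^ 4 → False := by
  intro k
  induction k with
  | zero =>
    intro Y A B e f he hf hY hA hB hB0 hcop heq
    exact baseH hY hA hB he hf (by rw [heq]; ring)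
  | succ k ih =>
    intro Y A B e f he hf hY hA hB hB0 hcop heq
    have hgp0 : gp ≠ 0 := gp_prime.ne_zero
    have hpow : gp ^ (4 * (k + 1)) = -4 * gp ^ (4 * k) := by
      rw [show 4 * (k + 1) = 4 + 4 * k by ring, pow_add, gp4]
    -- Step 1 : e = ±1
    obtain ⟨a, ha⟩ : (4:GI) ∣ A ^ 4 - 1 := pow4_mod4 hA
    have he' : e = 1 ∨ e = -1 := by
      have h4 : (4:GI) ∣ Y ^ 2 - e * A ^ 4 :=
        ⟨-(f * gp ^ (4 * k) * B ^ 4), by rw [heq, hpow]; ring⟩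
      obtain ⟨dd, hdd⟩ := h4
      rcases sq_mod4 hY with ⟨c, hc⟩ | ⟨c, hc⟩
      · have hd : (4:GI) ∣ (1 - e) := ⟨dd + e * a - c, by linear_combination hdd + e * ha - hc⟩
        rcases unit_cases he with rfl | rfl | rfl | rfl
        · exact Or.inl rfl
        · exact absurd ((dvd4_iff _).mp hd) (by decide)
        · exact absurd ((dvd4_iff _).mp hd) (by decide)
        · exact absurd ((dvd4_iff _).mp hd) (by decide)
      · have hd : (4:GI) ∣ (-1 - e) := ⟨dd + e * a - c, by linear_combination hdd + e * ha - hc⟩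
        rcases unit_cases he with rfl | rfl | rfl | rfl
        · exact absurd ((dvd4_iff _).mp hd) (by decide)
        · exact Or.inr rfl
        · exact absurd ((dvd4_iff _).mp hd) (by decide)
        · exact absurd ((dvd4_iff _).mp hd) (by decide)
    -- Step 2 : square root of e
    obtain ⟨cc, hccu, hcc⟩ : ∃ cc : GI, IsUnit cc ∧ cc ^ 2 = e := by
      rcases he' with rfl | rfl
      · exact ⟨1, isUnit_one, by decide⟩
      · exact ⟨sqrtd, unit_i, by decide⟩
    -- Step 3 : factor
    have hPQ : (Y - cc * A ^ 2) * (Y + cc * A ^ 2) = f * gp ^ (4 * (k + 1)) * B ^ 4 := by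
      linear_combination heq - A ^ 4 * hcc
    have hrhs0 : f * gp ^ (4 * (k + 1)) * B ^ 4 ≠ 0 :=
      mul_ne_zero (mul_ne_zero hf.ne_zero (pow_ne_zero _ hgp0)) (pow_ne_zero _ hB0)
    have hP0 : Y - cc * A ^ 2 ≠ 0 := by
      intro h; rw [h, zero_mul] at hPQ; exact hrhs0 hPQ.symm
    have hQ0 : Y + cc * A ^ 2 ≠ 0 := by
      intro h; rw [h, mul_zero] at hPQ; exact hrhs0 hPQ.symm
    obtain ⟨α, P', hP', hPe⟩ := WfDvdMonoid.max_power_factor hP0 gp_irred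
    obtain ⟨β, Q', hQ', hQe⟩ := WfDvdMonoid.max_power_factor hQ0 gp_irred
    have hkey : α + β = 4 * (k + 1) ∧ P' * Q' = f * B ^ 4 := by
      apply pow_inj (α + β) (odd_mul hP' hQ') (odd_mul (odd_unit hf) (odd_pow4 hB))
      rw [pow_add]
      linear_combination hPQ - (Y + cc * A ^ 2) * hPe - gp ^ α * P' * hQe
    have hsum : gp ^ α * P' + gp ^ β * Q' = 2 * Y := by linear_combination - hPe - hQe
    have hdiff : gp ^ β * Q' - gp ^ α * P' = 2 * cc * A ^ 2 := by linear_combination hPe - hQe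
    -- coprimality of P' and Q'
    have hcopPQ : ∀ p : GI, Prime p → p ∣ P' → p ∣ Q' → False := by
      intro p hp h1 h2
      have hpodd : ¬ p ∣ (2:GI) := not_dvd_two hp hP' h1
      have hp2Y : p ∣ 2 * Y := by
        rw [← hsum]; exact dvd_add ((h1.mul_left _)) ((h2.mul_left _))
      have hpY : p ∣ Y := (hp.2.2 _ _ hp2Y).resolve_left hpodd
      have hp2A : p ∣ 2 * cc * A ^ 2 := by
        rw [← hdiff]; exact dvd_sub (h2.mul_left _) (h1.mul_left _)
      have hpA2 : p ∣ A ^ 2 := by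
        rcases hp.2.2 _ _ hp2A with h | h
        · rcases hp.2.2 _ _ h with h' | h'
          · exact absurd h' hpodd
          · exact absurd (isUnit_of_dvd_unit h' hccu) hp.not_unit
        · exact h
      exact hcop p hp hpY (hp.dvd_of_dvd_pow hpA2)
    have hcoPQ : IsCoprime P' Q' := coprime_aux (odd_ne_zero hP') hcopPQ
    -- extract fourth powers
    have hassoc : Associated (B ^ 4) (P' * Q') :=
      ⟨hf.unit, by rw [IsUnit.unit_spec]; linear_combination - hkey.2⟩
    obtain ⟨p₁, u₁, hu₁⟩ := exists_associated_pow_of_associated_pow_mul hcoPQ hassoc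
    obtain ⟨q₁, u₂, hu₂⟩ := exists_associated_pow_of_associated_pow_mul hcoPQ.symm
      (by rwa [mul_comm] at hassoc)
    have hp₁ : ¬ gp ∣ p₁ := fun h => hP' (hu₁ ▸ ((h.trans (dvd_pow_self p₁ (by norm_num))).mul_right _))
    have hq₁ : ¬ gp ∣ q₁ := fun h => hQ' (hu₂ ▸ ((h.trans (dvd_pow_self q₁ (by norm_num))).mul_right _))
    -- α, β ≥ 1
    have hgpPQ : gp ∣ gp ^ α * P' ∨ gp ∣ gp ^ β * Q' := by
      rw [← hPe, ← hQe]
      exact gp_prime.2.2 _ _ (hPQ ▸ (((dvd_pow_self gp (by omega : 4 * (k+1) ≠ 0)).mul_left f).mul_right _))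
    have hboth : gp ∣ gp ^ α * P' ∧ gp ∣ gp ^ β * Q' := by
      rcases hgpPQ with h | h
      · refine ⟨h, ?_⟩
        have : gp ^ β * Q' = 2 * Y - gp ^ α * P' := by linear_combination hsum
        rw [this]
        exact dvd_sub (gp_dvd_two.mul_right _) h
      · refine ⟨?_, h⟩
        have : gp ^ α * P' = 2 * Y - gp ^ β * Q' := by linear_combination hsum
        rw [this]
        exact dvd_sub (gp_dvd_two.mul_right _) h
    have hα1 : 1 ≤ α := by
      rcases Nat.eq_zero_or_pos α with rfl | h
      · exfalso; apply hP'; simpa using hboth.1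
      · exact h
    have hβ1 : 1 ≤ β := by
      rcases Nat.eq_zero_or_pos β with rfl | h
      · exfalso; apply hQ'; simpa using hboth.2
      · exact h
    -- inverse unit
    obtain ⟨v, hv⟩ : ∃ v : GI, (-sqrtd * cc) * v = 1 := by
      refine ⟨sqrtd * cc ^ 3, ?_⟩
      rcases he' with h | h
      · rw [h] at hcc
        linear_combination (- (cc ^ 4)) * i_sq + (cc ^ 2 + 1) * hcc
      · rw [h] at hcc
        linear_combination (- (cc ^ 4)) * i_sq + (cc ^ 2 - 1) * hcc
    rcases Nat.lt_trichotomy α β with hlt | heqab | hgt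
    · -- α < β : α = 2
      have hsum' : gp ^ α * (P' + gp ^ (β - α) * Q') = gp ^ 2 * (-sqrtd * Y) := by
        have hβ : β = α + (β - α) := by omega
        rw [hβ, pow_add] at hsum
        linear_combination hsum + Y * two_eq
      have hinner : ¬ gp ∣ (P' + gp ^ (β - α) * Q') := by
        intro hdd
        apply hP'
        have : P' = (P' + gp ^ (β - α) * Q') - gp ^ (β - α) * Q' := by ring
        rw [this]
        exact dvd_sub hdd ((dvd_pow_self gp (by omega : β - α ≠ 0)).mul_right _)
      obtain ⟨hα2, -⟩ := pow_inj α hinner (odd_mul (odd_unit unit_negi) hY) hsum'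
      have hβval : β = 4 * k + 2 := by omega
      have hdiff' : gp ^ (4 * k) * Q' - P' = -sqrtd * cc * A ^ 2 := by
        apply mul_left_cancel₀ (pow_ne_zero 2 hgp0)
        rw [hα2, hβval, show 4 * k + 2 = 2 + 4 * k by ring, pow_add] at hdiff
        linear_combination hdiff + cc * A ^ 2 * two_eq
      have hvu : IsUnit v := IsUnit.of_mul_eq_one (a := v) (-sqrtd * cc) (by linear_combination hv)
      refine ih A p₁ q₁ (-(v * (u₁ : GI))) (v * (u₂ : GI)) (hvu.mul u₁.isUnit).neg (hvu.mul u₂.isUnit)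
        hA hp₁ hq₁ (odd_ne_zero hq₁) ?_ ?_
      · intro p hp hpA hpp₁
        have hpP' : p ∣ P' := hu₁ ▸ ((hpp₁.trans (dvd_pow_self p₁ (by norm_num))).mul_right _)
        have hpP : p ∣ Y - cc * A ^ 2 := hPe ▸ (hpP'.mul_left _)
        have hpY : p ∣ Y := by
          have : Y = (Y - cc * A ^ 2) + cc * A * A := by ring
          rw [this]
          exact dvd_add hpP ((hpA.mul_left cc).mul_right A)
        exact hcop p hp hpY hpA
      · linear_combination (- v) * hdiff' - A ^ 2 * hv + v * hu₁ - v * gp ^ (4 * k) * hu₂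
    · -- α = β : impossible
      subst heqab
      have hR := even_add_odd hP' hQ'
      obtain ⟨R, hR⟩ := hR
      have h1 : gp ^ (2 * k + 3) * R = gp ^ 2 * (-sqrtd * Y) := by
        have hαv : α = 2 * k + 2 := by omega
        rw [hαv] at hsum
        rw [show 2 * k + 3 = (2 * k + 2) + 1 by ring, pow_succ]
        linear_combination hsum - gp ^ (2 * k + 2) * hR + Y * two_eq
      have h3 : gp ^ 2 * gp ∣ gp ^ 2 * (-sqrtd * Y) := by
        rw [← h1, show gp ^ 2 * gp = gp ^ 3 by ring]
        exact (pow_dvd_pow gp (by omega : 3 ≤ 2 * k + 3)).mul_right R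
      have h4 : gp ∣ -sqrtd * Y := (mul_dvd_mul_iff_left (pow_ne_zero 2 hgp0)).mp h3
      exact (odd_mul (odd_unit unit_negi) hY) h4
    · -- β < α : β = 2
      have hsum' : gp ^ β * (Q' + gp ^ (α - β) * P') = gp ^ 2 * (-sqrtd * Y) := by
        have hα : α = β + (α - β) := by omega
        rw [hα, pow_add] at hsum
        linear_combination hsum + Y * two_eq
      have hinner : ¬ gp ∣ (Q' + gp ^ (α - β) * P') := by
        intro hdd
        apply hQ'
        have : Q' = (Q' + gp ^ (α - β) * P') - gp ^ (α - β) * P' := by ring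
        rw [this]
        exact dvd_sub hdd ((dvd_pow_self gp (by omega : α - β ≠ 0)).mul_right _)
      obtain ⟨hβ2, -⟩ := pow_inj β hinner (odd_mul (odd_unit unit_negi) hY) hsum'
      have hαval : α = 4 * k + 2 := by omega
      have hdiff' : Q' - gp ^ (4 * k) * P' = -sqrtd * cc * A ^ 2 := by
        apply mul_left_cancel₀ (pow_ne_zero 2 hgp0)
        rw [hβ2, hαval, show 4 * k + 2 = 2 + 4 * k by ring, pow_add] at hdiff
        linear_combination hdiff + cc * A ^ 2 * two_eq
      have hvu : IsUnit v := IsUnit.of_mul_eq_one (a := v) (-sqrtd * cc) (by linear_combination hv)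
      refine ih A q₁ p₁ (v * (u₂ : GI)) (-(v * (u₁ : GI))) (hvu.mul u₂.isUnit) (hvu.mul u₁.isUnit).neg
        hA hq₁ hp₁ (odd_ne_zero hp₁) ?_ ?_
      · intro p hp hpA hpq₁
        have hpQ' : p ∣ Q' := hu₂ ▸ ((hpq₁.trans (dvd_pow_self q₁ (by norm_num))).mul_right _)
        have hpQ : p ∣ Y + cc * A ^ 2 := hQe ▸ (hpQ'.mul_left _)
        have hpY : p ∣ Y := by
          have : Y = (Y + cc * A ^ 2) - cc * A * A := by ring
          rw [this]
          exact dvd_sub hpQ ((hpA.mul_left cc).mul_right A)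
        exact hcop p hp hpY hpA
      · linear_combination - A ^ 2 * hv - v * hdiff' - v * hu₂ + v * gp ^ (4 * k) * hu₁


set_option maxHeartbeats 2000000 in
theorem main : ¬ ∃ x y z : GaussianInt, x * y * z ≠ 0 ∧
    (∀ d : GaussianInt, d ∣ x → d ∣ y → d ∣ z → IsUnit d) ∧
    x ^ 4 + sqrtd * y ^ 2 = z ^ 4 := by
  rintro ⟨x, y, z, hxyz, hgcd, heq⟩
  have hgp0 : gp ≠ 0 := gp_prime.ne_zero
  have hx0 : x ≠ 0 := fun h => hxyz (by rw [h]; ring)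
  have hy0 : y ≠ 0 := fun h => hxyz (by rw [h]; ring)
  have hz0 : z ≠ 0 := fun h => hxyz (by rw [h]; ring)
  -- y is even
  have hyev : gp ∣ y := by
    by_contra hy
    have hx4 : ∃ ex X : GI, (ex = 0 ∨ ex = 1) ∧ x ^ 4 = ex + 4 * X := by
      by_cases h : gp ∣ x
      · obtain ⟨t, rfl⟩ := h
        exact ⟨0, -(t ^ 4), Or.inl rfl, by rw [mul_pow, gp4]; ring⟩
      · obtain ⟨X, hX⟩ := pow4_mod4 h
        exact ⟨1, X, Or.inr rfl, by linear_combination hX⟩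
    have hz4 : ∃ ez Z : GI, (ez = 0 ∨ ez = 1) ∧ z ^ 4 = ez + 4 * Z := by
      by_cases h : gp ∣ z
      · obtain ⟨t, rfl⟩ := h
        exact ⟨0, -(t ^ 4), Or.inl rfl, by rw [mul_pow, gp4]; ring⟩
      · obtain ⟨Z, hZ⟩ := pow4_mod4 h
        exact ⟨1, Z, Or.inr rfl, by linear_combination hZ⟩
    have hy2 : ∃ w c : GI, (w = 1 ∨ w = -1) ∧ y ^ 2 = w + 4 * c := by
      rcases sq_mod4 hy with ⟨c, hc⟩ | ⟨c, hc⟩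
      · exact ⟨1, c, Or.inl rfl, by linear_combination hc⟩
      · exact ⟨-1, c, Or.inr rfl, by linear_combination hc⟩
    obtain ⟨ex, X, hex, hX⟩ := hx4
    obtain ⟨ez, Z, hez, hZ⟩ := hz4
    obtain ⟨w, c, hw, hc⟩ := hy2
    have hd : (4:GI) ∣ (ex + sqrtd * w - ez) :=
      ⟨Z - X - sqrtd * c, by linear_combination heq - hX - sqrtd * hc + hZ⟩
    rcases hex with rfl | rfl <;> rcases hez with rfl | rfl <;> rcases hw with rfl | rfl <;>
      exact absurd ((dvd4_iff _).mp hd) (by decide)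
  -- x and z are odd
  have hx : ¬ gp ∣ x := by
    intro h
    have hz4 : gp ∣ z ^ 4 := by
      rw [← heq]
      exact dvd_add (dvd_pow h (by norm_num)) ((dvd_pow hyev (by norm_num)).mul_left _)
    exact gp_prime.not_unit (hgcd gp h hyev (gp_prime.dvd_of_dvd_pow hz4))
  have hz : ¬ gp ∣ z := by
    intro h
    have hx4 : gp ∣ x ^ 4 := by
      have : x ^ 4 = z ^ 4 - sqrtd * y ^ 2 := by linear_combination heq
      rw [this]
      exact dvd_sub (dvd_pow h (by norm_num)) ((dvd_pow hyev (by norm_num)).mul_left _)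
    exact gp_prime.not_unit (hgcd gp (gp_prime.dvd_of_dvd_pow hx4) hyev h)
  -- x and z are coprime
  have hcopxz : ∀ p : GI, Prime p → p ∣ x → p ∣ z → False := by
    intro p hp h1 h2
    have hpy2 : p ∣ sqrtd * y ^ 2 := by
      have : sqrtd * y ^ 2 = z ^ 4 - x ^ 4 := by linear_combination heq
      rw [this]
      exact dvd_sub (dvd_pow h2 (by norm_num)) (dvd_pow h1 (by norm_num))
    have hpy : p ∣ y := by
      rcases hp.2.2 _ _ hpy2 with h | h
      · exact absurd (isUnit_of_dvd_unit h unit_i) hp.not_unit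
      · exact hp.dvd_of_dvd_pow h
    exact hp.not_unit (hgcd p h1 hpy h2)
  -- factor z⁴ - x⁴
  have hABeq : (z ^ 2 - x ^ 2) * (z ^ 2 + x ^ 2) = sqrtd * y ^ 2 := by linear_combination - heq
  have hiy : sqrtd * y ^ 2 ≠ 0 := mul_ne_zero (by decide) (pow_ne_zero _ hy0)
  have hA0 : z ^ 2 - x ^ 2 ≠ 0 := by
    intro h; rw [h, zero_mul] at hABeq; exact hiy hABeq.symm
  have hB0 : z ^ 2 + x ^ 2 ≠ 0 := by
    intro h; rw [h, mul_zero] at hABeq; exact hiy hABeq.symm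
  obtain ⟨m, y', hy', hye⟩ := WfDvdMonoid.max_power_factor hy0 gp_irred
  obtain ⟨α, A', hA', hAe⟩ := WfDvdMonoid.max_power_factor hA0 gp_irred
  obtain ⟨β, B', hB', hBe⟩ := WfDvdMonoid.max_power_factor hB0 gp_irred
  have hm1 : 1 ≤ m := by
    rcases Nat.eq_zero_or_pos m with rfl | h
    · exfalso; apply hy'; rw [hye] at hyev; simpa using hyev
    · exact h
  have hsum : gp ^ α * A' + gp ^ β * B' = 2 * z ^ 2 := by linear_combination - hAe - hBe
  have hdiff : gp ^ β * B' - gp ^ α * A' = 2 * x ^ 2 := by linear_combination hAe - hBe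
  have hprod : α + β = 2 * m ∧ A' * B' = sqrtd * y' ^ 2 := by
    apply pow_inj (α + β) (odd_mul hA' hB')
      (odd_mul (odd_unit unit_i) (fun h => hy' (gp_prime.dvd_of_dvd_pow h)))
    rw [pow_add, show 2 * m = m * 2 by ring, pow_mul]
    linear_combination hABeq - (z ^ 2 + x ^ 2) * hAe - gp ^ α * A' * hBe +
      sqrtd * (y + gp ^ m * y') * hye
  -- A', B' coprime
  have hcopAB : ∀ p : GI, Prime p → p ∣ A' → p ∣ B' → False := by
    intro p hp h1 h2
    have hpodd : ¬ p ∣ (2:GI) := not_dvd_two hp hA' h1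
    have hpz2 : p ∣ 2 * z ^ 2 := by
      rw [← hsum]; exact dvd_add (h1.mul_left _) (h2.mul_left _)
    have hpx2 : p ∣ 2 * x ^ 2 := by
      rw [← hdiff]; exact dvd_sub (h2.mul_left _) (h1.mul_left _)
    have hpz : p ∣ z := hp.dvd_of_dvd_pow ((hp.2.2 _ _ hpz2).resolve_left hpodd)
    have hpx : p ∣ x := hp.dvd_of_dvd_pow ((hp.2.2 _ _ hpx2).resolve_left hpodd)
    exact hcopxz p hp hpx hpz
  have hcoAB : IsCoprime A' B' := coprime_aux (odd_ne_zero hA') hcopAB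
  have hassoc : Associated (y' ^ 2) (A' * B') :=
    ⟨unit_i.unit, by rw [IsUnit.unit_spec]; linear_combination - hprod.2⟩
  obtain ⟨s, u₁, hu₁⟩ := exists_associated_pow_of_associated_pow_mul hcoAB hassoc
  obtain ⟨t, u₂, hu₂⟩ := exists_associated_pow_of_associated_pow_mul hcoAB.symm
    (by rwa [mul_comm] at hassoc)
  have hs : ¬ gp ∣ s := fun h => hA' (hu₁ ▸ ((h.trans (dvd_pow_self s (by norm_num))).mul_right _))
  have ht : ¬ gp ∣ t := fun h => hB' (hu₂ ▸ ((h.trans (dvd_pow_self t (by norm_num))).mul_right _))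
  have hxz : ¬ gp ∣ x * z := odd_mul hx hz
  -- coprimality transfer for lemH
  have hcop1 : ∀ p : GI, Prime p → p ∣ x * z → p ∣ s → False := by
    intro p hp hpxz hps
    have hpA' : p ∣ A' := hu₁ ▸ ((hps.trans (dvd_pow_self s (by norm_num))).mul_right _)
    have hpA : p ∣ z ^ 2 - x ^ 2 := hAe ▸ (hpA'.mul_left _)
    rcases hp.2.2 _ _ hpxz with h | h
    · have : p ∣ z ^ 2 := by
        have hzz : z ^ 2 = (z ^ 2 - x ^ 2) + x * x := by ring
        rw [hzz]; exact dvd_add hpA (h.mul_left x)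
      exact hcopxz p hp h (hp.dvd_of_dvd_pow this)
    · have : p ∣ x ^ 2 := by
        have hxx : x ^ 2 = z * z - (z ^ 2 - x ^ 2) := by ring
        rw [hxx]; exact dvd_sub ((h.mul_left z)) hpA
      exact hcopxz p hp (hp.dvd_of_dvd_pow this) h
  have hcop2 : ∀ p : GI, Prime p → p ∣ x * z → p ∣ t → False := by
    intro p hp hpxz hpt
    have hpB' : p ∣ B' := hu₂ ▸ ((hpt.trans (dvd_pow_self t (by norm_num))).mul_right _)
    have hpB : p ∣ z ^ 2 + x ^ 2 := hBe ▸ (hpB'.mul_left _)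
    rcases hp.2.2 _ _ hpxz with h | h
    · have : p ∣ z ^ 2 := by
        have hzz : z ^ 2 = (z ^ 2 + x ^ 2) - x * x := by ring
        rw [hzz]; exact dvd_sub hpB (h.mul_left x)
      exact hcopxz p hp h (hp.dvd_of_dvd_pow this)
    · have : p ∣ x ^ 2 := by
        have hxx : x ^ 2 = (z ^ 2 + x ^ 2) - z * z := by ring
        rw [hxx]; exact dvd_sub hpB (h.mul_left z)
      exact hcopxz p hp (hp.dvd_of_dvd_pow this) h
  rcases Nat.lt_trichotomy α β with hlt | heqab | hgt
  · -- α < β : α = 2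
    have hsum' : gp ^ α * (A' + gp ^ (β - α) * B') = gp ^ 2 * (-sqrtd * z ^ 2) := by
      have hβ : β = α + (β - α) := by omega
      rw [hβ, pow_add] at hsum
      linear_combination hsum + z ^ 2 * two_eq
    have hinner : ¬ gp ∣ (A' + gp ^ (β - α) * B') := by
      intro hdd
      apply hA'
      have : A' = (A' + gp ^ (β - α) * B') - gp ^ (β - α) * B' := by ring
      rw [this]
      exact dvd_sub hdd ((dvd_pow_self gp (by omega : β - α ≠ 0)).mul_right _)
    obtain ⟨hα2, hs2⟩ := pow_inj α hinner
      (odd_mul (odd_unit unit_negi) (fun h => hz (gp_prime.dvd_of_dvd_pow h))) hsum'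
    have hd2 : gp ^ (β - α) * B' - A' = -sqrtd * x ^ 2 := by
      apply mul_left_cancel₀ (pow_ne_zero 2 hgp0)
      have hsplit : gp ^ β = gp ^ 2 * gp ^ (β - α) := by rw [← pow_add]; congr 1; omega
      rw [hα2] at hdiff
      linear_combination hdiff - B' * hsplit + x ^ 2 * two_eq
    obtain ⟨k, hk⟩ : ∃ k, β - α = 2 * k := ⟨m - 2, by omega⟩
    have hpow2 : gp ^ (β - α) * gp ^ (β - α) = gp ^ (4 * k) := by
      rw [← pow_add]; congr 1; omega
    have hBA : gp ^ (4 * k) * B' ^ 2 - A' ^ 2 = -(x ^ 2 * z ^ 2) := by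
      have h1 : (gp ^ (β - α) * B' - A') * (A' + gp ^ (β - α) * B') =
          (-sqrtd * x ^ 2) * (-sqrtd * z ^ 2) := by rw [hd2, hs2]
      linear_combination h1 - B' ^ 2 * hpow2 + (x ^ 2 * z ^ 2) * i_sq
    have heq3 : (x * z) ^ 2 = (u₁ : GI) ^ 2 * s ^ 4 + (-((u₂ : GI) ^ 2)) * gp ^ (4 * k) * t ^ 4 := by
      linear_combination hBA - ((u₁ : GI) * s ^ 2 + A') * hu₁ + gp ^ (4 * k) * ((u₂ : GI) * t ^ 2 + B') * hu₂
    exact lemH k (x * z) s t ((u₁ : GI) ^ 2) (-((u₂ : GI) ^ 2)) (u₁.isUnit.pow 2) (u₂.isUnit.pow 2).neg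
      hxz hs ht (odd_ne_zero ht) hcop1 heq3
  · -- α = β
    subst heqab
    have hαm : α = m := by omega
    rcases Nat.lt_or_ge m 2 with hm2 | hm2
    · -- m = 1
      have hα1 : α = 1 := by omega
      rw [hα1, pow_one] at hsum hdiff
      have hd1 : B' - A' = gp * (-sqrtd * x ^ 2) := by
        apply mul_left_cancel₀ hgp0
        linear_combination hdiff + x ^ 2 * two_eq
      have hs1 : A' + B' = gp * (-sqrtd * z ^ 2) := by
        apply mul_left_cancel₀ hgp0
        linear_combination hsum + z ^ 2 * two_eq
      have hBA : B' ^ 2 - A' ^ 2 = -(2 * sqrtd * (x * z) ^ 2) := by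
        have h1 : (B' - A') * (A' + B') = (gp * (-sqrtd * x ^ 2)) * (gp * (-sqrtd * z ^ 2)) := by
          rw [hd1, hs1]
        linear_combination h1 + (sqrtd * sqrtd * x ^ 2 * z ^ 2) * gp_sq +
          (2 * sqrtd * x ^ 2 * z ^ 2) * i_sq
      have heq2 : (u₂ : GI) ^ 2 * t ^ 4 - (u₁ : GI) ^ 2 * s ^ 4 = -(2 * sqrtd * (x * z) ^ 2) := by
        linear_combination hBA + (B' + (u₂ : GI) * t ^ 2) * hu₂ - (A' + (u₁ : GI) * s ^ 2) * hu₁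
      exact base2 hs ht hxz (unit_sq u₂.isUnit) (unit_sq u₁.isUnit) heq2
    · -- m ≥ 2
      obtain ⟨R, hR⟩ := even_add_odd hA' hB'
      have h1 : gp ^ (m + 1) * R = gp ^ 2 * (-sqrtd * z ^ 2) := by
        rw [hαm] at hsum
        rw [pow_succ]
        linear_combination hsum - gp ^ m * hR + z ^ 2 * two_eq
      have h3 : gp ^ 2 * gp ∣ gp ^ 2 * (-sqrtd * z ^ 2) := by
        rw [← h1, show gp ^ 2 * gp = gp ^ 3 by ring]
        exact (pow_dvd_pow gp (by omega : 3 ≤ m + 1)).mul_right R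
      have h4 : gp ∣ -sqrtd * z ^ 2 := (mul_dvd_mul_iff_left (pow_ne_zero 2 hgp0)).mp h3
      rcases gp_prime.2.2 _ _ h4 with h | h
      · exact (odd_unit unit_negi) h
      · exact hz (gp_prime.dvd_of_dvd_pow h)
  · -- β < α : β = 2
    have hsum' : gp ^ β * (B' + gp ^ (α - β) * A') = gp ^ 2 * (-sqrtd * z ^ 2) := by
      have hα : α = β + (α - β) := by omega
      rw [hα, pow_add] at hsum
      linear_combination hsum + z ^ 2 * two_eq
    have hinner : ¬ gp ∣ (B' + gp ^ (α - β) * A') := by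
      intro hdd
      apply hB'
      have : B' = (B' + gp ^ (α - β) * A') - gp ^ (α - β) * A' := by ring
      rw [this]
      exact dvd_sub hdd ((dvd_pow_self gp (by omega : α - β ≠ 0)).mul_right _)
    obtain ⟨hβ2, hs2⟩ := pow_inj β hinner
      (odd_mul (odd_unit unit_negi) (fun h => hz (gp_prime.dvd_of_dvd_pow h))) hsum'
    have hd2 : B' - gp ^ (α - β) * A' = -sqrtd * x ^ 2 := by
      apply mul_left_cancel₀ (pow_ne_zero 2 hgp0)
      have hsplit : gp ^ α = gp ^ 2 * gp ^ (α - β) := by rw [← pow_add]; congr 1; omega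
      rw [hβ2] at hdiff
      linear_combination hdiff + A' * hsplit + x ^ 2 * two_eq
    obtain ⟨k, hk⟩ : ∃ k, α - β = 2 * k := ⟨m - 2, by omega⟩
    have hpow2 : gp ^ (α - β) * gp ^ (α - β) = gp ^ (4 * k) := by
      rw [← pow_add]; congr 1; omega
    have hBA : B' ^ 2 - gp ^ (4 * k) * A' ^ 2 = -(x ^ 2 * z ^ 2) := by
      have h1 : (B' - gp ^ (α - β) * A') * (B' + gp ^ (α - β) * A') =
          (-sqrtd * x ^ 2) * (-sqrtd * z ^ 2) := by rw [hd2, hs2]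
      linear_combination h1 + A' ^ 2 * hpow2 + (x ^ 2 * z ^ 2) * i_sq
    have heq3 : (x * z) ^ 2 = (-((u₂ : GI) ^ 2)) * t ^ 4 + ((u₁ : GI) ^ 2) * gp ^ (4 * k) * s ^ 4 := by
      linear_combination hBA + ((u₂ : GI) * t ^ 2 + B') * hu₂ - gp ^ (4 * k) * ((u₁ : GI) * s ^ 2 + A') * hu₁
    exact lemH k (x * z) t s (-((u₂ : GI) ^ 2)) ((u₁ : GI) ^ 2) (u₂.isUnit.pow 2).neg (u₁.isUnit.pow 2)
      hxz ht hs (odd_ne_zero hs) hcop2 heq3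

end NoSol

open NoSol in
/-- The equation `x⁴ + i·y² = z⁴` has no nontrivial solutions over the Gaussian
integers (`i = sqrtd : ℤ[i]` is the imaginary unit). -/
theorem no_nontrivial_solution_x4_add_i_y2_eq_z4 :
    ¬ ∃ x y z : GaussianInt, x * y * z ≠ 0 ∧
      (∀ d : GaussianInt, d ∣ x → d ∣ y → d ∣ z → IsUnit d) ∧
      x ^ 4 + sqrtd * y ^ 2 = z ^ 4 :=
  NoSol.main
end

section
/- There are no Gaussian integers x, y, z with xyz ≠ 0 and gcd(x, y, z) a unit such that x^4 + (1+i)·y^2 = z^4. -/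
open Zsqrtd

namespace NT

abbrev R := GaussianInt

def pp : R := ⟨1,1⟩

lemma pp_ne_zero : pp ≠ 0 := by decide
lemma norm_pp : (pp).norm = 2 := by decide

lemma norm_eq (a : R) : a.norm = a.re*a.re + a.im*a.im := by
  simp [Zsqrtd.norm]

lemma pp_dvd_iff (a : R) : pp ∣ a ↔ 2 ∣ (a.re + a.im) := by
  constructor
  · rintro ⟨b, rfl⟩
    refine ⟨b.re, ?_⟩
    simp [pp, Zsqrtd.re_mul, Zsqrtd.im_mul]
    ring
  · rintro ⟨k, hk⟩
    refine ⟨⟨k, k - a.re⟩, ?_⟩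
    ext <;> simp [pp, Zsqrtd.re_mul, Zsqrtd.im_mul] <;> omega

lemma not_unit_pp : ¬ IsUnit (pp) := by
  rw [← Zsqrtd.norm_eq_one_iff, norm_pp]
  decide

lemma prime_pp : Prime (pp : R) := by
  rw [← UniqueFactorizationMonoid.irreducible_iff_prime]
  constructor
  · exact not_unit_pp
  · intro a b hab
    have h2 : a.norm.natAbs * b.norm.natAbs = 2 := by
      rw [← Int.natAbs_mul, ← Zsqrtd.norm_mul, ← hab, norm_pp]; rfl
    rcases (Nat.prime_two).eq_one_or_self_of_dvd a.norm.natAbs ⟨b.norm.natAbs, h2.symm⟩ with h | h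
    · left; rw [← Zsqrtd.norm_eq_one_iff, h]
    · right; rw [← Zsqrtd.norm_eq_one_iff]; rw [h] at h2; omega

lemma unit_cases {u : R} (hu : IsUnit u) : u = 1 ∨ u = -1 ∨ u = sqrtd ∨ u = -sqrtd := by
  rw [← Zsqrtd.norm_eq_one_iff] at hu
  have hn := norm_eq u
  have h : u.re * u.re + u.im * u.im = 1 := by
    have h0 : (0:ℤ) ≤ u.re*u.re := mul_self_nonneg _
    have h1 : (0:ℤ) ≤ u.im*u.im := mul_self_nonneg _
    omega
  have h2 : (u.re*u.re = 1 ∧ u.im*u.im = 0) ∨ (u.re*u.re = 0 ∧ u.im*u.im = 1) := by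
    have h0 : (0:ℤ) ≤ u.re*u.re := mul_self_nonneg _
    have h1 : (0:ℤ) ≤ u.im*u.im := mul_self_nonneg _
    omega
  rcases h2 with ⟨h3, h4⟩ | ⟨h3, h4⟩
  · rcases mul_self_eq_one_iff.mp h3 with h5 | h5 <;> [left; (right;left)] <;>
      ext <;> simp [h5, mul_self_eq_zero.mp h4]
  · rcases mul_self_eq_one_iff.mp h4 with h5 | h5 <;> [(right;right;left); (right;right;right)] <;>
      ext <;> simp [h5, mul_self_eq_zero.mp h3]


lemma two_eq_pp : (2 : R) = -sqrtd * pp^2 := by decide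

lemma pp_sq_dvd_two : pp^2 ∣ (2:R) := ⟨-sqrtd, by decide⟩

lemma pp_not_dvd_unit {u : R} (hu : IsUnit u) : ¬ pp ∣ u := fun h =>
  prime_pp.not_unit (isUnit_of_dvd_unit h hu)

lemma odd_mul {a b : R} (ha : ¬ pp ∣ a) (hb : ¬ pp ∣ b) : ¬ pp ∣ a * b := fun h => by
  rcases prime_pp.dvd_mul.mp h with h | h <;> [exact ha h; exact hb h]

lemma odd_pow {a : R} (ha : ¬ pp ∣ a) (n : ℕ) : ¬ pp ∣ a ^ n := fun h =>
  ha (prime_pp.dvd_of_dvd_pow h)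

lemma pp_dvd_add_of_odd {a b : R} (ha : ¬ pp ∣ a) (hb : ¬ pp ∣ b) : pp ∣ a + b := by
  rw [pp_dvd_iff] at *
  simp only [Zsqrtd.re_add, Zsqrtd.im_add]
  omega

lemma odd_ne_zero {a : R} (ha : ¬ pp ∣ a) : a ≠ 0 := fun h => ha (h ▸ dvd_zero pp)

lemma exists_odd_part {a : R} (ha : a ≠ 0) : ∃ (k : ℕ) (b : R), ¬ pp ∣ b ∧ a = pp^k * b := by
  obtain ⟨c, hc, hnd⟩ :=
    (FiniteMultiplicity.of_prime_left prime_pp ha).exists_eq_pow_mul_and_not_dvd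
  exact ⟨_, c, hnd, hc⟩

lemma odd_part_unique : ∀ (k : ℕ) {l : ℕ} {b c : R}, ¬ pp ∣ b → ¬ pp ∣ c →
    pp^k * b = pp^l * c → k = l ∧ b = c := by
  intro k
  induction k with
  | zero =>
    intro l b c hb hc h
    cases l with
    | zero => simpa using h
    | succ m =>
      exfalso
      apply hb
      simp only [pow_zero, one_mul] at h
      exact h ▸ ⟨pp^m * c, by rw [pow_succ]; ring⟩
  | succ n ih =>
    intro l b c hb hc h
    cases l with
    | zero =>
      exfalso
      apply hc
      simp only [pow_zero, one_mul] at h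
      exact h.symm ▸ ⟨pp^n * b, by rw [pow_succ]; ring⟩
    | succ m =>
      have h2 : pp^n * b = pp^m * c := by
        apply mul_left_cancel₀ pp_ne_zero
        rw [show pp * (pp^n*b) = pp^(n+1)*b by ring, h]; ring
      obtain ⟨h3, h4⟩ := ih hb hc h2
      exact ⟨by omega, h4⟩


lemma odd_add_even {a b : R} (ha : ¬ pp ∣ a) (hb : pp ∣ b) : ¬ pp ∣ (a + b) := fun h =>
  ha (by simpa using dvd_sub h hb)

lemma intCast_dvd_mk {n p q : ℤ} : (n : R) ∣ (⟨p, q⟩ : R) ↔ n ∣ p ∧ n ∣ q := by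
  rw [Zsqrtd.intCast_dvd]

lemma four_cast : ((4:ℤ) : R) = (4 : R) := by norm_cast
lemma eight_cast : ((8:ℤ) : R) = (8 : R) := by norm_cast

/-- odd squares are ±1 mod 4 -/
lemma odd_sq_mod (c : R) (hc : ¬ pp ∣ c) :
    ∃ (σ k : R), (σ = 1 ∨ σ = -1) ∧ c^2 = σ + 4 * k := by
  rw [pp_dvd_iff] at hc
  have hsq : c^2 = ⟨c.re*c.re - c.im*c.im, 2*(c.re*c.im)⟩ := by
    ext <;> simp [pow_two, Zsqrtd.re_mul, Zsqrtd.im_mul] <;> ring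
  rcases Int.even_or_odd c.re with hre | hre
  · -- c.re even, c.im odd, σ = -1
    obtain ⟨u, hu⟩ := hre
    have him : ∃ v, c.im = 2*v+1 := by
      rcases Int.even_or_odd c.im with h | h
      · exfalso; obtain ⟨w, hw⟩ := h; omega
      · obtain ⟨w, hw⟩ := h; exact ⟨w, by omega⟩
    obtain ⟨v, hv⟩ := him
    refine ⟨-1, ⟨u*u - v*v - v, u*(2*v+1)⟩, Or.inr rfl, ?_⟩
    rw [hsq]
    ext <;> simp [Zsqrtd.re_mul, Zsqrtd.im_mul, hu, hv] <;> ring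
  · obtain ⟨u, hu⟩ := hre
    have him : ∃ v, c.im = 2*v := by
      rcases Int.even_or_odd c.im with h | h
      · obtain ⟨w, hw⟩ := h; exact ⟨w, by omega⟩
      · exfalso; obtain ⟨w, hw⟩ := h; omega
    obtain ⟨v, hv⟩ := him
    refine ⟨1, ⟨u*u + u - v*v, (2*u+1)*v⟩, Or.inl rfl, ?_⟩
    rw [hsq]
    ext <;> simp [Zsqrtd.re_mul, Zsqrtd.im_mul, hu, hv] <;> ring

/-- odd fourth powers are 1 mod 8 -/
lemma odd_pow4_mod (c : R) (hc : ¬ pp ∣ c) : ∃ k : R, c^4 = 1 + 8 * k := by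
  obtain ⟨σ, k, hσ, h⟩ := odd_sq_mod c hc
  have h4 : c^4 = (c^2)^2 := by ring
  rcases hσ with rfl | rfl
  · exact ⟨k + 2*k*k, by rw [h4, h]; ring⟩
  · exact ⟨-k + 2*k*k, by rw [h4, h]; ring⟩


lemma pp_pow_ne_zero (n : ℕ) : pp^n ≠ 0 := pow_ne_zero n pp_ne_zero

lemma sqrtd_neg_sqrtd : (sqrtd * -sqrtd : R) = 1 := by decide

lemma even_div_two {X C : R} (h : 2 * X = pp^2 * (pp * C)) : X = sqrtd * (pp * C) := by
  have h3 : pp^2 * (-sqrtd * X) = pp^2 * (pp * C) := by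
    rw [← h, two_eq_pp]; ring
  have h4 := mul_left_cancel₀ (pp_pow_ne_zero 2) h3
  calc X = sqrtd * (-sqrtd * X) := by rw [← mul_assoc, sqrtd_neg_sqrtd, one_mul]
  _ = sqrtd * (pp * C) := by rw [h4]

lemma not_one_eq_two : ¬ (1 = 2 ∧ (True : Prop)) := by omega

/-- the exponent of each factor is ≥ 2 -/
lemma exp_ge_two {s t : ℕ} {X1 Y1 A : R} (hX1 : ¬pp ∣ X1) (hY1 : ¬pp ∣ Y1) (hA : ¬pp ∣ A)
    (h : pp^s * X1 + pp^t * Y1 = pp^2 * A) (hs : 1 ≤ s) (ht : 1 ≤ t) (hne : ¬(s = 1 ∧ t = 1)) :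
    2 ≤ s := by
  rcases Nat.lt_or_ge s 2 with hs2 | hs2
  · exfalso
    have hs1 : s = 1 := by omega
    have ht2 : 2 ≤ t := by omega
    subst hs1
    have hinner : ¬ pp ∣ (X1 + pp^(t-1) * Y1) :=
      odd_add_even hX1 (Dvd.dvd.mul_right ⟨pp^(t-2), by rw [← pow_succ']; congr 1; omega⟩ Y1)
    have heq : pp^1 * (X1 + pp^(t-1)*Y1) = pp^2 * A := by
      rw [← h]
      have : pp^t = pp^1 * pp^(t-1) := by rw [← pow_add]; congr 1; omega
      rw [this]; ring
    have := (odd_part_unique 1 hinner hA heq).1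
    omega
  · exact hs2

lemma not_both_ge_three {s t : ℕ} {X1 Y1 A : R} (hA : ¬pp ∣ A)
    (h : pp^s * X1 + pp^t * Y1 = pp^2 * A) (hs : 3 ≤ s) (ht : 3 ≤ t) : False := by
  have h1 : pp^2 * (pp * (pp^(s-3)*X1 + pp^(t-3)*Y1)) = pp^2 * A := by
    rw [← h]
    have h2 : pp^s = pp^2 * pp * pp^(s-3) := by rw [← pow_succ, ← pow_add]; congr 1; omega
    have h3 : pp^t = pp^2 * pp * pp^(t-3) := by rw [← pow_succ, ← pow_add]; congr 1; omega
    rw [h2, h3]; ring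
  exact hA ⟨_, (mul_left_cancel₀ (pp_pow_ne_zero 2) h1).symm⟩

/-- Key splitting lemma -/
lemma split {X Y A B W : R} {N : ℕ} (hA : ¬pp ∣ A) (hB : ¬pp ∣ B) (hW : ¬pp ∣ W)
    (hN : N ≠ 2)
    (hsum : X + Y = pp^2 * A) (hdiff : X - Y = pp^2 * B) (hprod : X * Y = pp^N * W) :
    ∃ X1 Y1 t, ¬pp ∣ X1 ∧ ¬pp ∣ Y1 ∧ X1 * Y1 = W ∧ 2 ≤ t ∧ 2 + t = N ∧
      ((X = pp^2*X1 ∧ Y = pp^t*Y1) ∨ (X = pp^t*X1 ∧ Y = pp^2*Y1)) := by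
  have hW0 : W ≠ 0 := odd_ne_zero hW
  have hXY0 : X * Y ≠ 0 := by rw [hprod]; exact mul_ne_zero (pp_pow_ne_zero N) hW0
  obtain ⟨s, X1, hX1, hXs⟩ := exists_odd_part (left_ne_zero_of_mul hXY0)
  obtain ⟨t, Y1, hY1, hYt⟩ := exists_odd_part (right_ne_zero_of_mul hXY0)
  obtain ⟨hstN, hXYW⟩ : s + t = N ∧ X1 * Y1 = W := by
    apply odd_part_unique (s+t) (odd_mul hX1 hY1) hW
    rw [pow_add, ← hprod, hXs, hYt]; ring
  -- even parts
  have hsum' : pp^s * X1 + pp^t * Y1 = pp^2 * A := by rw [← hXs, ← hYt]; exact hsum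
  obtain ⟨C, hC⟩ := pp_dvd_add_of_odd hA hB
  have hXd : X = sqrtd * (pp * C) := even_div_two (by rw [← hC]; linear_combination hsum + hdiff)
  obtain ⟨D, hD⟩ := pp_dvd_add_of_odd hA (show ¬ pp ∣ (-B) by simpa using hB)
  have hYd : Y = sqrtd * (pp * D) := even_div_two (by rw [← hD]; linear_combination hsum - hdiff)
  have hs1 : 1 ≤ s := by
    rcases Nat.eq_zero_or_pos s with h | h
    · exfalso
      apply hX1
      have : X = X1 := by rw [hXs, h, pow_zero, one_mul]
      rw [← this, hXd]
      exact Dvd.dvd.mul_left (Dvd.intro C rfl) sqrtd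
    · exact h
  have ht1 : 1 ≤ t := by
    rcases Nat.eq_zero_or_pos t with h | h
    · exfalso
      apply hY1
      have : Y = Y1 := by rw [hYt, h, pow_zero, one_mul]
      rw [← this, hYd]
      exact Dvd.dvd.mul_left (Dvd.intro D rfl) sqrtd
    · exact h
  have hne : ¬ (s = 1 ∧ t = 1) := by rintro ⟨rfl, rfl⟩; omega
  have hs2 : 2 ≤ s := exp_ge_two hX1 hY1 hA hsum' hs1 ht1 hne
  have ht2 : 2 ≤ t := by
    have hsum'' : pp^t * Y1 + pp^s * X1 = pp^2 * A := by rw [← hsum']; ring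
    exact exp_ge_two hY1 hX1 hA hsum'' ht1 hs1 (by rintro ⟨rfl, rfl⟩; omega)
  have hor : s = 2 ∨ t = 2 := by
    by_contra hcon
    push_neg at hcon
    exact not_both_ge_three hA hsum' (by omega) (by omega)
  rcases hor with rfl | rfl
  · exact ⟨X1, Y1, t, hX1, hY1, hXYW, ht2, by omega, Or.inl ⟨hXs, hYt⟩⟩
  · exact ⟨X1, Y1, s, hX1, hY1, hXYW, hs2, by omega, Or.inr ⟨hXs, hYt⟩⟩


lemma coprime_of_no_common_prime {x y : R} (hx : ¬(x = 0 ∧ y = 0))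
    (H : ∀ p : R, Prime p → p ∣ x → p ∣ y → False) : IsCoprime x y :=
  isCoprime_of_irreducible_dvd hx
    (fun z hz hzx hzy => H z (UniqueFactorizationMonoid.irreducible_iff_prime.mp hz) hzx hzy)

lemma pow_split {a b c : R} {n : ℕ} (h : IsCoprime a b) (heq : a * b = c ^ n) :
    ∃ u d : R, IsUnit u ∧ a = u * d ^ n := by
  obtain ⟨d, u, hu⟩ := exists_associated_pow_of_mul_eq_pow' h heq
  exact ⟨u, d, u.isUnit, by rw [← hu]; ring⟩

lemma unit_sq {u : R} (hu : IsUnit u) : u^2 = 1 ∨ u^2 = -1 := by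
  rcases unit_cases hu with rfl | rfl | rfl | rfl
  · left; ring
  · left; ring
  · right; decide
  · right; decide

lemma unit_pow4 {u : R} (hu : IsUnit u) : u^4 = 1 := by
  rcases unit_cases hu with rfl | rfl | rfl | rfl
  · ring
  · ring
  · decide
  · decide

lemma unit_pin {u : R} (hu : IsUnit u) {ε : R} (hε : ε = 1 ∨ ε = -1)
    (h : (2:R) ∣ (u - ε)) : u = 1 ∨ u = -1 := by
  rcases unit_cases hu with rfl | rfl | rfl | rfl
  · exact Or.inl rfl
  · exact Or.inr rfl
  · exfalso
    rcases hε with rfl | rfl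
    · rw [show (sqrtd - 1 : R) = ⟨-1, 1⟩ by decide, show (2:R) = ((2:ℤ):R) by norm_cast,
        intCast_dvd_mk] at h
      omega
    · rw [show (sqrtd - -1 : R) = ⟨1, 1⟩ by decide, show (2:R) = ((2:ℤ):R) by norm_cast,
        intCast_dvd_mk] at h
      omega
  · exfalso
    rcases hε with rfl | rfl
    · rw [show (-sqrtd - 1 : R) = ⟨-1, -1⟩ by decide, show (2:R) = ((2:ℤ):R) by norm_cast,
        intCast_dvd_mk] at h
      omega
    · rw [show (-sqrtd - -1 : R) = ⟨1, -1⟩ by decide, show (2:R) = ((2:ℤ):R) by norm_cast,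
        intCast_dvd_mk] at h
      omega

lemma pow_dvd_pow_iff' {a b : R} {n : ℕ} (hn : n ≠ 0) : a^n ∣ b^n ↔ a ∣ b :=
  IsIntegrallyClosed.pow_dvd_pow_iff hn

lemma quartic_unit_rel {α β c h : R} (hα : IsUnit α) (hβ : IsUnit β) (hc : c ≠ 0)
    (heq : α * β * c^4 = h^4) : α * β = 1 := by
  have hdvd : c ∣ h :=
    (pow_dvd_pow_iff' (by norm_num : (4:ℕ) ≠ 0)).mp ⟨α * β, by rw [← heq]; ring⟩
  obtain ⟨w, rfl⟩ := hdvd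
  have hw4 : w^4 = α * β :=
    (mul_left_cancel₀ (pow_ne_zero 4 hc) (show c^4 * (α*β) = c^4 * w^4 by
      linear_combination heq)).symm
  have hwu : IsUnit w := by
    have : IsUnit (w^4) := hw4 ▸ (hα.mul hβ)
    exact (isUnit_pow_iff (by norm_num : (4:ℕ) ≠ 0)).mp this
  rw [← hw4, unit_pow4 hwu]

lemma square_unit_rel {γ c h : R} (hγ : IsUnit γ) (hc : c ≠ 0)
    (heq : γ * c^2 = h^2) : γ = 1 ∨ γ = -1 := by
  have hdvd : c ∣ h :=
    (pow_dvd_pow_iff' (by norm_num : (2:ℕ) ≠ 0)).mp ⟨γ, by rw [← heq]; ring⟩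
  obtain ⟨w, rfl⟩ := hdvd
  have hw2 : w^2 = γ :=
    (mul_left_cancel₀ (pow_ne_zero 2 hc) (show c^2 * γ = c^2 * w^2 by
      linear_combination heq)).symm
  have hwu : IsUnit w := by
    have : IsUnit (w^2) := hw2 ▸ hγ
    exact (isUnit_pow_iff (by norm_num : (2:ℕ) ≠ 0)).mp this
  rw [← hw2]
  exact unit_sq hwu


lemma unit_sqrtd : IsUnit (sqrtd : R) := IsUnit.of_mul_eq_one (-sqrtd) (by decide)
lemma unit_neg_sqrtd : IsUnit (-sqrtd : R) := IsUnit.of_mul_eq_one (sqrtd) (by decide)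

lemma two_dvd_sq_sub_one {c : R} (hc : ¬ pp ∣ c) : (2:R) ∣ c^2 - 1 := by
  obtain ⟨σ, k, hσ, h⟩ := odd_sq_mod c hc
  rcases hσ with rfl | rfl
  · exact ⟨2*k, by rw [h]; ring⟩
  · exact ⟨2*k - 1, by rw [h]; ring⟩

lemma two_dvd_pow4_sub_one {c : R} (hc : ¬ pp ∣ c) : (2:R) ∣ c^4 - 1 := by
  obtain ⟨k, h⟩ := odd_pow4_mod c hc
  exact ⟨4*k, by rw [h]; ring⟩

lemma two_dvd_pp_sq_mul (c : R) : (2:R) ∣ pp^2 * c :=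
  ⟨sqrtd * c, by rw [show pp^2 = 2 * sqrtd by decide]; ring⟩

lemma two_dvd_pp_pow_mul (k : ℕ) (c : R) : (2:R) ∣ pp^(k+2) * c := by
  have : pp^(k+2) * c = pp^2 * (pp^k * c) := by ring
  rw [this]; exact two_dvd_pp_sq_mul _

/-- The descent family: `h1⁴ - π^(4n+2) h2⁴ = ν f²` -/
def DD (n : ℕ) : Prop :=
  ∃ (h1 h2 f ν : R), (ν = 1 ∨ ν = -1) ∧ ¬pp ∣ h1 ∧ ¬pp ∣ h2 ∧ ¬pp ∣ f ∧ h2 ≠ 0 ∧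
    (∀ p : R, Prime p → p ∣ h1 → p ∣ f → False) ∧
    h1^4 - pp^(4*n+2) * h2^4 = ν * f^2

/-- base case: n = 0 is impossible -/
lemma not_DD_zero : ¬ DD 0 := by
  rintro ⟨h1, h2, f, ν, hν, hh1, hh2, hf, h20, hcop, heq⟩
  obtain ⟨k, hk⟩ := odd_pow4_mod h1 hh1
  obtain ⟨l, hl⟩ := odd_pow4_mod h2 hh2
  obtain ⟨σ, m, hσ, hm⟩ := odd_sq_mod f hf
  have hdvd : (4:R) ∣ (1 - pp^2 - ν*σ) :=
    ⟨ν*m - 2*k + 2*pp^2*l, by linear_combination (-1 : R)*hk + pp^2*hl + heq + ν*hm⟩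
  have h4c : ((4:ℤ) : R) = (4:R) := by norm_cast
  rcases hν with rfl | rfl <;> rcases hσ with rfl | rfl
  · rw [show (1 - pp^2 - (1:R)*1) = ⟨0,-2⟩ by decide, ← h4c, intCast_dvd_mk] at hdvd; omega
  · rw [show (1 - pp^2 - (1:R)*(-1)) = ⟨2,-2⟩ by decide, ← h4c, intCast_dvd_mk] at hdvd; omega
  · rw [show (1 - pp^2 - (-1:R)*1) = ⟨2,-2⟩ by decide, ← h4c, intCast_dvd_mk] at hdvd; omega
  · rw [show (1 - pp^2 - (-1:R)*(-1)) = ⟨0,-2⟩ by decide, ← h4c, intCast_dvd_mk] at hdvd; omega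

/-- descent core step -/
lemma descent_core {n : ℕ} {h1 h2 f γ ν X1 Y1 : R}
    (hν : ν = 1 ∨ ν = -1) (hγu : IsUnit γ) (hγ2 : γ^2 = ν)
    (hh1 : ¬pp ∣ h1) (hf : ¬pp ∣ f) (h20 : h2 ≠ 0)
    (hX1 : ¬pp ∣ X1) (hY1 : ¬pp ∣ Y1)
    (hcop : ∀ p : R, Prime p → p ∣ h1 → p ∣ f → False)
    (hXY : X1 * Y1 = h2^4)
    (hXeq : h1^2 + γ*f = pp^2 * X1)
    (hYeq : h1^2 - γ*f = pp^(4*n+4) * Y1) : DD n := by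
  -- X1 Y1 coprime
  have hX10 : X1 ≠ 0 := by
    rintro rfl
    exact (pow_ne_zero 4 h20) (by rw [← hXY]; ring)
  have hY10 : Y1 ≠ 0 := by
    rintro rfl
    exact (pow_ne_zero 4 h20) (by rw [← hXY]; ring)
  have hOdd2 : ∀ p : R, Prime p → p ∣ X1 → ¬ p ∣ (2:R) := by
    intro p hp hpX hp2
    have hppp : p ∣ pp := by
      rcases hp.dvd_mul.mp (show p ∣ -sqrtd * pp^2 by rw [← two_eq_pp]; exact hp2) with h | h
      · exact absurd (isUnit_of_dvd_unit h unit_neg_sqrtd) hp.not_unit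
      · rcases hp.dvd_mul.mp (show p ∣ pp * pp by rw [← pow_two]; exact h) with h | h <;> exact h
    exact hX1 ((hp.associated_of_dvd prime_pp hppp).symm.dvd.trans hpX)
  have hcopXY : IsCoprime X1 Y1 := by
    apply coprime_of_no_common_prime (fun ⟨h, _⟩ => hX10 h)
    intro p hp hpX hpY
    have hsum2 : pp^2 * X1 + pp^(4*n+4) * Y1 = 2 * h1^2 := by
      rw [← hXeq, ← hYeq]; ring
    have hdiff2 : pp^2 * X1 - pp^(4*n+4) * Y1 = 2 * (γ*f) := by
      rw [← hXeq, ← hYeq]; ring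
    have hp2 : ¬ p ∣ (2:R) := hOdd2 p hp hpX
    have hph1 : p ∣ h1 := by
      have : p ∣ 2 * h1^2 := by
        rw [← hsum2]; exact dvd_add (hpX.mul_left _) (hpY.mul_left _)
      rcases hp.dvd_mul.mp this with h | h
      · exact absurd h hp2
      · exact hp.dvd_of_dvd_pow h
    have hpf : p ∣ f := by
      have : p ∣ 2 * (γ*f) := by
        rw [← hdiff2]; exact dvd_sub (hpX.mul_left _) (hpY.mul_left _)
      rcases hp.dvd_mul.mp this with h | h
      · exact absurd h hp2
      · rcases hp.dvd_mul.mp h with h | h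
        · exact absurd (isUnit_of_dvd_unit h hγu) hp.not_unit
        · exact h
    exact hcop p hp hph1 hpf
  obtain ⟨α, p4, hαu, hX1eq⟩ := pow_split hcopXY hXY
  obtain ⟨β, q4, hβu, hY1eq⟩ := pow_split hcopXY.symm (by rw [← hXY]; ring)
  -- oddness and nonzeroness of p4, q4
  have hp4odd : ¬ pp ∣ p4 := fun h => hX1 (by rw [hX1eq]; exact (h.trans (dvd_pow_self p4 (by norm_num))).mul_left α)
  have hq4odd : ¬ pp ∣ q4 := fun h => hY1 (by rw [hY1eq]; exact (h.trans (dvd_pow_self q4 (by norm_num))).mul_left β)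
  have hp40 : p4 ≠ 0 := by rintro rfl; apply hX10; rw [hX1eq]; ring
  have hq40 : q4 ≠ 0 := by rintro rfl; apply hY10; rw [hY1eq]; ring
  -- unit relation α β = 1
  have hαβ : α * β = 1 := by
    apply quartic_unit_rel hαu hβu (mul_ne_zero hp40 hq40)
    rw [← hXY, hX1eq, hY1eq]; ring
  -- the new equation
  have hkey : (sqrtd*α) * p4^4 + pp^(4*n+2) * ((sqrtd*β) * q4^4) = h1^2 := by
    have hc : pp^2 * (α*p4^4 + pp^(4*n+2) * (β*q4^4)) = pp^2 * (-sqrtd * h1^2) := by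
      rw [← hX1eq, ← hY1eq]
      have h2' : (2:R) * h1^2 = pp^2 * X1 + pp^(4*n+4)*Y1 := by rw [← hXeq, ← hYeq]; ring
      rw [two_eq_pp] at h2'
      linear_combination -h2'
    have hc2 := mul_left_cancel₀ (pow_ne_zero 2 pp_ne_zero) hc
    have : sqrtd * (α*p4^4 + pp^(4*n+2) * (β*q4^4)) = sqrtd * (-sqrtd * h1^2) := by rw [hc2]
    rw [show ∀ c : R, sqrtd * (-sqrtd * c) = c by intro c; rw [← mul_assoc, show (sqrtd * -sqrtd : R) = 1 by decide, one_mul]] at this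
    rw [← this]; ring
  -- pin u := sqrtd * α
  obtain ⟨σ, k, hσpm, hσ⟩ := odd_sq_mod h1 hh1
  have hu : IsUnit (sqrtd * α) := unit_sqrtd.mul hαu
  have hpin : (2:R) ∣ (sqrtd*α - σ) := by
    obtain ⟨k1, hk1⟩ := two_dvd_pow4_sub_one hp4odd
    obtain ⟨c2, hc2⟩ := two_dvd_pp_pow_mul (4*n) ((sqrtd*β) * q4^4)
    refine ⟨-(sqrtd*α)*k1 - c2 + 2*k, ?_⟩
    linear_combination -(sqrtd*α)*hk1 - hc2 + hσ + hkey
  rcases unit_pin hu hσpm hpin with hu1 | hu1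
  · -- sqrtd*α = 1, so α = -sqrtd, β = sqrtd, sqrtd*β = -1
    have hα : α = -sqrtd := by
      have h6 : -sqrtd * (sqrtd * α) = -sqrtd * 1 := by rw [hu1]
      rw [← mul_assoc, show (-sqrtd*sqrtd : R) = 1 by decide, one_mul, mul_one] at h6
      exact h6
    have hβ : β = sqrtd := by
      have h0 : α * β = α * sqrtd := by rw [hαβ, hα]; decide
      exact mul_left_cancel₀ (by rw [hα]; decide) h0
    refine ⟨p4, q4, h1, 1, Or.inl rfl, hp4odd, hq4odd, hh1, hq40, ?_, ?_⟩
    · intro p hp hpp hph1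
      have hpX1 : p ∣ X1 := by rw [hX1eq]; exact (hpp.trans (dvd_pow_self p4 (by norm_num))).mul_left α
      have hpf : p ∣ f := by
        have h5 : p ∣ γ * f := by
          have : γ * f = pp^2*X1 - h1^2 := by rw [← hXeq]; ring
          rw [this]
          exact dvd_sub (hpX1.mul_left _) ((hph1.trans (dvd_pow_self h1 two_ne_zero)))
        rcases hp.dvd_mul.mp h5 with h | h
        · exact absurd (isUnit_of_dvd_unit h hγu) hp.not_unit
        · exact h
      exact hcop p hp hph1 hpf
    · rw [hα, hβ, show (sqrtd * -sqrtd : R) = 1 by decide, show (sqrtd * sqrtd : R) = -1 by decide] at hkey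
      linear_combination hkey
  · -- sqrtd*α = -1: α = sqrtd, β = -sqrtd, sqrtd*β = 1
    have hα : α = sqrtd := by
      have h6 : -sqrtd * (sqrtd * α) = -sqrtd * (-1) := by rw [hu1]
      rw [← mul_assoc, show (-sqrtd*sqrtd : R) = 1 by decide, one_mul,
        show (-sqrtd*(-1) : R) = sqrtd by decide] at h6
      exact h6
    have hβ : β = -sqrtd := by
      have h0 : α * β = α * (-sqrtd) := by rw [hαβ, hα]; decide
      exact mul_left_cancel₀ (by rw [hα]; decide) h0
    refine ⟨p4, q4, h1, -1, Or.inr rfl, hp4odd, hq4odd, hh1, hq40, ?_, ?_⟩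
    · intro p hp hpp hph1
      have hpX1 : p ∣ X1 := by rw [hX1eq]; exact (hpp.trans (dvd_pow_self p4 (by norm_num))).mul_left α
      have hpf : p ∣ f := by
        have h5 : p ∣ γ * f := by
          have : γ * f = pp^2*X1 - h1^2 := by rw [← hXeq]; ring
          rw [this]
          exact dvd_sub (hpX1.mul_left _) ((hph1.trans (dvd_pow_self h1 two_ne_zero)))
        rcases hp.dvd_mul.mp h5 with h | h
        · exact absurd (isUnit_of_dvd_unit h hγu) hp.not_unit
        · exact h
      exact hcop p hp hph1 hpf
    · rw [hα, hβ, show (sqrtd * -sqrtd : R) = 1 by decide, show (sqrtd * sqrtd : R) = -1 by decide] at hkey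
      linear_combination -hkey


lemma descent {n : ℕ} (h : DD (n+1)) : DD n := by
  obtain ⟨h1, h2, f, ν, hν, hh1, hh2, hf, h20, hcop, heq⟩ := h
  obtain ⟨γ, hγu, hγ2⟩ : ∃ γ : R, IsUnit γ ∧ γ^2 = ν := by
    rcases hν with rfl | rfl
    · exact ⟨1, isUnit_one, by ring⟩
    · exact ⟨sqrtd, unit_sqrtd, by decide⟩
  have hh1sq : ¬ pp ∣ h1^2 := odd_pow hh1 2
  have hA : ¬ pp ∣ (-sqrtd * h1^2) := odd_mul (pp_not_dvd_unit unit_neg_sqrtd) hh1sq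
  have hB : ¬ pp ∣ (-sqrtd * (γ*f)) :=
    odd_mul (pp_not_dvd_unit unit_neg_sqrtd) (odd_mul (pp_not_dvd_unit hγu) hf)
  have hW : ¬ pp ∣ h2^4 := odd_pow hh2 4
  have hsum : (h1^2 + γ*f) + (h1^2 - γ*f) = pp^2 * (-sqrtd * h1^2) := by
    linear_combination h1^2 * two_eq_pp
  have hdiff : (h1^2 + γ*f) - (h1^2 - γ*f) = pp^2 * (-sqrtd * (γ*f)) := by
    linear_combination (γ*f) * two_eq_pp
  have hprod : (h1^2 + γ*f) * (h1^2 - γ*f) = pp^(4*(n+1)+2) * h2^4 := by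
    linear_combination heq - f^2 * hγ2
  obtain ⟨X1, Y1, t, hX1, hY1, hXYW, ht2, htN, hdisj⟩ :=
    split hA hB hW (by omega) hsum hdiff hprod
  have ht : t = 4*n+4 := by omega
  subst ht
  rcases hdisj with ⟨hXeq, hYeq⟩ | ⟨hXeq, hYeq⟩
  · exact descent_core hν hγu hγ2 hh1 hf h20 hX1 hY1 hcop hXYW hXeq hYeq
  · refine descent_core hν hγu hγ2 hh1 (show ¬ pp ∣ (-f) by simpa using hf) h20 hY1 hX1
      (fun p hp hp1 hpf => hcop p hp hp1 (by simpa using hpf : p ∣ f))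
      (by rw [← hXYW]; ring) ?_ ?_
    · rw [← hYeq]; ring
    · rw [← hXeq]; ring

lemma noDD : ∀ n, ¬ DD n := by
  intro n
  induction n with
  | zero => exact not_DD_zero
  | succ m ih => exact fun h => ih (descent h)


lemma prime_not_dvd_two {p c : R} (hp : Prime p) (hpc : p ∣ c) (hc : ¬ pp ∣ c) :
    ¬ p ∣ (2:R) := by
  intro hp2
  have hppp : p ∣ pp := by
    rcases hp.dvd_mul.mp (show p ∣ -sqrtd * pp^2 by rw [← two_eq_pp]; exact hp2) with h | h
    · exact absurd (isUnit_of_dvd_unit h unit_neg_sqrtd) hp.not_unit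
    · rcases hp.dvd_mul.mp (show p ∣ pp * pp by rw [← pow_two]; exact h) with h | h <;> exact h
  exact hc ((hp.associated_of_dvd prime_pp hppp).symm.dvd.trans hpc)

lemma stage3 {x z y0 X1 A1 B1 : R} {m : ℕ}
    (hx : ¬pp ∣ x) (hz : ¬pp ∣ z) (hy0 : ¬pp ∣ y0)
    (Hxz : ∀ p : R, Prime p → p ∣ x → p ∣ z → False)
    (hX1 : ¬pp ∣ X1) (hA1 : ¬pp ∣ A1) (hB1 : ¬pp ∣ B1)
    (hXeq : z^2 + x^2 = pp^2 * X1)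
    (hplus : z + x = pp^2 * A1)
    (hminus : z - x = pp^(2*m+3) * B1)
    (hprod : X1 * (A1 * B1) = y0^2) : False := by
  have hy00 : y0 ≠ 0 := odd_ne_zero hy0
  have hX10 : X1 ≠ 0 := odd_ne_zero hX1
  have hpzx : z + x = pp^2 * A1 := hplus
  -- helper: from p ∣ z*x and p ∣ z+x (or z-x) conclude False
  have hfin : ∀ p : R, Prime p → p ∣ z*x → (p ∣ z + x ∨ p ∣ z - x) → False := by
    intro p hp hzx hpm
    rcases hp.dvd_mul.mp hzx with h | h
    · rcases hpm with h2 | h2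
      · exact Hxz p hp (by simpa using dvd_sub h2 h) h
      · exact Hxz p hp (by simpa using (dvd_sub h h2)) h
    · rcases hpm with h2 | h2
      · exact Hxz p hp h (by simpa using dvd_sub h2 h)
      · exact Hxz p hp h (by simpa using dvd_add h2 h)
  have hpXA : ∀ p : R, Prime p → p ∣ X1 → p ∣ A1 → False := by
    intro p hp h1 h2
    have hp2 : ¬ p ∣ (2:R) := prime_not_dvd_two hp h1 hX1
    have hzx : p ∣ (2:R)*(z*x) := by
      have he : (2:R)*(z*x) = (z+x)^2 - (z^2+x^2) := by ring
      rw [he, hplus, hXeq]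
      exact dvd_sub (dvd_pow (h2.mul_left _) two_ne_zero) (h1.mul_left _)
    rcases hp.dvd_mul.mp hzx with h | h
    · exact hp2 h
    · exact hfin p hp h (Or.inl (hplus ▸ h2.mul_left _))
  have hpXB : ∀ p : R, Prime p → p ∣ X1 → p ∣ B1 → False := by
    intro p hp h1 h2
    have hp2 : ¬ p ∣ (2:R) := prime_not_dvd_two hp h1 hX1
    have hzx : p ∣ (2:R)*(z*x) := by
      have he : (2:R)*(z*x) = (z^2+x^2) - (z-x)^2 := by ring
      rw [he, hminus, hXeq]
      exact dvd_sub (h1.mul_left _) (dvd_pow (h2.mul_left _) two_ne_zero)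
    rcases hp.dvd_mul.mp hzx with h | h
    · exact hp2 h
    · exact hfin p hp h (Or.inr (hminus ▸ h2.mul_left _))
  have hpAB : ∀ p : R, Prime p → p ∣ A1 → p ∣ B1 → False := by
    intro p hp h1 h2
    have hp2 : ¬ p ∣ (2:R) := prime_not_dvd_two hp h1 hA1
    have hpz : p ∣ (2:R)*(z*z) := by
      have he2 : (2:R)*(z*z) = (z+x)*z + (z-x)*z := by ring
      rw [he2, hplus, hminus]
      exact dvd_add ((h1.mul_left _).mul_right _) ((h2.mul_left _).mul_right _)
    rcases hp.dvd_mul.mp hpz with h | h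
    · exact hp2 h
    · have hpzz : p ∣ z := by
        rcases hp.dvd_mul.mp h with h | h <;> exact h
      have hpx : p ∣ x := by
        have : p ∣ z + x := hplus ▸ h1.mul_left _
        simpa using dvd_sub this hpzz
      exact Hxz p hp hpx hpzz
  -- coprime splits
  have hcXA : IsCoprime X1 (A1*B1) := by
    apply coprime_of_no_common_prime (fun ⟨h, _⟩ => hX10 h)
    intro p hp h1 h2
    rcases hp.dvd_mul.mp h2 with h | h
    · exact hpXA p hp h1 h
    · exact hpXB p hp h1 h
  have hcAX : IsCoprime A1 (X1*B1) := by
    apply coprime_of_no_common_prime (fun ⟨h, _⟩ => odd_ne_zero hA1 h)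
    intro p hp h1 h2
    rcases hp.dvd_mul.mp h2 with h | h
    · exact hpXA p hp h h1
    · exact hpAB p hp h1 h
  have hcBX : IsCoprime B1 (X1*A1) := by
    apply coprime_of_no_common_prime (fun ⟨h, _⟩ => odd_ne_zero hB1 h)
    intro p hp h1 h2
    rcases hp.dvd_mul.mp h2 with h | h
    · exact hpXB p hp h h1
    · exact hpAB p hp h h1
  obtain ⟨κ, f1, hκu, hX1eq⟩ := pow_split hcXA hprod
  obtain ⟨l1, h1s, hl1u, hA1eq⟩ := pow_split hcAX (show A1 * (X1*B1) = y0^2 by rw [← hprod]; ring)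
  obtain ⟨l2, h2s, hl2u, hB1eq⟩ := pow_split hcBX (show B1 * (X1*A1) = y0^2 by rw [← hprod]; ring)
  -- oddness/nonzeroness of the new roots
  have hf1 : ¬ pp ∣ f1 := fun h => hX1 (by
    rw [hX1eq]; exact (h.trans (dvd_pow_self f1 two_ne_zero)).mul_left κ)
  have hh1s : ¬ pp ∣ h1s := fun h => hA1 (by
    rw [hA1eq]; exact (h.trans (dvd_pow_self h1s two_ne_zero)).mul_left l1)
  have hh2s : ¬ pp ∣ h2s := fun h => hB1 (by
    rw [hB1eq]; exact (h.trans (dvd_pow_self h2s two_ne_zero)).mul_left l2)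
  have hf10 : f1 ≠ 0 := odd_ne_zero hf1
  have hh1s0 : h1s ≠ 0 := odd_ne_zero hh1s
  have hh2s0 : h2s ≠ 0 := odd_ne_zero hh2s
  -- unit relation
  have hτ : κ*l1*l2 = 1 ∨ κ*l1*l2 = -1 := by
    apply square_unit_rel (hκu.mul hl1u |>.mul hl2u)
      (mul_ne_zero (mul_ne_zero hf10 hh1s0) hh2s0)
    rw [← hprod, hX1eq, hA1eq, hB1eq]; ring
  -- the main identity
  have e1 : (z+x)^2 = pp^4 * (l1^2 * h1s^4) := by rw [hplus, hA1eq]; ring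
  have e2 : (z-x)^2 = pp^4 * (pp^(4*m+2) * (l2^2*h2s^4)) := by
    rw [hminus, hB1eq]; ring
  have e3 : 2*(z^2+x^2) = pp^4 * (-sqrtd * κ * f1^2) := by
    rw [hXeq, hX1eq, two_eq_pp]; ring
  have E1 : l1^2*h1s^4 + pp^(4*m+2)*(l2^2*h2s^4) = -sqrtd*κ*f1^2 := by
    apply mul_left_cancel₀ (pow_ne_zero 4 pp_ne_zero)
    linear_combination -e1 - e2 + e3
  -- pin the unit -sqrtd * κ
  obtain ⟨c1, hc1⟩ := two_dvd_sq_sub_one hf1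
  obtain ⟨c2, hc2⟩ := two_dvd_pow4_sub_one hh1s
  obtain ⟨c3, hc3⟩ := two_dvd_pp_pow_mul (4*m) (l2^2*h2s^4)
  have hμu : IsUnit (-sqrtd * κ) := unit_neg_sqrtd.mul hκu
  have hε1 := unit_sq hl1u
  have hpin : (2:R) ∣ (-sqrtd*κ - l1^2) :=
    ⟨l1^2*c2 + c3 + (sqrtd*κ)*c1, by
      linear_combination (-1:R)*E1 + (sqrtd*κ)*hc1 + l1^2*hc2 + hc3⟩
  have hμ := unit_pin hμu hε1 hpin
  have hll : (l1*l2)^2 = -1 := by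
    have hκ2 : κ^2 = -1 := by
      rcases hμ with hμ1 | hμ1
      · have h6 : sqrtd * (-sqrtd*κ) = sqrtd * 1 := by rw [hμ1]
        rw [← mul_assoc, show (sqrtd * -sqrtd : R) = 1 by decide, one_mul, mul_one] at h6
        rw [h6]; decide
      · have h6 : sqrtd * (-sqrtd*κ) = sqrtd * (-1) := by rw [hμ1]
        rw [← mul_assoc, show (sqrtd * -sqrtd : R) = 1 by decide, one_mul] at h6
        rw [h6]; decide
    have h7 : (κ*l1*l2)^2 = 1 := by rcases hτ with h|h <;> rw [h] <;> ring
    linear_combination -h7 + (l1*l2)^2 * hκ2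
  have h14 : l1^4 = 1 := unit_pow4 hl1u
  have E2 : h1s^4 - pp^(4*m+2)*h2s^4 = (l1^2*(-sqrtd*κ))*f1^2 := by
    linear_combination l1^2*E1 - h1s^4*h14 - pp^(4*m+2)*h2s^4*hll
  have hνpm : (l1^2*(-sqrtd*κ) = 1 ∨ l1^2*(-sqrtd*κ) = -1) := by
    rcases hε1 with h|h <;> rcases hμ with h2|h2 <;> rw [h, h2] <;> norm_num
  have hcop : ∀ p : R, Prime p → p ∣ h1s → p ∣ f1 → False := by
    intro p hp hps hpf
    have h1A : p ∣ A1 := by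
      rw [hA1eq]; exact (hps.trans (dvd_pow_self h1s two_ne_zero)).mul_left l1
    have h1X : p ∣ X1 := by
      rw [hX1eq]; exact (hpf.trans (dvd_pow_self f1 two_ne_zero)).mul_left κ
    exact hpXA p hp h1X h1A
  exact noDD m ⟨h1s, h2s, f1, _, hνpm, hh1s, hh2s, hf1, hh2s0, hcop, E2⟩


lemma stage2 {x z y0 X1 Y1 : R} {t : ℕ}
    (hx : ¬pp ∣ x) (hz : ¬pp ∣ z) (hy0 : ¬pp ∣ y0)
    (Hxz : ∀ p : R, Prime p → p ∣ x → p ∣ z → False)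
    (hX1 : ¬pp ∣ X1) (hY1 : ¬pp ∣ Y1)
    (htodd : t % 2 = 1)
    (hXeq : z^2 + x^2 = pp^2 * X1)
    (hYeq : z^2 - x^2 = pp^t * Y1)
    (hW : X1 * Y1 = y0^2) : False := by
  have hsum : (z+x) + (z-x) = pp^2 * (-sqrtd * z) := by linear_combination z * two_eq_pp
  have hdiff : (z+x) - (z-x) = pp^2 * (-sqrtd * x) := by linear_combination x * two_eq_pp
  have hprod : (z+x) * (z-x) = pp^t * Y1 := by linear_combination hYeq
  obtain ⟨A1, B1, t2, hA1, hB1, hAB, ht22, ht2N, hdisj⟩ :=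
    split (odd_mul (pp_not_dvd_unit unit_neg_sqrtd) hz)
      (odd_mul (pp_not_dvd_unit unit_neg_sqrtd) hx) hY1 (by omega) hsum hdiff hprod
  obtain ⟨m, hm⟩ : ∃ m, t2 = 2*m+3 := ⟨(t2-3)/2, by omega⟩
  subst hm
  have hprod3 : X1 * (A1 * B1) = y0^2 := by rw [hAB]; exact hW
  rcases hdisj with ⟨hplus, hminus⟩ | ⟨hplus, hminus⟩
  · exact stage3 hx hz hy0 Hxz hX1 hA1 hB1 hXeq hplus hminus hprod3
  · -- flip z ↦ -z
    refine stage3 (x := x) (z := -z) (m := m) hx (by simpa using hz) hy0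
      (fun p hp h1 h2 => Hxz p hp h1 (by simpa using h2))
      hX1 (show ¬ pp ∣ (-B1) by simpa using hB1) (show ¬ pp ∣ (-A1) by simpa using hA1)
      (by rw [← hXeq]; ring) ?_ ?_ (by rw [← hprod3]; ring)
    · rw [show (-z) + x = -(z - x) by ring, hminus]; ring
    · rw [show (-z) - x = -(z + x) by ring, hplus]; ring

theorem main :
    ¬ ∃ x y z : GaussianInt, x * y * z ≠ 0 ∧
      (∀ d : GaussianInt, d ∣ x → d ∣ y → d ∣ z → IsUnit d) ∧
      x ^ 4 + (1 + sqrtd) * y ^ 2 = z ^ 4 := by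
  rintro ⟨x, y, z, h0, hprim, heq0⟩
  have hpp : (1 + sqrtd : R) = pp := by decide
  rw [hpp] at heq0
  have hy0 : y ≠ 0 := fun h => h0 (by rw [h]; ring)
  have heq : z^4 - x^4 = pp * y^2 := by linear_combination -heq0
  -- x, z odd
  have hx : ¬ pp ∣ x := by
    intro hdx
    have hdz : pp ∣ z := by
      apply prime_pp.dvd_of_dvd_pow (n := 4)
      have : z^4 = x^4 + pp*y^2 := by linear_combination heq
      rw [this]
      exact dvd_add ((hdx.trans (dvd_pow_self x four_ne_zero))) (Dvd.intro _ rfl)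
    have h44 : pp^2 ∣ z^4 - x^4 := by
      apply dvd_sub
      · exact (pow_dvd_pow pp (by norm_num)).trans (pow_dvd_pow_of_dvd hdz 4)
      · exact (pow_dvd_pow pp (by norm_num)).trans (pow_dvd_pow_of_dvd hdx 4)
    obtain ⟨c, hc⟩ := h44
    have hyc : y^2 = pp * c := by
      apply mul_left_cancel₀ pp_ne_zero
      rw [← heq, hc]; ring
    have hdy : pp ∣ y := prime_pp.dvd_of_dvd_pow (n := 2) ⟨c, hyc⟩
    exact prime_pp.not_unit (hprim pp hdx hdy hdz)
  have hz : ¬ pp ∣ z := by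
    intro hdz
    apply hx
    apply prime_pp.dvd_of_dvd_pow (n := 4)
    have : x^4 = z^4 - pp*y^2 := by linear_combination -heq
    rw [this]
    exact dvd_sub ((hdz.trans (dvd_pow_self z four_ne_zero))) (Dvd.intro _ rfl)
  have Hxz : ∀ p : R, Prime p → p ∣ x → p ∣ z → False := by
    intro p hp hpx hpz
    have hpy2 : p ∣ pp * y^2 := by
      rw [← heq]
      exact dvd_sub (hpz.trans (dvd_pow_self z four_ne_zero))
        (hpx.trans (dvd_pow_self x four_ne_zero))
    rcases hp.dvd_mul.mp hpy2 with h | h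
    · exact hx ((hp.associated_of_dvd prime_pp h).symm.dvd.trans hpx)
    · exact hp.not_unit (hprim p hpx (hp.dvd_of_dvd_pow h) hpz)
  obtain ⟨b, y0, hy0odd, hyeq⟩ := exists_odd_part hy0
  have hsum : (z^2+x^2) + (z^2-x^2) = pp^2 * (-sqrtd * z^2) := by
    linear_combination z^2 * two_eq_pp
  have hdiff : (z^2+x^2) - (z^2-x^2) = pp^2 * (-sqrtd * x^2) := by
    linear_combination x^2 * two_eq_pp
  have hprod : (z^2+x^2) * (z^2-x^2) = pp^(2*b+1) * y0^2 := by
    rw [show (z^2+x^2)*(z^2-x^2) = z^4 - x^4 by ring, heq, hyeq]; ring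
  obtain ⟨X1, Y1, t, hX1, hY1, hXY, ht2, htN, hdisj⟩ :=
    split (odd_mul (pp_not_dvd_unit unit_neg_sqrtd) (odd_pow hz 2))
      (odd_mul (pp_not_dvd_unit unit_neg_sqrtd) (odd_pow hx 2)) (odd_pow hy0odd 2)
      (by omega) hsum hdiff hprod
  have htodd : t % 2 = 1 := by omega
  rcases hdisj with ⟨hXeq, hYeq⟩ | ⟨hXeq, hYeq⟩
  · exact stage2 hx hz hy0odd Hxz hX1 hY1 htodd hXeq hYeq hXY
  · -- x ↦ sqrtd * x
    have hsx2 : (sqrtd*x)^2 = -x^2 := by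
      rw [mul_pow, show (sqrtd^2 : R) = -1 by decide]; ring
    refine stage2 (x := sqrtd*x) (z := z) (odd_mul (pp_not_dvd_unit unit_sqrtd) hx) hz hy0odd
      ?_ hY1 hX1 htodd ?_ ?_ (by rw [← hXY]; ring)
    · intro p hp h1 h2
      rcases hp.dvd_mul.mp h1 with h | h
      · exact hp.not_unit (isUnit_of_dvd_unit h unit_sqrtd)
      · exact Hxz p hp h h2
    · rw [hsx2, show z^2 + -x^2 = z^2 - x^2 by ring]; exact hYeq
    · rw [hsx2, show z^2 - -x^2 = z^2 + x^2 by ring]; exact hXeq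



end NT

/-- The equation `x⁴ + (1+i)·y² = z⁴` has no nontrivial solutions over the
Gaussian integers. -/
theorem no_nontrivial_solution_x4_add_one_add_i_y2_eq_z4 :
    ¬ ∃ x y z : GaussianInt, x * y * z ≠ 0 ∧
      (∀ d : GaussianInt, d ∣ x → d ∣ y → d ∣ z → IsUnit d) ∧
      x ^ 4 + (1 + sqrtd) * y ^ 2 = z ^ 4 :=
  NT.main
end

section
/- There are no Gaussian integers x, y, z with xyz ≠ 0 and gcd(x, y, z) a unit such that x^4 + y^4 = (1+i)·z^2. -/
open Zsqrtd

private lemma key4 : ∀ a b c d e f : ZMod 4,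
    a^4 - 6*a^2*b^2 + b^4 + (c^4 - 6*c^2*d^2 + d^4) = e^2 - f^2 - 2*e*f →
    4*a^3*b - 4*a*b^3 + (4*c^3*d - 4*c*d^3) = 2*e*f + e^2 - f^2 →
    (a+b=0 ∨ a+b=2) ∧ (c+d=0 ∨ c+d=2) ∧ (e+f=0 ∨ e+f=2) := by decide

private lemma two_dvd_of_zmod4 (n : ℤ) (h : (n : ZMod 4) = 0 ∨ (n : ZMod 4) = 2) :
    (2:ℤ) ∣ n := by
  rcases h with h | h
  · have := (ZMod.intCast_zmod_eq_zero_iff_dvd n 4).1 h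
    omega
  · have h2 : ((n - 2 : ℤ) : ZMod 4) = 0 := by push_cast [h]; ring
    have := (ZMod.intCast_zmod_eq_zero_iff_dvd (n-2) 4).1 h2
    omega

private lemma pi_dvd (w : GaussianInt) (h : (2:ℤ) ∣ w.re + w.im) :
    (1 + sqrtd : GaussianInt) ∣ w := by
  obtain ⟨k, hk⟩ := h
  refine ⟨⟨k, k - w.re⟩, ?_⟩
  rw [Zsqrtd.ext_iff]
  simp [Zsqrtd.re_mul, Zsqrtd.im_mul, Zsqrtd.sqrtd]
  omega

/-- The equation `x⁴ + y⁴ = (1+i)·z²` has no nontrivial solutions over the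
Gaussian integers. -/
theorem no_nontrivial_solution_x4_add_y4_eq_one_add_i_z2 :
    ¬ ∃ x y z : GaussianInt, x * y * z ≠ 0 ∧
      (∀ d : GaussianInt, d ∣ x → d ∣ y → d ∣ z → IsUnit d) ∧
      x ^ 4 + y ^ 4 = (1 + sqrtd) * z ^ 2 := by
  rintro ⟨x, y, z, -, hgcd, h⟩
  rw [Zsqrtd.ext_iff] at h
  simp only [pow_succ, pow_zero, one_mul, Zsqrtd.re_mul, Zsqrtd.im_mul, Zsqrtd.re_add,
    Zsqrtd.im_add, Zsqrtd.re_one, Zsqrtd.im_one, Zsqrtd.sqrtd, show ((-1:ℤ) = -1) from rfl] at h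
  obtain ⟨h1, h2⟩ := h
  have E1 : (x.re^4 - 6*x.re^2*x.im^2 + x.im^4 + (y.re^4 - 6*y.re^2*y.im^2 + y.im^4) : ℤ)
      = z.re^2 - z.im^2 - 2*z.re*z.im := by linear_combination h1
  have E2 : (4*x.re^3*x.im - 4*x.re*x.im^3 + (4*y.re^3*y.im - 4*y.re*y.im^3) : ℤ)
      = 2*z.re*z.im + z.re^2 - z.im^2 := by linear_combination h2
  have C1 := congrArg (Int.cast : ℤ → ZMod 4) E1
  have C2 := congrArg (Int.cast : ℤ → ZMod 4) E2
  push_cast at C1 C2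
  obtain ⟨hx, hy, hz⟩ := key4 _ _ _ _ _ _ C1 C2
  have hux := pi_dvd x (two_dvd_of_zmod4 _ (by push_cast at hx ⊢; exact hx))
  have huy := pi_dvd y (two_dvd_of_zmod4 _ (by push_cast at hy ⊢; exact hy))
  have huz := pi_dvd z (two_dvd_of_zmod4 _ (by push_cast at hz ⊢; exact hz))
  have hu : IsUnit (1 + sqrtd : GaussianInt) := hgcd _ hux huy huz
  obtain ⟨t, ht⟩ := hu.dvd (a := (1 : GaussianInt))
  have := congrArg Zsqrtd.norm ht
  simp [Zsqrtd.norm_def, Zsqrtd.sqrtd] at this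
  have hd : (2:ℤ) ∣ 1 := ⟨t.re*t.re + t.im*t.im, by linear_combination this⟩
  norm_num at hd
end

section
/- There are no Gaussian integers x, y, z with xyz ≠ 0 and gcd(x, y, z) a unit such that x^4 - y^4 = (1+i)·z^2. -/
open Zsqrtd
set_option maxHeartbeats 1000000
set_option synthInstance.maxHeartbeats 1000000

namespace NT4

def pp : GaussianInt := ⟨1, 1⟩

theorem prime_pp : Prime pp := by
  rw [← irreducible_iff_prime]
  constructor
  · rw [← Zsqrtd.norm_eq_one_iff]; decide
  · intro a b hab
    have h2 : a.norm.natAbs * b.norm.natAbs = 2 := by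
      rw [← Int.natAbs_mul, ← Zsqrtd.norm_mul, ← hab]; decide
    rcases Nat.prime_two.eq_one_or_self_of_dvd a.norm.natAbs ⟨_, h2.symm⟩ with h | h
    · exact Or.inl (Zsqrtd.norm_eq_one_iff.mp h)
    · right; rw [← Zsqrtd.norm_eq_one_iff]; rw [h] at h2; omega

lemma pp_ne_zero : pp ≠ 0 := by decide

def Od (a : GaussianInt) : Prop := ¬ pp ∣ a

lemma pp_dvd_iff (z : GaussianInt) : pp ∣ z ↔ 2 ∣ z.re + z.im := by
  constructor
  · rintro ⟨c, rfl⟩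
    refine ⟨c.re, ?_⟩
    simp [pp, Zsqrtd.re_mul, Zsqrtd.im_mul]; ring
  · intro ⟨c, hc⟩
    refine ⟨⟨(z.re + z.im)/2, z.im - (z.re+z.im)/2⟩, ?_⟩
    rw [Zsqrtd.ext_iff]
    simp only [pp, Zsqrtd.re_mul, Zsqrtd.im_mul]
    constructor <;> omega

lemma od_iff (z : GaussianInt) : Od z ↔ ¬ (2 ∣ z.re + z.im) := by rw [Od, pp_dvd_iff]

lemma Od.ne_zero {a : GaussianInt} (h : Od a) : a ≠ 0 := by
  rintro rfl; exact h (dvd_zero _)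

lemma od_mul {a b : GaussianInt} (ha : Od a) (hb : Od b) : Od (a * b) := by
  intro h; rcases prime_pp.dvd_mul.mp h with h | h
  exacts [ha h, hb h]

lemma od_unit {u : GaussianInt} (hu : IsUnit u) : Od u := fun h =>
  prime_pp.not_unit (isUnit_of_dvd_unit h hu)

lemma od_pow {a : GaussianInt} (ha : Od a) : ∀ n, Od (a ^ n)
  | 0 => by simpa using od_unit isUnit_one
  | n+1 => by rw [pow_succ]; exact od_mul (od_pow ha n) ha

lemma Od.of_dvd {a b : GaussianInt} (h : Od b) (hd : a ∣ b) : Od a :=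
  fun hp => h (hp.trans hd)

lemma pp_dvd_add {a b : GaussianInt} (ha : Od a) (hb : Od b) : pp ∣ a + b := by
  rw [od_iff] at ha hb; rw [pp_dvd_iff]; simp only [Zsqrtd.re_add, Zsqrtd.im_add]; omega

lemma pp_dvd_sub {a b : GaussianInt} (ha : Od a) (hb : Od b) : pp ∣ a - b := by
  rw [od_iff] at ha hb; rw [pp_dvd_iff]; simp only [Zsqrtd.re_sub, Zsqrtd.im_sub]; omega

lemma unit_mem {u : GaussianInt} (hu : IsUnit u) :
    u ∈ ([1, -1, ⟨0,1⟩, ⟨0,-1⟩] : List GaussianInt) := by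
  have h1 : u.norm.natAbs = 1 := Zsqrtd.norm_eq_one_iff.2 hu
  have h0 : u.norm = 1 := by
    have := Zsqrtd.norm_nonneg (by norm_num : (-1:ℤ) ≤ 0) u
    omega
  have h2 : u.re * u.re + u.im * u.im = 1 := by
    have := Zsqrtd.norm_def u
    simp only [neg_neg, neg_mul, sub_neg_eq_add] at this
    linarith [this, h0]
  obtain ⟨r, i⟩ := u
  simp only [List.mem_cons, List.mem_singleton, Zsqrtd.ext_iff] at *
  have hr1 : -1 ≤ r := by nlinarith
  have hr2 : r ≤ 1 := by nlinarith
  have hi1 : -1 ≤ i := by nlinarith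
  have hi2 : i ≤ 1 := by nlinarith
  interval_cases r <;> interval_cases i <;> simp_all

end NT4
-- chunk 2 appended
namespace NT4
open Zsqrtd

lemma unit_cases {u : GaussianInt} (hu : IsUnit u) :
    u = 1 ∨ u = -1 ∨ u = ⟨0,1⟩ ∨ u = ⟨0,-1⟩ := by
  have := unit_mem hu
  simpa using this

lemma unit_pow4 {u : GaussianInt} (hu : IsUnit u) : u ^ 4 = 1 := by
  rcases unit_cases hu with rfl | rfl | rfl | rfl <;> decide

lemma unit_sq {u : GaussianInt} (hu : IsUnit u) : u ^ 2 = 1 ∨ u ^ 2 = -1 := by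
  rcases unit_cases hu with rfl | rfl | rfl | rfl <;> [left; left; right; right] <;> decide

lemma pm_unit {δ : GaussianInt} (h : δ = 1 ∨ δ = -1) : IsUnit δ := by
  rcases h with rfl | rfl
  · exact isUnit_one
  · exact isUnit_one.neg

lemma dvd4_iff (c : GaussianInt) : (4 : GaussianInt) ∣ c ↔ (4 ∣ c.re ∧ 4 ∣ c.im) := by
  have := Zsqrtd.intCast_dvd (d := -1) 4 c
  simpa using this

lemma sq_mod4 {a : GaussianInt} (ha : Od a) :
    ∃ ε η : GaussianInt, (ε = 1 ∨ ε = -1) ∧ a ^ 2 = ε + 4 * η := by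
  rw [od_iff] at ha
  have hsq : a^2 = ⟨a.re*a.re - a.im*a.im, 2*(a.re*a.im)⟩ := by
    rw [pow_two, Zsqrtd.ext_iff]
    constructor
    · simp [Zsqrtd.re_mul]; ring
    · simp [Zsqrtd.im_mul]; ring
  rcases Int.even_or_odd a.re with ⟨r, hr⟩ | ⟨r, hr⟩
  · -- a.re even, a.im odd
    obtain ⟨s, hs⟩ : ∃ s, a.im = 2*s+1 := ⟨(a.im-1)/2, by omega⟩
    refine ⟨-1, ⟨(a.re*a.re - a.im*a.im + 1)/4, 2*(a.re*a.im)/4⟩, Or.inr rfl, ?_⟩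
    rw [hsq, Zsqrtd.ext_iff]
    have h1 : a.re*a.re - a.im*a.im + 1 = 4*(r*r - s*s - s) := by rw [hr, hs]; ring
    have h2 : 2*(a.re*a.im) = 4*(r*(2*s+1)) := by rw [hr, hs]; ring
    constructor
    · simp only [Zsqrtd.re_add, Zsqrtd.re_mul]
      simp [Zsqrtd.ext_iff]
      omega
    · simp only [Zsqrtd.im_add, Zsqrtd.im_mul]
      simp [Zsqrtd.ext_iff]
      omega
  · -- a.re odd, a.im even
    obtain ⟨s, hs⟩ : ∃ s, a.im = 2*s := by
      rcases Int.even_or_odd a.im with ⟨s, hsv⟩ | ⟨s, hsv⟩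
      · exact ⟨s, by omega⟩
      · exfalso; omega
    refine ⟨1, ⟨(a.re*a.re - a.im*a.im - 1)/4, 2*(a.re*a.im)/4⟩, Or.inl rfl, ?_⟩
    rw [hsq, Zsqrtd.ext_iff]
    have h1 : a.re*a.re - a.im*a.im - 1 = 4*(r*r + r - s*s) := by rw [hr, hs]; ring
    have h2 : 2*(a.re*a.im) = 4*((2*r+1)*s) := by rw [hr, hs]; ring
    constructor
    · simp only [Zsqrtd.re_add, Zsqrtd.re_mul]
      simp [Zsqrtd.ext_iff]
      omega
    · simp only [Zsqrtd.im_add, Zsqrtd.im_mul]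
      simp [Zsqrtd.ext_iff]
      omega

lemma pow4_mod8 {a : GaussianInt} (ha : Od a) : ∃ γ : GaussianInt, a ^ 4 = 1 + 8 * γ := by
  obtain ⟨ε, η, hε, h⟩ := sq_mod4 ha
  rcases hε with rfl | rfl
  · exact ⟨η + 2*η^2, by rw [show a^4 = (a^2)^2 by ring, h]; ring⟩
  · exact ⟨-η + 2*η^2, by rw [show a^4 = (a^2)^2 by ring, h]; ring⟩

lemma ppow_cancel : ∀ (m : ℕ) {n : ℕ} {A B : GaussianInt}, Od A → Od B →
    pp ^ m * A = pp ^ n * B → m = n ∧ A = B := by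
  intro m
  induction m with
  | zero =>
    intro n A B hA hB h
    cases n with
    | zero => simpa using h
    | succ n =>
      exfalso
      apply hA
      rw [pow_zero, one_mul] at h
      exact ⟨pp ^ n * B, by rw [h, pow_succ]; ring⟩
  | succ m ih =>
    intro n A B hA hB h
    cases n with
    | zero =>
      exfalso
      apply hB
      rw [pow_zero, one_mul] at h
      exact ⟨pp ^ m * A, by rw [← h, pow_succ]; ring⟩
    | succ n =>
      have hc : pp * (pp ^ m * A) = pp * (pp ^ n * B) := by
        linear_combination h
      have := mul_left_cancel₀ pp_ne_zero hc
      obtain ⟨h1, h2⟩ := ih hA hB this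
      exact ⟨by omega, h2⟩

lemma exists_pp_pow : ∀ (N : ℕ) (z : GaussianInt), z.norm.natAbs ≤ N → z ≠ 0 →
    ∃ (k : ℕ) (w : GaussianInt), Od w ∧ z = pp ^ k * w := by
  intro N
  induction N with
  | zero =>
    intro z hN hz
    exfalso
    have := Zsqrtd.norm_eq_zero_iff (by norm_num : (-1:ℤ) < 0) z
    have h2 : z.norm = 0 := by omega
    exact hz (this.mp h2)
  | succ N ih =>
    intro z hN hz
    by_cases hdvd : pp ∣ z
    · obtain ⟨c, rfl⟩ := hdvd
      have hc0 : c ≠ 0 := by rintro rfl; simp at hz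
      have hnorm : (pp * c).norm = 2 * c.norm := by
        rw [Zsqrtd.norm_mul]; norm_num [pp, Zsqrtd.norm_def]
      have hcpos : 0 < c.norm := GaussianInt.norm_pos.mpr hc0
      have hle : c.norm.natAbs ≤ N := by
        have h1 : (pp*c).norm.natAbs = 2 * c.norm.natAbs := by
          rw [hnorm, Int.natAbs_mul]; norm_num
        omega
      obtain ⟨k, w, hw, rfl⟩ := ih c hle hc0
      exact ⟨k+1, w, hw, by ring⟩
    · exact ⟨0, z, hdvd, by simp⟩

lemma coprime_of_no_common_prime {a b : GaussianInt} (ha : a ≠ 0)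
    (H : ∀ p : GaussianInt, Prime p → p ∣ a → p ∣ b → False) : IsCoprime a b := by
  apply isCoprime_of_prime_dvd
  · rintro ⟨rfl, -⟩; exact ha rfl
  · intro p hp hpa hpb; exact H p hp hpa hpb

lemma split_pow {s r w u : GaussianInt} {n : ℕ} (hc : IsCoprime s r) (hu : IsUnit u)
    (h : s * r = u * w ^ n) : ∃ v a : GaussianInt, IsUnit v ∧ s = v * a ^ n := by
  obtain ⟨U, rfl⟩ := hu
  have h2 : ((U⁻¹ : GaussianIntˣ) : GaussianInt) * s * r = w ^ n := by
    rw [mul_assoc, h]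
    rw [← mul_assoc]
    simp
  have hc3 : IsCoprime (((U⁻¹ : GaussianIntˣ) : GaussianInt) * s) r :=
    (isCoprime_mul_unit_left_left (Units.isUnit _) s r).mpr hc
  obtain ⟨d, hd⟩ := exists_associated_pow_of_mul_eq_pow' hc3 h2
  obtain ⟨v, hv⟩ := hd
  have hU : (U : GaussianInt) * ((U⁻¹ : GaussianIntˣ) : GaussianInt) = 1 := by
    rw [← Units.val_mul]; simp
  refine ⟨(U : GaussianInt) * (v : GaussianInt), d, (U.isUnit).mul (v.isUnit), ?_⟩
  linear_combination (-((U : GaussianInt))) * hv + (-(s)) * hU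

end NT4
namespace NT4
open Zsqrtd

lemma od_add_dvd {a b : GaussianInt} (h1 : Od a) (h2 : pp ∣ b) : Od (a + b) := by
  intro hd
  exact h1 (by simpa using dvd_sub hd h2)

lemma pp_sq : pp ^ 2 = (⟨0,2⟩ : GaussianInt) := by decide

lemma two_eq : (2 : GaussianInt) = pp ^ 2 * ⟨0,-1⟩ := by decide

lemma vsplit_core {e₁ e₂ : ℕ} {q₁ q₂ r : GaussianInt} (h1 : Od q₁) (h2 : Od q₂) (hr : Od r)
    (hlt : e₁ < e₂) (h : pp ^ e₁ * q₁ + pp ^ e₂ * q₂ = pp ^ 2 * r) :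
    e₁ = 2 ∧ 3 ≤ e₂ ∧ r = q₁ + pp ^ (e₂ - 2) * q₂ := by
  have hpw : pp ^ e₂ = pp ^ e₁ * pp ^ (e₂ - e₁) := by
    rw [← pow_add]; congr 1; omega
  have key : pp ^ e₁ * (q₁ + pp ^ (e₂ - e₁) * q₂) = pp ^ 2 * r := by
    rw [hpw] at h; linear_combination h
  have hodd : Od (q₁ + pp ^ (e₂ - e₁) * q₂) := by
    apply od_add_dvd h1
    exact dvd_mul_of_dvd_left (dvd_pow_self pp (by omega : e₂ - e₁ ≠ 0)) _
  obtain ⟨he, hq⟩ := ppow_cancel e₁ hodd hr key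
  refine ⟨he, by omega, ?_⟩
  have hsub : e₂ - e₁ = e₂ - 2 := by omega
  rw [← hq, hsub]

lemma vsplit {e₁ e₂ : ℕ} {q₁ q₂ r : GaussianInt} (h1 : Od q₁) (h2 : Od q₂) (hr : Od r)
    (he₁ : 1 ≤ e₁) (he₂ : 1 ≤ e₂)
    (h : pp ^ e₁ * q₁ + pp ^ e₂ * q₂ = pp ^ 2 * r) :
    (e₁ = 2 ∧ 3 ≤ e₂ ∧ r = q₁ + pp ^ (e₂ - 2) * q₂) ∨
    (e₂ = 2 ∧ 3 ≤ e₁ ∧ r = pp ^ (e₁ - 2) * q₁ + q₂) ∨ (e₁ = 1 ∧ e₂ = 1) := by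
  rcases lt_trichotomy e₁ e₂ with hlt | heq | hgt
  · exact Or.inl (vsplit_core h1 h2 hr hlt h)
  · subst heq
    rcases Nat.lt_or_ge e₁ 2 with h2e | h2e
    · right; right; omega
    · exfalso
      obtain ⟨s, hs⟩ := pp_dvd_add h1 h2
      have key : pp ^ 2 * (pp ^ (e₁ - 1) * s) = pp ^ 2 * r := by
        have hpw : pp ^ (e₁ + 1) = pp ^ 2 * pp ^ (e₁ - 1) := by
          rw [← pow_add]; congr 1; omega
        calc pp ^ 2 * (pp ^ (e₁ - 1) * s) = pp ^ (e₁ + 1) * s := by rw [hpw]; ring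
          _ = pp ^ e₁ * (q₁ + q₂) := by rw [hs, pow_succ]; ring
          _ = pp ^ 2 * r := by linear_combination h
      have hre := mul_left_cancel₀ (pow_ne_zero 2 pp_ne_zero) key
      refine hr ⟨pp ^ (e₁ - 2) * s, ?_⟩
      rw [← hre, show e₁ - 1 = 1 + (e₁ - 2) by omega, pow_add]; ring
  · have key : pp ^ e₂ * q₂ + pp ^ e₁ * q₁ = pp ^ 2 * r := by linear_combination h
    rcases vsplit_core h2 h1 hr hgt key with ⟨a, b, c⟩
    exact Or.inr (Or.inl ⟨a, b, by rw [c]; ring⟩)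

end NT4
namespace NT4
open Zsqrtd

def Desc (m : ℕ) : Prop := ∀ δ δ' f g h : GaussianInt,
  (δ = 1 ∨ δ = -1) → (δ' = 1 ∨ δ' = -1) → Od f → Od g → Od h → IsCoprime f g →
  g ^ 4 + δ * pp ^ (4 * m + 2) * f ^ 4 = δ' * h ^ 2 → False

lemma units_mod4 {u v : GaussianInt} (hu : IsUnit u) (hv : IsUnit v)
    (hd : (4 : GaussianInt) ∣ u - v) : u = v := by
  rcases unit_cases hu with rfl | rfl | rfl | rfl <;>
    rcases unit_cases hv with rfl | rfl | rfl | rfl <;>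
    first
      | rfl
      | (rw [dvd4_iff] at hd; revert hd; decide)

lemma desc0 : Desc 0 := by
  intro δ δ' f g h hδ hδ' hf hg hh hco hEq
  obtain ⟨γ, hγ⟩ := pow4_mod8 hg
  obtain ⟨φ, hφ⟩ := pow4_mod8 hf
  obtain ⟨ε, η, hε, hη⟩ := sq_mod4 hh
  have key : (4 : GaussianInt) ∣ 1 + δ * pp ^ 2 - δ' * ε :=
    ⟨δ' * η - 2 * γ - 2 * δ * pp ^ 2 * φ, by linear_combination hEq - hγ - δ * pp ^ 2 * hφ + δ' * hη⟩
  rcases hδ with rfl | rfl <;> rcases hδ' with rfl | rfl <;> rcases hε with rfl | rfl <;>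
    (rw [dvd4_iff] at key; revert key; decide)

lemma enum0 : ∀ δ ∈ ([1,-1] : List GaussianInt), ∀ δ' ∈ ([1,-1] : List GaussianInt),
    ∀ ε ∈ ([1,-1] : List GaussianInt), ∀ τ ∈ ([1,-1,⟨0,1⟩,⟨0,-1⟩] : List GaussianInt),
    ∀ w₁ ∈ ([1,-1,⟨0,1⟩,⟨0,-1⟩] : List GaussianInt), ∀ w₂ ∈ ([1,-1,⟨0,1⟩,⟨0,-1⟩] : List GaussianInt),
    τ * τ = -δ' → w₁ * w₂ = δ' * δ →
    ¬ (4 ∣ (τ * ε - pp ^ 2 * w₂ + w₁).re ∧ 4 ∣ (τ * ε - pp ^ 2 * w₂ + w₁).im) := by decide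

lemma pin1 : ∀ τ ∈ ([1,-1,⟨0,1⟩,⟨0,-1⟩] : List GaussianInt),
    ∀ w₁ ∈ ([1,-1,⟨0,1⟩,⟨0,-1⟩] : List GaussianInt), ∀ ε ∈ ([1,-1] : List GaussianInt),
    (4 ∣ (τ * ε + w₁).re ∧ 4 ∣ (τ * ε + w₁).im) → w₁ = -(τ * ε) := by decide

lemma enumA : ∀ δ ∈ ([1,-1] : List GaussianInt), ∀ δ' ∈ ([1,-1] : List GaussianInt),
    ∀ ε ∈ ([1,-1] : List GaussianInt), ∀ τ ∈ ([1,-1,⟨0,1⟩,⟨0,-1⟩] : List GaussianInt),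
    ∀ w₂ ∈ ([1,-1,⟨0,1⟩,⟨0,-1⟩] : List GaussianInt),
    ∀ w₁ ∈ ([1,-1,⟨0,1⟩,⟨0,-1⟩] : List GaussianInt),
    τ * τ = -δ' → w₁ = -(τ * ε) → w₁ * w₂ = δ' * δ →
    (w₁ * w₁ * w₁ * w₂ = -δ ∧ w₁ * w₁ * w₁ * τ = -ε ∧ w₁ * w₁ * w₁ * w₁ = 1) := by decide

lemma mem2 {δ : GaussianInt} (h : δ = 1 ∨ δ = -1) : δ ∈ ([1,-1] : List GaussianInt) := by
  rcases h with rfl | rfl <;> simp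

lemma finstep (m : ℕ) (IHm : Desc m) {δ δ' τ w₁ w₂ c d g : GaussianInt}
    (hδ : δ = 1 ∨ δ = -1) (hδ' : δ' = 1 ∨ δ' = -1)
    (hτu : IsUnit τ) (hτ2 : τ * τ = -δ')
    (hw₁ : IsUnit w₁) (hw₂ : IsUnit w₂) (hw12 : w₁ * w₂ = δ' * δ)
    (hc : Od c) (hd : Od d) (hg : Od g) (hcd : IsCoprime d c)
    (R : τ * g ^ 2 = pp ^ (4 * m + 2) * w₂ * d ^ 4 - w₁ * c ^ 4) : False := by
  obtain ⟨ε, η, hε, hη⟩ := sq_mod4 hg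
  obtain ⟨α, hα⟩ := pow4_mod8 hc
  obtain ⟨β, hβ⟩ := pow4_mod8 hd
  rcases Nat.eq_zero_or_pos m with rfl | hm
  · -- m = 0 : direct contradiction
    have key : (4 : GaussianInt) ∣ τ * ε - pp ^ 2 * w₂ + w₁ :=
      ⟨-(τ*η) + 2*pp^2*w₂*β - 2*w₁*α, by
        linear_combination R - τ * hη + pp ^ 2 * w₂ * hβ - w₁ * hα⟩
    rw [dvd4_iff] at key
    exact enum0 δ (mem2 hδ) δ' (mem2 hδ') ε (mem2 hε) τ (unit_mem hτu)
      w₁ (unit_mem hw₁) w₂ (unit_mem hw₂) hτ2 hw12 key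
  · -- m ≥ 1 : descend
    have hdvd4 : ∃ t : GaussianInt, pp ^ (4 * m + 2) = 4 * t := by
      refine ⟨-pp ^ (4 * (m-1) + 2), ?_⟩
      have hp4 : (pp : GaussianInt) ^ 4 = -4 := by decide
      rw [show 4*m+2 = 4 + (4*(m-1)+2) by omega, pow_add, hp4]; ring
    obtain ⟨t, ht⟩ := hdvd4
    have key : (4 : GaussianInt) ∣ τ * ε + w₁ :=
      ⟨t*w₂*d^4 - τ*η - 2*w₁*α, by
        linear_combination R - τ * hη - w₁ * hα + w₂ * d ^ 4 * ht⟩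
    rw [dvd4_iff] at key
    have hpin : w₁ = -(τ * ε) :=
      pin1 τ (unit_mem hτu) w₁ (unit_mem hw₁) ε (mem2 hε) key
    obtain ⟨hA, hB, hw4⟩ := enumA δ (mem2 hδ) δ' (mem2 hδ') ε (mem2 hε) τ (unit_mem hτu)
      w₂ (unit_mem hw₂) w₁ (unit_mem hw₁) hτ2 hpin hw12
    have hEqNew : c ^ 4 + δ * pp ^ (4 * m + 2) * d ^ 4 = ε * g ^ 2 := by
      linear_combination (pp^(4*m+2) * d^4) * hA + (-(g^2)) * hB +
        (w₁*w₁*w₁) * R + (-(c^4)) * hw4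
    exact IHm δ ε d c g hδ hε hd hc hg hcd hEqNew

end NT4
namespace NT4
open Zsqrtd

lemma dvd_pp {p : GaussianInt} (hp : Prime p) (h : p ∣ pp) : pp ∣ p := by
  obtain ⟨c, hc⟩ := h
  rcases prime_pp.irreducible.isUnit_or_isUnit hc with h1 | h1
  · exact absurd h1 hp.not_unit
  · obtain ⟨u, rfl⟩ := h1
    exact ⟨(↑u⁻¹ : GaussianInt), by rw [hc, mul_assoc, ← Units.val_mul]; simp⟩

lemma od_m1 : Od (⟨0,-1⟩ : GaussianInt) := by rw [od_iff]; decide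

lemma od_p1 : Od (⟨0,1⟩ : GaussianInt) := by rw [od_iff]; decide

lemma unit_m1 : IsUnit (⟨0,-1⟩ : GaussianInt) := IsUnit.of_mul_eq_one ⟨0,1⟩ (by decide)

lemma unit_p1 : IsUnit (⟨0,1⟩ : GaussianInt) := IsUnit.of_mul_eq_one ⟨0,-1⟩ (by decide)

lemma descS (m : ℕ) (IH : Desc m) : Desc (m + 1) := by
  intro δ δ' f g h hδ hδ' hf hg hh hco hEq
  have hδu := pm_unit hδ
  have hδ'u := pm_unit hδ'
  have hδ'δ' : δ' * δ' = 1 := by rcases hδ' with rfl | rfl <;> norm_num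
  obtain ⟨σ, hσu, hσ2⟩ : ∃ σ : GaussianInt, IsUnit σ ∧ σ ^ 2 = δ' := by
    rcases hδ' with rfl | rfl
    · exact ⟨1, isUnit_one, by norm_num⟩
    · exact ⟨⟨0,1⟩, unit_p1, by decide⟩
  rw [show 4 * (m+1) + 2 = 4*m + 6 by omega] at hEq
  have hP12 : (h - σ*g^2) * (h + σ*g^2) = (δ'*δ) * (pp^(4*m+6) * f^4) := by
    linear_combination (-(g^4)) * hσ2 - δ' * hEq - h^2 * hδ'δ'
  have hRne : (δ'*δ) * (pp^(4*m+6) * f^4) ≠ 0 :=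
    mul_ne_zero (hδ'u.mul hδu).ne_zero
      (mul_ne_zero (pow_ne_zero _ pp_ne_zero) (pow_ne_zero _ hf.ne_zero))
  have hP₁ne : h - σ*g^2 ≠ 0 := by
    intro h0; apply hRne; rw [← hP12, h0, zero_mul]
  have hP₂ne : h + σ*g^2 ≠ 0 := by
    intro h0; apply hRne; rw [← hP12, h0, mul_zero]
  obtain ⟨e₁, q₁, hq₁, hP₁⟩ := exists_pp_pow ((h - σ*g^2).norm.natAbs) _ le_rfl hP₁ne
  obtain ⟨e₂, q₂, hq₂, hP₂⟩ := exists_pp_pow ((h + σ*g^2).norm.natAbs) _ le_rfl hP₂ne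
  have hprod2 : pp^(e₁+e₂) * (q₁*q₂) = pp^(4*m+6) * ((δ'*δ) * f^4) := by
    rw [pow_add]
    rw [hP₁, hP₂] at hP12
    linear_combination hP12
  obtain ⟨hesum, hqq⟩ := ppow_cancel (e₁+e₂)
    (od_mul hq₁ hq₂) (od_mul (od_unit (hδ'u.mul hδu)) (od_pow hf 4)) hprod2
  have hmo : Od (⟨0,-1⟩ * h) := od_mul od_m1 hh
  have hsum : pp^e₁ * q₁ + pp^e₂ * q₂ = pp^2 * (⟨0,-1⟩ * h) := by
    rw [← hP₁, ← hP₂]; linear_combination h * two_eq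
  have hodd2 : Od (σ * g^2) := od_mul (od_unit hσu) (od_pow hg 2)
  have he₁1 : 1 ≤ e₁ := by
    rcases Nat.eq_zero_or_pos e₁ with rfl | h1
    · exfalso; rw [pow_zero, one_mul] at hP₁
      exact hq₁ (hP₁ ▸ pp_dvd_sub hh hodd2)
    · exact h1
  have he₂1 : 1 ≤ e₂ := by
    rcases Nat.eq_zero_or_pos e₂ with rfl | h1
    · exfalso; rw [pow_zero, one_mul] at hP₂
      exact hq₂ (hP₂ ▸ pp_dvd_add hh hodd2)
    · exact h1
  have hcq : IsCoprime q₁ q₂ := by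
    apply coprime_of_no_common_prime hq₁.ne_zero
    intro p hp hp1 hp2
    have hppp : ¬ p ∣ pp := fun hd => hq₁ ((dvd_pp hp hd).trans hp1)
    have hph : p ∣ h := by
      have hd : p ∣ pp^2 * (⟨0,-1⟩*h) := by
        rw [← hsum]; exact dvd_add (Dvd.dvd.mul_left hp1 _) (Dvd.dvd.mul_left hp2 _)
      rcases hp.dvd_mul.mp hd with hd | hd
      · exact absurd (hp.dvd_of_dvd_pow hd) hppp
      · rcases hp.dvd_mul.mp hd with hd | hd
        · exact absurd (isUnit_of_dvd_unit hd unit_m1) hp.not_unit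
        · exact hd
    have hpg : p ∣ g := by
      have hd : p ∣ pp^2 * (⟨0,-1⟩*(σ*g^2)) := by
        have heq2 : pp^2 * (⟨0,-1⟩*(σ*g^2)) = pp^e₂*q₂ - pp^e₁*q₁ := by
          rw [← hP₁, ← hP₂]; linear_combination (-(σ*g^2)) * two_eq
        rw [heq2]; exact dvd_sub (Dvd.dvd.mul_left hp2 _) (Dvd.dvd.mul_left hp1 _)
      rcases hp.dvd_mul.mp hd with hd | hd
      · exact absurd (hp.dvd_of_dvd_pow hd) hppp
      · rcases hp.dvd_mul.mp hd with hd | hd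
        · exact absurd (isUnit_of_dvd_unit hd unit_m1) hp.not_unit
        · rcases hp.dvd_mul.mp hd with hd | hd
          · exact absurd (isUnit_of_dvd_unit hd hσu) hp.not_unit
          · exact hp.dvd_of_dvd_pow hd
    have hpf : p ∣ f := by
      have hd : p ∣ δ * (pp^(4*m+6) * f^4) := by
        have heq3 : δ * (pp^(4*m+6) * f^4) = δ'*h^2 - g^4 := by linear_combination hEq
        rw [heq3]
        exact dvd_sub (Dvd.dvd.mul_left (dvd_pow hph two_ne_zero) δ')
          (dvd_pow hpg (by norm_num))
      rcases hp.dvd_mul.mp hd with hd | hd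
      · exact absurd (isUnit_of_dvd_unit hd hδu) hp.not_unit
      · rcases hp.dvd_mul.mp hd with hd | hd
        · exact absurd (hp.dvd_of_dvd_pow hd) hppp
        · exact hp.dvd_of_dvd_pow hd
    exact hp.not_unit (hco.isUnit_of_dvd' hpf hpg)
  obtain ⟨u₁, a, hu₁, hq₁e⟩ := split_pow hcq (hδ'u.mul hδu) hqq
  obtain ⟨u₂, b, hu₂, hq₂e⟩ := split_pow hcq.symm (hδ'u.mul hδu) (show q₂ * q₁ = (δ'*δ) * f^4 by linear_combination hqq)
  have ha : Od a := hq₁.of_dvd ⟨u₁*a^3, by rw [hq₁e]; ring⟩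
  have hb : Od b := hq₂.of_dvd ⟨u₂*b^3, by rw [hq₂e]; ring⟩
  have hab : IsCoprime a b := by
    have h1 := hcq.of_isCoprime_of_dvd_left (⟨u₁*a^3, by rw [hq₁e]; ring⟩ : a ∣ q₁)
    exact h1.of_isCoprime_of_dvd_right (⟨u₂*b^3, by rw [hq₂e]; ring⟩ : b ∣ q₂)
  obtain ⟨α8, hα8⟩ := pow4_mod8 (od_mul ha hb)
  obtain ⟨φ8, hφ8⟩ := pow4_mod8 hf
  have huu : u₁*u₂*(a*b)^4 = δ'*δ*f^4 := by
    rw [hq₁e, hq₂e] at hqq; linear_combination hqq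
  have hw12 : u₁*u₂ = δ'*δ := by
    apply units_mod4 (hu₁.mul hu₂) (hδ'u.mul hδu)
    exact ⟨2*((δ'*δ)*φ8 - (u₁*u₂)*α8), by
      linear_combination huu - (u₁*u₂)*hα8 + (δ'*δ)*hφ8⟩
  rcases vsplit hq₁ hq₂ hmo he₁1 he₂1 hsum with ⟨hA1, hA2, -⟩ | ⟨hB1, hB2, -⟩ | ⟨hC1, hC2⟩
  · -- e₁ = 2, e₂ = 4m+4
    have he₂ : e₂ = 4*m+4 := by omega
    have hpw : pp^(4*m+4) = pp^2 * pp^(4*m+2) := by rw [← pow_add]; congr 1; omega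
    have hcc : pp^2 * ((⟨0,-1⟩*σ) * g^2) = pp^2 * (pp^(4*m+2) * u₂ * b^4 - u₁ * a^4) := by
      rw [hA1, hq₁e] at hP₁
      rw [he₂, hq₂e] at hP₂
      linear_combination hP₂ - hP₁ - (σ*g^2)*two_eq + (u₂*b^4)*hpw
    have R := mul_left_cancel₀ (pow_ne_zero 2 pp_ne_zero) hcc
    refine finstep m IH hδ hδ' (unit_m1.mul hσu) ?_ hu₁ hu₂ hw12 ha hb hg hab.symm R
    have hI : (⟨0,-1⟩:GaussianInt) * ⟨0,-1⟩ = -1 := by decide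
    linear_combination (σ^2) * hI - hσ2
  · -- e₂ = 2, e₁ = 4m+4
    have he₁ : e₁ = 4*m+4 := by omega
    have hpw : pp^(4*m+4) = pp^2 * pp^(4*m+2) := by rw [← pow_add]; congr 1; omega
    have hJ : (⟨0,-1⟩:GaussianInt) = -⟨0,1⟩ := by decide
    have hcc : pp^2 * ((⟨0,1⟩*σ) * g^2) = pp^2 * (pp^(4*m+2) * u₁ * a^4 - u₂ * b^4) := by
      rw [hB1, hq₂e] at hP₂
      rw [he₁, hq₁e] at hP₁
      linear_combination hP₁ - hP₂ + (σ*g^2)*two_eq + (u₁*a^4)*hpw + (pp^2*σ*g^2)*hJ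
    have R := mul_left_cancel₀ (pow_ne_zero 2 pp_ne_zero) hcc
    refine finstep m IH hδ hδ' (unit_p1.mul hσu) ?_ hu₂ hu₁
      (by rw [← hw12]; ring) hb ha hg hab R
    have hI : (⟨0,1⟩:GaussianInt) * ⟨0,1⟩ = -1 := by decide
    linear_combination (σ^2) * hI - hσ2
  · omega

theorem descent : ∀ m, Desc m := by
  intro m
  induction m with
  | zero => exact desc0
  | succ m ih => exact descS m ih

end NT4
namespace NT4
open Zsqrtd

lemma Hfin (m : ℕ) {v₁ v₂ a b X Y : GaussianInt} (hv₁ : IsUnit v₁) (hv₂ : IsUnit v₂)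
    (ha : Od a) (hb : Od b) (hX : Od X) (hY : Od Y) (hab : IsCoprime b a)
    (h1 : ⟨0,-1⟩ * X^2 = v₁ * a^2 + pp^(2*m+1) * v₂ * b^2)
    (h2 : ⟨0,-1⟩ * Y^2 = pp^(2*m+1) * v₂ * b^2 - v₁ * a^2) : False := by
  have hI : (⟨0,-1⟩:GaussianInt) * ⟨0,-1⟩ = -1 := by decide
  have hQ : pp^(4*m+2) = pp^(2*m+1) * pp^(2*m+1) := by rw [← pow_add]; congr 1; omega
  have hprod : (X*Y)^2 = v₁^2*a^4 - pp^(4*m+2)*v₂^2*b^4 := by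
    have hmul : (⟨0,-1⟩ * X^2) * (⟨0,-1⟩ * Y^2) =
        (v₁ * a^2 + pp^(2*m+1) * v₂ * b^2) * (pp^(2*m+1) * v₂ * b^2 - v₁ * a^2) := by
      rw [h1, h2]
    linear_combination (-1) * hmul + (X^2*Y^2) * hI
  have h4 : v₁^4 = 1 := unit_pow4 hv₁
  have key : a^4 + (-(v₁^2*v₂^2)) * pp^(4*m+2) * b^4 = (v₁^2) * (X*Y)^2 := by
    linear_combination (-(v₁^2))*hprod + (-(a^4))*h4
  have hδ : -(v₁^2*v₂^2) = 1 ∨ -(v₁^2*v₂^2) = -1 := by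
    rcases unit_sq hv₁ with h | h <;> rcases unit_sq hv₂ with h' | h' <;> rw [h, h'] <;> norm_num
  exact descent m (-(v₁^2*v₂^2)) (v₁^2) b a (X*Y) hδ (unit_sq hv₁) hb ha
    (od_mul hX hY) hab key

end NT4

open Zsqrtd NT4

/-- The equation `x⁴ - y⁴ = (1+i)·z²` has no nontrivial solutions over the
Gaussian integers. -/
theorem no_nontrivial_solution_x4_sub_y4_eq_one_add_i_z2 :
    ¬ ∃ x y z : GaussianInt, x * y * z ≠ 0 ∧
      (∀ d : GaussianInt, d ∣ x → d ∣ y → d ∣ z → IsUnit d) ∧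
      x ^ 4 - y ^ 4 = (1 + sqrtd) * z ^ 2 := by
  rintro ⟨x, y, z, hxyz, hgcd, hEq⟩
  have hppe : (1 + sqrtd : GaussianInt) = pp := by decide
  rw [hppe] at hEq
  have hz0 : z ≠ 0 := by rintro rfl; simp at hxyz
  have hx0 : x ≠ 0 := by rintro rfl; simp at hxyz
  have hy0 : y ≠ 0 := by rintro rfl; simp at hxyz
  have hdx_iff : pp ∣ x ↔ pp ∣ y := by
    constructor
    · intro hd
      apply prime_pp.dvd_of_dvd_pow (n := 4)
      have h1 : y^4 = x^4 - pp*z^2 := by linear_combination -hEq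
      rw [h1]
      exact dvd_sub (dvd_pow hd (by norm_num)) (dvd_mul_right pp _)
    · intro hd
      apply prime_pp.dvd_of_dvd_pow (n := 4)
      have h1 : x^4 = y^4 + pp*z^2 := by linear_combination hEq
      rw [h1]
      exact dvd_add (dvd_pow hd (by norm_num)) (dvd_mul_right pp _)
  have hox : Od x := by
    intro hdx
    have hdy := hdx_iff.mp hdx
    have hdz : pp ∣ z := by
      obtain ⟨x', rfl⟩ := hdx
      obtain ⟨y', rfl⟩ := hdy
      apply prime_pp.dvd_of_dvd_pow (n := 2)
      refine ⟨pp^2*(x'^4 - y'^4), ?_⟩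
      apply mul_left_cancel₀ pp_ne_zero
      linear_combination -hEq
    exact prime_pp.not_unit (hgcd pp hdx hdy hdz)
  have hoy : Od y := fun hdy => hox (hdx_iff.mpr hdy)
  have hcop : IsCoprime x y := by
    apply coprime_of_no_common_prime hx0
    intro p hp hp1 hp2
    have hppp : ¬ p ∣ pp := fun hd => hox ((dvd_pp hp hd).trans hp1)
    have hpz : p ∣ z := by
      apply hp.dvd_of_dvd_pow (n := 2)
      have hd : p ∣ pp * z^2 := by
        rw [← hEq]
        exact dvd_sub (dvd_pow hp1 (by norm_num)) (dvd_pow hp2 (by norm_num))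
      rcases hp.dvd_mul.mp hd with hd | hd
      · exact absurd hd hppp
      · exact hd
    exact hp.not_unit (hgcd p hp1 hp2 hpz)
  obtain ⟨k, w, hw, rfl⟩ := exists_pp_pow (z.norm.natAbs) z le_rfl hz0
  have hDS : (x^2 - y^2) * (x^2 + y^2) = pp^(2*k+1) * w^2 := by
    linear_combination hEq
  have hRne : pp^(2*k+1) * w^2 ≠ 0 :=
    mul_ne_zero (pow_ne_zero _ pp_ne_zero) (pow_ne_zero _ hw.ne_zero)
  have hD0 : x^2 - y^2 ≠ 0 := by intro h0; apply hRne; rw [← hDS, h0, zero_mul]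
  have hS0 : x^2 + y^2 ≠ 0 := by intro h0; apply hRne; rw [← hDS, h0, mul_zero]
  obtain ⟨d₁, r₁, hr₁, hD⟩ := exists_pp_pow ((x^2-y^2).norm.natAbs) _ le_rfl hD0
  obtain ⟨d₂, r₂, hr₂, hS⟩ := exists_pp_pow ((x^2+y^2).norm.natAbs) _ le_rfl hS0
  have hprod2 : pp^(d₁+d₂)*(r₁*r₂) = pp^(2*k+1)*(w^2) := by
    rw [pow_add]
    rw [hD, hS] at hDS
    linear_combination hDS
  obtain ⟨hdsum, hrr⟩ := ppow_cancel _ (od_mul hr₁ hr₂) (od_pow hw 2) hprod2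
  have hox2 : Od (x^2) := od_pow hox 2
  have hoy2 : Od (y^2) := od_pow hoy 2
  have hd₁1 : 1 ≤ d₁ := by
    rcases Nat.eq_zero_or_pos d₁ with rfl | h1
    · exfalso; rw [pow_zero, one_mul] at hD
      exact hr₁ (hD ▸ pp_dvd_sub hox2 hoy2)
    · exact h1
  have hd₂1 : 1 ≤ d₂ := by
    rcases Nat.eq_zero_or_pos d₂ with rfl | h1
    · exfalso; rw [pow_zero, one_mul] at hS
      exact hr₂ (hS ▸ pp_dvd_add hox2 hoy2)
    · exact h1
  have hmo : Od (⟨0,-1⟩ * x^2) := od_mul od_m1 hox2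
  have hsum : pp^d₁*r₁ + pp^d₂*r₂ = pp^2*(⟨0,-1⟩*x^2) := by
    rw [← hD, ← hS]; linear_combination (x^2) * two_eq
  have hcr : IsCoprime r₁ r₂ := by
    apply coprime_of_no_common_prime hr₁.ne_zero
    intro p hp hp1 hp2
    have hppp : ¬ p ∣ pp := fun hd => hr₁ ((dvd_pp hp hd).trans hp1)
    have hunit : ∀ c : GaussianInt, Od c → p ∣ pp^2 * (⟨0,-1⟩*c) → p ∣ c := by
      intro c _ hd
      rcases hp.dvd_mul.mp hd with hd | hd
      · exact absurd (hp.dvd_of_dvd_pow hd) hppp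
      · rcases hp.dvd_mul.mp hd with hd | hd
        · exact absurd (isUnit_of_dvd_unit hd unit_m1) hp.not_unit
        · exact hd
    have hpx : p ∣ x := by
      apply hp.dvd_of_dvd_pow (n := 2)
      apply hunit _ hox2
      rw [← hsum]
      exact dvd_add (Dvd.dvd.mul_left hp1 _) (Dvd.dvd.mul_left hp2 _)
    have hpy : p ∣ y := by
      apply hp.dvd_of_dvd_pow (n := 2)
      apply hunit _ hoy2
      have heq2 : pp^2 * (⟨0,-1⟩*y^2) = pp^d₂*r₂ - pp^d₁*r₁ := by
        rw [← hD, ← hS]; linear_combination (-(y^2)) * two_eq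
      rw [heq2]
      exact dvd_sub (Dvd.dvd.mul_left hp2 _) (Dvd.dvd.mul_left hp1 _)
    exact hp.not_unit (hcop.isUnit_of_dvd' hpx hpy)
  obtain ⟨v₁, a, hv₁, hr₁e⟩ := split_pow hcr isUnit_one (show r₁ * r₂ = 1 * w^2 by rw [one_mul]; exact hrr)
  obtain ⟨v₂, b, hv₂, hr₂e⟩ := split_pow hcr.symm isUnit_one (show r₂ * r₁ = 1 * w^2 by rw [one_mul]; linear_combination hrr)
  have ha : Od a := hr₁.of_dvd ⟨v₁*a, by rw [hr₁e]; ring⟩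
  have hb : Od b := hr₂.of_dvd ⟨v₂*b, by rw [hr₂e]; ring⟩
  have hab : IsCoprime a b := by
    have h1 := hcr.of_isCoprime_of_dvd_left (⟨v₁*a, by rw [hr₁e]; ring⟩ : a ∣ r₁)
    exact h1.of_isCoprime_of_dvd_right (⟨v₂*b, by rw [hr₂e]; ring⟩ : b ∣ r₂)
  rcases vsplit hr₁ hr₂ hmo hd₁1 hd₂1 hsum with ⟨h1a, h1b, h1r⟩ | ⟨h2a, h2b, h2r⟩ | ⟨h3a, h3b⟩
  · -- d₁ = 2, d₂ = 2k-1
    have hk2 : 2 ≤ k := by omega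
    have hd₂e : d₂ - 2 = 2*(k-2)+1 := by omega
    rw [hd₂e, hr₁e, hr₂e] at h1r
    have h1' : ⟨0,-1⟩*x^2 = v₁*a^2 + pp^(2*(k-2)+1)*v₂*b^2 := by linear_combination h1r
    have hpw2 : pp^d₂ = pp^2 * pp^(2*(k-2)+1) := by rw [← pow_add]; congr 1; omega
    have hcc2 : pp^2*(⟨0,-1⟩*y^2) = pp^2*(pp^(2*(k-2)+1)*v₂*b^2 - v₁*a^2) := by
      rw [h1a, hr₁e] at hD
      rw [hpw2, hr₂e] at hS
      linear_combination hS - hD - (y^2)*two_eq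
    have h2' := mul_left_cancel₀ (pow_ne_zero 2 pp_ne_zero) hcc2
    exact Hfin (k-2) hv₁ hv₂ ha hb hox hoy hab.symm h1' h2'
  · -- d₂ = 2, d₁ = 2k-1
    have hk2 : 2 ≤ k := by omega
    have hd₁e : d₁ - 2 = 2*(k-2)+1 := by omega
    rw [hd₁e, hr₁e, hr₂e] at h2r
    have h1' : ⟨0,-1⟩*x^2 = v₂*b^2 + pp^(2*(k-2)+1)*v₁*a^2 := by linear_combination h2r
    have hpw2 : pp^d₁ = pp^2 * pp^(2*(k-2)+1) := by rw [← pow_add]; congr 1; omega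
    have hcc2 : pp^2*(⟨0,-1⟩*y^2) = pp^2*(v₂*b^2 - pp^(2*(k-2)+1)*v₁*a^2) := by
      rw [hpw2, hr₁e] at hD
      rw [h2a, hr₂e] at hS
      linear_combination hS - hD - (y^2)*two_eq
    have hder := mul_left_cancel₀ (pow_ne_zero 2 pp_ne_zero) hcc2
    have hK : (⟨0,-1⟩:GaussianInt)*(⟨0,1⟩*⟨0,1⟩) = -⟨0,-1⟩ := by decide
    have h2' : ⟨0,-1⟩*(⟨0,1⟩*y)^2 = pp^(2*(k-2)+1)*v₁*a^2 - v₂*b^2 := by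
      linear_combination (-1)*hder + (y^2)*hK
    exact Hfin (k-2) hv₂ hv₁ hb ha hox (od_mul od_p1 hoy) hab h1' h2'
  · omega
end

section
/- There are no Gaussian integers n, m, n', m' with n·m ≠ 0, gcd(n, m) a unit, gcd(n', m') a unit, m and m' both divisible by 1+i, such that n^2 + m^2 = n'^2 - m'^2 and n·m = n'·m'. -/
open Zsqrtd

local notation "R" => GaussianInt
local notation "μ" => (1 + sqrtd : GaussianInt)

set_option synthInstance.maxHeartbeats 1000000 in
noncomputable instance : DecompositionMonoid GaussianInt := inferInstance

lemma mu_sq : μ^2 = 2 * sqrtd := by decide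
lemma mu_pow4 : μ^4 = -4 := by decide
lemma two_eq : (2:R) = -sqrtd * μ^2 := by decide

lemma mu_dvd_iff (x : R) : μ ∣ x ↔ (2:ℤ) ∣ x.re + x.im := by
  constructor
  · rintro ⟨y, rfl⟩
    simp [Zsqrtd.add_def, Zsqrtd.re_mul, Zsqrtd.im_mul]
    ring_nf
    omega
  · intro h
    refine ⟨⟨(x.re + x.im)/2, (x.im - x.re)/2⟩, ?_⟩
    have h2 : (2:ℤ) ∣ x.im - x.re := by omega
    ext <;> simp [Zsqrtd.re_mul, Zsqrtd.im_mul] <;> omega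

lemma not_unit_mu : ¬ IsUnit (μ) := by
  rw [← Zsqrtd.norm_eq_one_iff]
  decide

lemma prime_mu : Prime (μ) := by
  have hirr : Irreducible (μ) := by
    constructor
    · exact not_unit_mu
    · intro a b hab
      by_contra hcon
      push_neg at hcon
      obtain ⟨ha, hb⟩ := hcon
      have h2 : a.norm.natAbs * b.norm.natAbs = 2 := by
        have : (μ:R).norm = 2 := by decide
        have hn := Zsqrtd.norm_mul a b
        rw [← hab, this] at hn
        have := congrArg Int.natAbs hn
        simpa [Int.natAbs_mul] using this.symm
      have ha' : a.norm.natAbs ≠ 1 := fun h => ha (Zsqrtd.norm_eq_one_iff.mp h)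
      have hb' : b.norm.natAbs ≠ 1 := fun h => hb (Zsqrtd.norm_eq_one_iff.mp h)
      have h3 : a.norm.natAbs ∣ 2 := ⟨_, h2.symm⟩
      rcases (Nat.prime_two.eq_one_or_self_of_dvd _ h3) with h | h
      · exact ha' h
      · rw [h] at h2; omega
  exact hirr.prime

lemma sq_comp (a b : ℤ) : (⟨a,b⟩ : R)^2 = ⟨a^2 - b^2, 2*a*b⟩ := by
  ext <;> simp [pow_two, Zsqrtd.re_mul, Zsqrtd.im_mul] <;> ring

lemma sq_odd_mod4 (x : R) (h : ¬ μ ∣ x) : (4:R) ∣ x^2 - 1 ∨ (4:R) ∣ x^2 + 1 := by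
  rw [mu_dvd_iff] at h
  obtain ⟨a, b⟩ := x
  simp only at h
  rw [sq_comp]
  rcases (by omega : a % 2 = 0 ∧ b % 2 ≠ 0 ∨ a % 2 ≠ 0 ∧ b % 2 = 0) with ⟨ha, hb⟩ | ⟨ha, hb⟩
  · right
    obtain ⟨s, rfl⟩ : ∃ s, a = 2*s := ⟨a/2, by omega⟩
    obtain ⟨t, rfl⟩ : ∃ t, b = 2*t+1 := ⟨b/2, by omega⟩
    refine ⟨⟨s^2 - t^2 - t, s*(2*t+1)⟩, ?_⟩
    ext <;> simp [Zsqrtd.re_mul, Zsqrtd.im_mul, Zsqrtd.add_def] <;> ring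
  · left
    obtain ⟨s, rfl⟩ : ∃ s, b = 2*s := ⟨b/2, by omega⟩
    obtain ⟨t, rfl⟩ : ∃ t, a = 2*t+1 := ⟨a/2, by omega⟩
    refine ⟨⟨t^2 + t - s^2, s*(2*t+1)⟩, ?_⟩
    ext <;> simp [Zsqrtd.re_mul, Zsqrtd.im_mul, Zsqrtd.add_def] <;> ring

lemma sq_odd_mod2 (x : R) (h : ¬ μ ∣ x) : (2:R) ∣ x^2 - 1 := by
  rw [mu_dvd_iff] at h
  obtain ⟨a, b⟩ := x
  simp only at h
  rw [sq_comp]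
  have h2 : (2:ℤ) ∣ a^2 - b^2 - 1 := by
    rcases (by omega : a % 2 = 0 ∧ b % 2 ≠ 0 ∨ a % 2 ≠ 0 ∧ b % 2 = 0) with ⟨ha, hb⟩ | ⟨ha, hb⟩
    · obtain ⟨s, rfl⟩ : ∃ s, a = 2*s := ⟨a/2, by omega⟩
      obtain ⟨t, rfl⟩ : ∃ t, b = 2*t+1 := ⟨b/2, by omega⟩
      exact ⟨2*s^2-2*t^2-2*t-1, by ring⟩
    · obtain ⟨s, rfl⟩ : ∃ s, b = 2*s := ⟨b/2, by omega⟩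
      obtain ⟨t, rfl⟩ : ∃ t, a = 2*t+1 := ⟨a/2, by omega⟩
      exact ⟨2*t^2+2*t-2*s^2, by ring⟩
  obtain ⟨k, hk⟩ := h2
  refine ⟨⟨k, a*b⟩, ?_⟩
  ext <;> simp [Zsqrtd.re_mul, Zsqrtd.im_mul, Zsqrtd.add_def]
  · omega
  · ring

lemma pow4_odd_mod8 (x : R) (h : ¬ μ ∣ x) : (8:R) ∣ x^4 - 1 := by
  have h4 := sq_odd_mod4 x h
  have h2 : (2:R) ∣ x^2 - 1 := sq_odd_mod2 x h
  have h2' : (2:R) ∣ x^2 + 1 := by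
    obtain ⟨c, hc⟩ := h2
    exact ⟨c+1, by linear_combination hc⟩
  have key : x^4 - 1 = (x^2-1)*(x^2+1) := by ring
  rcases h4 with ⟨c, hc⟩ | ⟨c, hc⟩
  · obtain ⟨e, he⟩ := h2'
    exact ⟨c*e, by rw [key, hc, he]; ring⟩
  · obtain ⟨e, he⟩ := h2
    exact ⟨e*c, by rw [key, he, hc]; ring⟩

lemma unit_enum {u : R} (h : IsUnit u) :
    u = 1 ∨ u = -1 ∨ u = sqrtd ∨ u = -sqrtd := by
  have h1 : u.norm.natAbs = 1 := Zsqrtd.norm_eq_one_iff.mpr h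
  obtain ⟨a, b⟩ := u
  have hnorm : (⟨a,b⟩ : GaussianInt).norm = a*a + b*b := by
    simp [Zsqrtd.norm]
  rw [hnorm] at h1
  have hn : a*a + b*b = 1 := by
    have h2 := Int.natAbs_eq (a*a+b*b)
    have h3 : (0:ℤ) ≤ a*a + b*b := by nlinarith [mul_self_nonneg a, mul_self_nonneg b]
    omega
  have ha1 : -1 ≤ a := by nlinarith
  have ha2 : a ≤ 1 := by nlinarith
  have hb1 : -1 ≤ b := by nlinarith
  have hb2 : b ≤ 1 := by nlinarith
  interval_cases a <;> interval_cases b <;> simp_all <;> decide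

lemma unit_sq {u : R} (h : IsUnit u) : u^2 = 1 ∨ u^2 = -1 := by
  rcases unit_enum h with rfl|rfl|rfl|rfl
  · left; decide
  · left; decide
  · right; decide
  · right; decide

lemma odd_unit {u : R} (h : IsUnit u) : ¬ μ ∣ u := by
  intro hd
  exact prime_mu.not_unit (isUnit_of_dvd_unit hd h)

lemma coprime_mu_of_odd {x : R} (h : ¬ μ ∣ x) : IsCoprime (μ) x :=
  (Prime.coprime_iff_not_dvd prime_mu).mpr h

lemma coprime_two_of_odd {x : R} (h : ¬ μ ∣ x) : IsCoprime (2:R) x := by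
  rw [two_eq]
  exact (isCoprime_mul_unit_left_left (by exact (isUnit_iff_exists_inv).mpr ⟨sqrtd, by decide⟩ : IsUnit (-sqrtd : GaussianInt)) _ _).mpr
    ((coprime_mu_of_odd h).pow_left)

lemma coprime_twopow_of_odd {x : R} (h : ¬ μ ∣ x) (j : ℕ) : IsCoprime ((2:R)^j) x :=
  (coprime_two_of_odd h).pow_left

lemma odd_mul {x y : R} (hx : ¬ μ ∣ x) (hy : ¬ μ ∣ y) : ¬ μ ∣ x * y := by
  intro h
  rcases prime_mu.2.2 _ _ h with h|h
  exacts [hx h, hy h]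

lemma odd_of_dvd_odd {x y : R} (hx : ¬ μ ∣ x) (hd : y ∣ x) : ¬ μ ∣ y :=
  fun h => hx (h.trans hd)

/-- every nonzero Gaussian integer is μ^k times an odd one -/
lemma mu_norm_natAbs : (μ : GaussianInt).norm.natAbs = 2 := by decide

lemma mu_pow_factor_aux : ∀ (n : ℕ) (d : R), d.norm.natAbs ≤ n → d ≠ 0 →
    ∃ (k : ℕ) (t : R), ¬ μ ∣ t ∧ d = μ^k * t := by
  intro n
  induction n with
  | zero =>
    intro d hle hne
    exfalso
    have := Zsqrtd.norm_eq_zero_iff (by norm_num : (-1:ℤ) < 0) d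
    have : d.norm ≠ 0 := fun h => hne (this.mp h)
    omega
  | succ n ih =>
    intro d hle hne
    by_cases hdvd : μ ∣ d
    · obtain ⟨e, rfl⟩ := hdvd
      have he : e ≠ 0 := by rintro rfl; simp at hne
      have hnorm : ((μ) * e).norm.natAbs = 2 * e.norm.natAbs := by
        rw [Zsqrtd.norm_mul, Int.natAbs_mul, mu_norm_natAbs]
      have hepos : e.norm.natAbs ≠ 0 := by
        intro h
        apply he
        apply (Zsqrtd.norm_eq_zero_iff (by norm_num : (-1:ℤ) < 0) e).mp
        omega
      obtain ⟨k, t, ht, hfac⟩ := ih e (by omega) he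
      exact ⟨k+1, t, ht, by rw [hfac]; ring⟩
    · exact ⟨0, d, hdvd, by simp⟩

lemma mu_pow_factor (d : R) (hne : d ≠ 0) :
    ∃ (k : ℕ) (t : R), ¬ μ ∣ t ∧ d = μ^k * t :=
  mu_pow_factor_aux d.norm.natAbs d le_rfl hne

lemma coprime_of_forall {a b : GaussianInt}
    (h : ∀ d : GaussianInt, d ∣ a → d ∣ b → IsUnit d) : IsCoprime a b := by
  classical
  exact (EuclideanDomain.gcd_isUnit_iff).mp
    (h _ (EuclideanDomain.gcd_dvd_left a b) (EuclideanDomain.gcd_dvd_right a b))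

lemma exists_unit_pow {a b c : GaussianInt} (k : ℕ) (h : IsCoprime a b) (heq : a * b = c ^ k) :
    ∃ (u d : GaussianInt), IsUnit u ∧ a = u * d ^ k := by
  obtain ⟨d, u, hu⟩ := exists_associated_pow_of_mul_eq_pow' h heq
  exact ⟨u, d, u.isUnit, by rw [← hu]; ring⟩

lemma mu_dvd_two : μ ∣ (2:R) := by
  rw [two_eq]
  exact Dvd.dvd.mul_left (dvd_pow_self _ (by norm_num)) _

lemma isUnit_sqrtd : IsUnit (sqrtd : R) :=
  isUnit_iff_exists_inv.mpr ⟨-sqrtd, by decide⟩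

lemma four_pow_eq (j : ℕ) : (4:R)^j = (2^j)^2 := by
  rw [show (4:R) = 2^2 by norm_num, ← pow_mul, ← pow_mul, Nat.mul_comm]

/-- Step A : from a master instance, extract fourth powers. -/
lemma stepA {j : ℕ} (hj : 1 ≤ j) (s x y z : R)
    (hs : s = 1 ∨ s = -1) (hx : ¬ μ ∣ x) (hy : ¬ μ ∣ y) (hz : ¬ μ ∣ z)
    (hxy : IsCoprime x y) (heq : z^2 = x^4 + s * 4^j * y^4) :
    ∃ (δ₁ δ₂ G H ι : R), IsUnit δ₁ ∧ IsUnit δ₂ ∧ (ι = 1 ∨ ι = sqrtd) ∧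
      (¬ μ ∣ G) ∧ (¬ μ ∣ H) ∧ IsCoprime G H ∧
      δ₁ * G^4 - δ₂ * H^4 = 2^(j+1) * ι * y^2 := by
  obtain ⟨ι, hι, hι2⟩ : ∃ ι : R, (ι = 1 ∨ ι = sqrtd) ∧ ι^2 = s := by
    rcases hs with rfl | rfl
    · exact ⟨1, Or.inl rfl, by ring⟩
    · exact ⟨sqrtd, Or.inr rfl, by decide⟩
  set C : R := 2^j * y^2 with hC
  have hιunit : IsUnit ι := by
    rcases hι with rfl | rfl
    exacts [isUnit_one, isUnit_sqrtd]
  have hC2 : C^2 = 4^j * y^4 := by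
    rw [hC, four_pow_eq]; ring
  set A : R := z + ι * C with hA
  set B : R := z - ι * C with hB
  have hAB : A * B = x^4 := by
    have h1 : A * B = z^2 - ι^2 * C^2 := by rw [hA, hB]; ring
    rw [h1, hι2, hC2, heq]; ring
  have hmuC : μ ∣ C := by
    rw [hC]
    exact Dvd.dvd.mul_right (dvd_pow mu_dvd_two (by omega) |>.trans (dvd_refl _)) _
  have hAodd : ¬ μ ∣ A := by
    intro h
    apply hz
    have : μ ∣ A - ι * C := (dvd_sub h (hmuC.mul_left ι))
    simpa [hA] using this
  have hBodd : ¬ μ ∣ B := by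
    intro h
    apply hz
    have : μ ∣ B + ι * C := (dvd_add h (hmuC.mul_left ι))
    simpa [hB] using this
  have hcopAB : IsCoprime A B := by
    apply coprime_of_forall
    intro e heA heB
    have hez : e ∣ 2 * z := by
      have : A + B = 2 * z := by rw [hA, hB]; ring
      rw [← this]; exact dvd_add heA heB
    have heC : e ∣ 2 * (ι * C) := by
      have : A - B = 2 * (ι * C) := by rw [hA, hB]; ring
      rw [← this]; exact dvd_sub heA heB
    have heodd : ¬ μ ∣ e := odd_of_dvd_odd hAodd heA
    have hcop2 : IsCoprime e (2:R) := (coprime_two_of_odd heodd).symm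
    have hez' : e ∣ z := hcop2.dvd_of_dvd_mul_left hez
    have heC' : e ∣ ι * C := hcop2.dvd_of_dvd_mul_left heC
    have hey2 : e ∣ y^2 := by
      have h1 : e ∣ 2^j * (ι * y^2) := by
        have : ι * C = 2^j * (ι * y^2) := by rw [hC]; ring
        rwa [this] at heC'
      have h2 : e ∣ ι * y^2 := ((coprime_twopow_of_odd heodd j).symm).dvd_of_dvd_mul_left h1
      rcases hι with rfl | rfl
      · simpa using h2
      · have : (-sqrtd) * (sqrtd * y^2) = y^2 := by
          have : (-sqrtd) * sqrtd = (1:R) := by decide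
          rw [← mul_assoc, this, one_mul]
        rw [← this]
        exact h2.mul_left _
    have hex4 : e ∣ x^4 := by rw [← hAB]; exact heA.mul_right _
    exact (hxy.pow (m := 4) (n := 2)).isUnit_of_dvd' hex4 hey2
  obtain ⟨δ₁, G, hδ₁, hAG⟩ := exists_unit_pow 4 hcopAB hAB
  obtain ⟨δ₂, H, hδ₂, hBH⟩ := exists_unit_pow 4 hcopAB.symm (by rw [mul_comm]; exact hAB)
  have hGodd : ¬ μ ∣ G := by
    intro h
    exact hAodd (by rw [hAG]; exact ((h.pow (n := 4) (by norm_num)).mul_left δ₁))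
  have hHodd : ¬ μ ∣ H := by
    intro h
    exact hBodd (by rw [hBH]; exact ((h.pow (n := 4) (by norm_num)).mul_left δ₂))
  have hGH : IsCoprime G H := by
    apply coprime_of_forall
    intro e heG heH
    refine hcopAB.isUnit_of_dvd' ?_ ?_
    · rw [hAG]; exact (heG.pow (n := 4) (by norm_num)).mul_left δ₁
    · rw [hBH]; exact (heH.pow (n := 4) (by norm_num)).mul_left δ₂
  refine ⟨δ₁, δ₂, G, H, ι, hδ₁, hδ₂, hι, hGodd, hHodd, hGH, ?_⟩
  calc δ₁ * G^4 - δ₂ * H^4 = A - B := by rw [hAG, hBH]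
    _ = 2^(j+1) * ι * y^2 := by rw [hA, hB, hC]; ring

lemma not8 {c : GaussianInt} (h : ¬ ((8:ℤ) ∣ c.re ∧ (8:ℤ) ∣ c.im)) : ¬ (8:GaussianInt) ∣ c := by
  intro hd
  apply h
  have : ((8:ℤ) : GaussianInt) ∣ c := by exact_mod_cast hd
  exact (Zsqrtd.intCast_dvd _ _).mp this

/-- key congruence: if δ₁ G⁴ - δ₂ H⁴ = c with G,H odd, then 8 ∣ c - δ₁ + δ₂ -/
lemma cong8 {δ₁ δ₂ G H c : GaussianInt} (hG : ¬ μ ∣ G) (hH : ¬ μ ∣ H)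
    (heq : δ₁ * G^4 - δ₂ * H^4 = c) : (8:GaussianInt) ∣ c - δ₁ + δ₂ := by
  obtain ⟨g, hg⟩ := pow4_odd_mod8 G hG
  obtain ⟨h, hh⟩ := pow4_odd_mod8 H hH
  exact ⟨δ₁ * g - δ₂ * h, by linear_combination -heq + δ₁ * hg - δ₂ * hh⟩

/-- units congruent mod 8 are equal -/
lemma unit_eq_of_mod8 {δ₁ δ₂ : GaussianInt} (h₁ : IsUnit δ₁) (h₂ : IsUnit δ₂)
    (h : (8:GaussianInt) ∣ δ₁ - δ₂) : δ₁ = δ₂ := by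
  rcases unit_enum h₁ with rfl|rfl|rfl|rfl <;> rcases unit_enum h₂ with rfl|rfl|rfl|rfl <;>
    first
      | rfl
      | (exfalso; exact not8 (c := _) (by decide) h)

lemma base_contra {δ₁ δ₂ ι y : GaussianInt} (h₁ : IsUnit δ₁) (h₂ : IsUnit δ₂)
    (hι : ι = 1 ∨ ι = sqrtd) (hy : ¬ μ ∣ y)
    (heq : (8:GaussianInt) ∣ 2^(1+1) * ι * y^2 - δ₁ + δ₂) : False := by
  have h8 : (8:GaussianInt) ∣ 4 * ι - δ₁ + δ₂ := by
    obtain ⟨k, hk⟩ := sq_odd_mod2 y hy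
    obtain ⟨e, he⟩ := heq
    exact ⟨e - ι * k, by linear_combination he - 4 * ι * hk⟩
  rcases hι with rfl|rfl <;> rcases unit_enum h₁ with rfl|rfl|rfl|rfl <;>
    rcases unit_enum h₂ with rfl|rfl|rfl|rfl <;>
      exact not8 (c := _) (by decide) h8

lemma odd_one_add_two_mul (t : GaussianInt) : ¬ μ ∣ (1 + 2*t) := by
  intro h
  have h2 : μ ∣ 2*t := (Dvd.dvd.mul_right (by
    have : (2:GaussianInt) = μ * (1 - sqrtd) := by decide
    exact this ▸ dvd_mul_right _ _) t)
  have : μ ∣ (1:GaussianInt) := by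
    have := dvd_sub h h2
    simpa using this
  exact prime_mu.not_unit (isUnit_of_dvd_one this)

lemma sqrtd_sq : (sqrtd : GaussianInt)^2 = -1 := by decide

theorem master (j : ℕ) (hj : 1 ≤ j) : ∀ (s x y z : GaussianInt), (s = 1 ∨ s = -1) →
    ¬ μ ∣ x → ¬ μ ∣ y → ¬ μ ∣ z → IsCoprime x y →
    z^2 = x^4 + s * 4^j * y^4 → False := by
  induction j, hj using Nat.le_induction with
  | base =>
    intro s x y z hs hx hy hz hxy heq
    obtain ⟨δ₁, δ₂, G, H, ι, h₁, h₂, hι, hG, hH, hGH, E⟩ :=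
      stepA le_rfl s x y z hs hx hy hz hxy heq
    exact base_contra h₁ h₂ hι hy (cong8 hG hH E)
  | succ j hj ih =>
    intro s x y z hs hx hy hz hxy heq
    obtain ⟨δ₁, δ₂, G, H, ι, h₁, h₂, hι, hG, hH, hGH, E⟩ :=
      stepA (by omega : 1 ≤ j+1) s x y z hs hx hy hz hxy heq
    -- exponent is (j+1)+1 = j+2 ≥ 3
    have hpow : (2:GaussianInt)^(j+1+1) = 8 * 2^(j-1) := by
      rw [show j+1+1 = 3+(j-1) from by omega, pow_add]
      norm_num
    have h8X : (8:GaussianInt) ∣ 2^(j+1+1) * ι * y^2 := ⟨2^(j-1) * ι * y^2, by rw [hpow]; ring⟩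
    have h8d : (8:GaussianInt) ∣ δ₁ - δ₂ := by
      obtain ⟨d1, hd1⟩ := cong8 hG hH E
      obtain ⟨d2, hd2⟩ := h8X
      exact ⟨d2 - d1, by linear_combination hd2 - hd1⟩
    have hδeq : δ₁ = δ₂ := unit_eq_of_mod8 h₁ h₂ h8d
    subst hδeq
    obtain ⟨δinv, hδinv⟩ := h₁.exists_right_inv
    set ε : GaussianInt := δinv * ι with hεdef
    have hιunit : IsUnit ι := by rcases hι with rfl|rfl; exacts [isUnit_one, isUnit_sqrtd]
    have hε : IsUnit ε := ((IsUnit.of_mul_eq_one _ (mul_comm δ₁ δinv ▸ hδinv))).mul hιunit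
    have hNeq : G^4 - H^4 = ε * 2^(j+1+1) * y^2 := by
      have h1 : δ₁ * (G^4 - H^4) = 2^(j+1+1) * ι * y^2 := by linear_combination E
      linear_combination δinv * h1 - (G^4 - H^4) * hδinv
    -- build sigma, w
    obtain ⟨σ, w, hσ, hwodd, hA'⟩ : ∃ σ w : GaussianInt, (σ = 1 ∨ σ = -1) ∧ (¬ μ ∣ w) ∧
        G^2 + σ*H^2 = 2*w := by
      rcases sq_odd_mod4 G hG with ⟨a, ha⟩|⟨a, ha⟩ <;> rcases sq_odd_mod4 H hH with ⟨b, hb⟩|⟨b, hb⟩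
      · exact ⟨1, 1 + 2*(a+b), Or.inl rfl, odd_one_add_two_mul _,
          by linear_combination ha + hb⟩
      · exact ⟨-1, 1 + 2*(a-b), Or.inr rfl, odd_one_add_two_mul _,
          by linear_combination ha - hb⟩
      · exact ⟨-1, 1 + 2*(a-b-1), Or.inr rfl, odd_one_add_two_mul _,
          by linear_combination ha - hb⟩
      · exact ⟨1, 1 + 2*(a+b-1), Or.inl rfl, odd_one_add_two_mul _,
          by linear_combination ha + hb⟩
    have hσ2 : σ^2 = 1 := by rcases hσ with rfl|rfl <;> ring
    set B' : GaussianInt := G^2 - σ*H^2 with hB'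
    have hprod : (2*w) * B' = ε * 2^(j+1+1) * y^2 := by
      rw [← hA', hB']
      linear_combination hNeq - H^4 * hσ2
    have hc : w * B' = ε * 2^(j+1) * y^2 := by
      apply mul_left_cancel₀ (two_ne_zero (α := GaussianInt))
      calc 2 * (w * B') = (2*w) * B' := by ring
        _ = ε * 2^(j+1+1) * y^2 := hprod
        _ = 2 * (ε * 2^(j+1) * y^2) := by rw [pow_succ]; ring
    have hdvdB' : (2:GaussianInt)^(j+1) ∣ B' := by
      apply (coprime_twopow_of_odd hwodd (j+1)).dvd_of_dvd_mul_left
      exact ⟨ε * y^2, by rw [hc]; ring⟩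
    obtain ⟨B₀, hB₀⟩ := hdvdB'
    have hwB₀ : w * B₀ = ε * y^2 := by
      apply mul_left_cancel₀ (pow_ne_zero (j+1) (two_ne_zero (α := GaussianInt)))
      calc (2:GaussianInt)^(j+1) * (w * B₀) = w * (2^(j+1) * B₀) := by ring
        _ = w * B' := by rw [← hB₀]
        _ = ε * 2^(j+1) * y^2 := hc
        _ = 2^(j+1) * (ε * y^2) := by ring
    have hB₀odd : ¬ μ ∣ B₀ := by
      intro h
      have : μ ∣ ε * y^2 := by rw [← hwB₀]; exact (h.mul_left w)
      rcases prime_mu.2.2 _ _ this with h'|h'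
      · exact odd_unit hε h'
      · rcases prime_mu.2.2 _ _ (by rwa [pow_two] at h') with h''|h'' <;> exact hy h''
    have hcopwB₀ : IsCoprime w B₀ := by
      apply coprime_of_forall
      intro e hew heB₀
      have heodd : ¬ μ ∣ e := odd_of_dvd_odd hwodd hew
      have heG2 : e ∣ G^2 := by
        have h1 : e ∣ 2*w + B' := dvd_add ((hew.mul_left 2)) (hB₀ ▸ (heB₀.mul_left _))
        have h2 : 2*w + B' = 2 * G^2 := by rw [← hA', hB']; ring
        exact ((coprime_two_of_odd heodd).symm).dvd_of_dvd_mul_left (h2 ▸ h1)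
      have heH2 : e ∣ H^2 := by
        have h1 : e ∣ 2*w - B' := dvd_sub ((hew.mul_left 2)) (hB₀ ▸ (heB₀.mul_left _))
        have h2 : 2*w - B' = 2 * (σ * H^2) := by rw [← hA', hB']; ring
        have h3 : e ∣ σ * H^2 := ((coprime_two_of_odd heodd).symm).dvd_of_dvd_mul_left (h2 ▸ h1)
        have : σ * (σ * H^2) = H^2 := by linear_combination H^2 * hσ2
        exact this ▸ (h3.mul_left σ)
      exact ((hGH.pow (m := 2) (n := 2))).isUnit_of_dvd' heG2 heH2
    obtain ⟨ε', hε'⟩ := hε.exists_right_inv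
    have hwB₀' : (ε' * w) * B₀ = y^2 := by
      linear_combination ε' * hwB₀ + y^2 * hε'
    have hcop' : IsCoprime (ε' * w) B₀ :=
      (isCoprime_mul_unit_left_left (IsUnit.of_mul_eq_one (a := ε') ε (by linear_combination hε')) _ _).mpr hcopwB₀
    obtain ⟨η₁, u, hη₁, hu⟩ := exists_unit_pow 2 hcop' hwB₀'
    obtain ⟨η₂, v, hη₂, hv⟩ := exists_unit_pow 2 hcop'.symm (by rw [mul_comm]; exact hwB₀')
    have hweq : w = (ε * η₁) * u^2 := by
      linear_combination ε * hu - w * hε'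
    set ε₁ : GaussianInt := ε * η₁ with hε₁def
    have hε₁ : IsUnit ε₁ := hε.mul hη₁
    have huodd : ¬ μ ∣ u := by
      intro h
      apply hwodd
      rw [hweq]
      exact Dvd.dvd.mul_left (by rw [pow_two]; exact h.mul_right u) ε₁
    have hvodd : ¬ μ ∣ v := by
      intro h
      apply hB₀odd
      rw [hv]
      exact Dvd.dvd.mul_left (by rw [pow_two]; exact h.mul_right v) η₂
    have hcopuv : IsCoprime u v := by
      apply coprime_of_forall
      intro e heu hev
      refine hcopwB₀.isUnit_of_dvd' ?_ ?_
      · rw [hweq]; exact Dvd.dvd.mul_left (heu.trans (dvd_pow_self u (by norm_num))) ε₁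
      · rw [hv]; exact Dvd.dvd.mul_left (hev.trans (dvd_pow_self v (by norm_num))) η₂
    have hGsq : G^2 = ε₁*u^2 + 2^j * η₂ * v^2 := by
      apply mul_left_cancel₀ (two_ne_zero (α := GaussianInt))
      have h2 : 2*w + B' = 2 * G^2 := by rw [← hA', hB']; ring
      calc (2:GaussianInt) * G^2 = 2*w + B' := h2.symm
        _ = 2*((ε*η₁)*u^2) + 2^(j+1) * (η₂ * v^2) := by
              linear_combination 2 * hweq + hB₀ + 2^(j+1) * hv
        _ = 2 * (ε₁*u^2 + 2^j * η₂ * v^2) := by rw [pow_succ, hε₁def]; ring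
    have hHsq : σ * H^2 = ε₁*u^2 - 2^j * η₂ * v^2 := by
      apply mul_left_cancel₀ (two_ne_zero (α := GaussianInt))
      have h2 : 2*w - B' = 2 * (σ * H^2) := by rw [← hA', hB']; ring
      calc (2:GaussianInt) * (σ * H^2) = 2*w - B' := h2.symm
        _ = 2*((ε*η₁)*u^2) - 2^(j+1) * (η₂ * v^2) := by
              linear_combination 2 * hweq - hB₀ - 2^(j+1) * hv
        _ = 2 * (ε₁*u^2 - 2^j * η₂ * v^2) := by rw [pow_succ, hε₁def]; ring
    have hmul : σ * (G*H)^2 = ε₁^2 * u^4 - 4^j * η₂^2 * v^4 := by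
      have := four_pow_eq j
      calc σ * (G*H)^2 = G^2 * (σ * H^2) := by ring
        _ = (ε₁*u^2 + 2^j * η₂ * v^2) * (ε₁*u^2 - 2^j * η₂ * v^2) := by rw [hGsq, hHsq]
        _ = ε₁^2 * u^4 - 4^j * η₂^2 * v^4 := by rw [four_pow_eq]; ring
    have hGHodd : ¬ μ ∣ G * H := odd_mul hG hH
    have hiGHodd : ¬ μ ∣ sqrtd * (G * H) := odd_mul (odd_unit isUnit_sqrtd) hGHodd
    rcases unit_sq hε₁ with h1|h1 <;> rcases unit_sq hη₂ with h2|h2 <;>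
      rw [h1, h2] at hmul <;> rcases hσ with rfl|rfl
    · exact ih (-1) u v (G*H) (Or.inr rfl) huodd hvodd hGHodd hcopuv
        (by linear_combination hmul)
    · exact ih (-1) u v (sqrtd*(G*H)) (Or.inr rfl) huodd hvodd hiGHodd hcopuv
        (by linear_combination hmul + (G*H)^2 * sqrtd_sq)
    · exact ih 1 u v (G*H) (Or.inl rfl) huodd hvodd hGHodd hcopuv
        (by linear_combination hmul)
    · exact ih 1 u v (sqrtd*(G*H)) (Or.inl rfl) huodd hvodd hiGHodd hcopuv
        (by linear_combination hmul + (G*H)^2 * sqrtd_sq)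
    · exact ih 1 u v (sqrtd*(G*H)) (Or.inl rfl) huodd hvodd hiGHodd hcopuv
        (by linear_combination -hmul + (G*H)^2 * sqrtd_sq)
    · exact ih 1 u v (G*H) (Or.inl rfl) huodd hvodd hGHodd hcopuv
        (by linear_combination -hmul)
    · exact ih (-1) u v (sqrtd*(G*H)) (Or.inr rfl) huodd hvodd hiGHodd hcopuv
        (by linear_combination -hmul + (G*H)^2 * sqrtd_sq)
    · exact ih (-1) u v (G*H) (Or.inr rfl) huodd hvodd hGHodd hcopuv
        (by linear_combination -hmul)

/-- The resolvent system arising from `x⁴ + y⁴ = i·z²` has no solutions: there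
are no Gaussian integers `n, m, n', m'` with `n * m ≠ 0`, `gcd (n, m)` a unit,
`gcd (n', m')` a unit, `m` and `m'` both divisible by `1 + i`, such that
`n² + m² = n'² - m'²` and `n·m = n'·m'`. -/
theorem no_solution_resolvent_system_i :
    ¬ ∃ n m n' m' : GaussianInt, n * m ≠ 0 ∧
      (∀ d : GaussianInt, d ∣ n → d ∣ m → IsUnit d) ∧
      (∀ d : GaussianInt, d ∣ n' → d ∣ m' → IsUnit d) ∧
      (1 + sqrtd) ∣ m ∧ (1 + sqrtd) ∣ m' ∧
      n ^ 2 + m ^ 2 = n' ^ 2 - m' ^ 2 ∧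
      n * m = n' * m' := by
  rintro ⟨n, m, n', m', h0, h1, h2, hm, hm', heq1, heq2⟩
  have hn0 : n ≠ 0 := fun h => h0 (by rw [h, zero_mul])
  have hm0 : m ≠ 0 := fun h => h0 (by rw [h, mul_zero])
  have hnm'0 : n' * m' ≠ 0 := heq2 ▸ h0
  have hn'0 : n' ≠ 0 := fun h => hnm'0 (by rw [h, zero_mul])
  have hm'0 : m' ≠ 0 := fun h => hnm'0 (by rw [h, mul_zero])
  have hnodd : ¬ μ ∣ n := fun h => not_unit_mu (h1 μ h hm)
  have hn'odd : ¬ μ ∣ n' := fun h => not_unit_mu (h2 μ h hm')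
  have hcopnm : IsCoprime n m := coprime_of_forall h1
  have hcopn'm' : IsCoprime n' m' := coprime_of_forall h2
  -- split n and m
  obtain ⟨a, b, han', hbm', hnab⟩ :=
    exists_dvd_and_dvd_of_dvd_mul (heq2 ▸ dvd_mul_right n m : n ∣ n' * m')
  obtain ⟨c, d, hcn', hdm', hmcd⟩ :=
    exists_dvd_and_dvd_of_dvd_mul (heq2 ▸ dvd_mul_left m n : m ∣ n' * m')
  have ha0 : a ≠ 0 := fun h => hn0 (by rw [hnab, h, zero_mul])
  have hb0 : b ≠ 0 := fun h => hn0 (by rw [hnab, h, mul_zero])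
  have hc0 : c ≠ 0 := fun h => hm0 (by rw [hmcd, h, zero_mul])
  have hd0 : d ≠ 0 := fun h => hm0 (by rw [hmcd, h, mul_zero])
  have hadvd : a ∣ n := hnab ▸ dvd_mul_right a b
  have hbdvd : b ∣ n := hnab ▸ dvd_mul_left b a
  have hcdvd : c ∣ m := hmcd ▸ dvd_mul_right c d
  have hddvd : d ∣ m := hmcd ▸ dvd_mul_left d c
  have haodd : ¬ μ ∣ a := odd_of_dvd_odd hnodd hadvd
  have hbodd : ¬ μ ∣ b := odd_of_dvd_odd hnodd hbdvd
  have hcodd : ¬ μ ∣ c := odd_of_dvd_odd hn'odd hcn'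
  have hdeven : μ ∣ d := by
    rcases prime_mu.2.2 _ _ (hmcd ▸ hm : μ ∣ c * d) with h|h
    · exact absurd h hcodd
    · exact h
  have hac : IsCoprime a c :=
    (hcopnm.of_isCoprime_of_dvd_left hadvd).of_isCoprime_of_dvd_right hcdvd
  have had : IsCoprime a d :=
    (hcopnm.of_isCoprime_of_dvd_left hadvd).of_isCoprime_of_dvd_right hddvd
  have hcb : IsCoprime c b :=
    (hcopn'm'.of_isCoprime_of_dvd_left hcn').of_isCoprime_of_dvd_right hbm'
  -- n' = (a*c) * unit
  have hacn' : a * c ∣ n' := hac.mul_dvd han' hcn'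
  have hn'ac : n' ∣ a * c := by
    have h1' : IsCoprime n' (b * d) :=
      ((hcopn'm'.of_isCoprime_of_dvd_right hbm').mul_right
        (hcopn'm'.of_isCoprime_of_dvd_right hdm'))
    apply h1'.dvd_of_dvd_mul_right
    have habcd : (a*c)*(b*d) = n' * m' := by rw [← heq2, hnab, hmcd]; ring
    rw [habcd]
    exact dvd_mul_right _ _
  obtain ⟨uu, huu⟩ := associated_of_dvd_dvd hn'ac hacn'
  set ε : GaussianInt := (uu : GaussianInt) with hεdef
  have hεunit : IsUnit ε := uu.isUnit
  have hn'eq : n' * ε = a * c := huu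
  obtain ⟨εinv, hεinv⟩ := hεunit.exists_right_inv
  have hεinvunit : IsUnit εinv := IsUnit.of_mul_eq_one (a := εinv) ε (by linear_combination hεinv)
  have hn'eq' : n' = (a*c) * εinv := by
    linear_combination εinv * hn'eq - n' * hεinv
  have hm'eq : m' = ε * (b*d) := by
    apply mul_left_cancel₀ hn'0
    rw [← heq2, hnab, hmcd]
    linear_combination -(b*d) * hn'eq
  -- unit squares
  obtain ⟨E, hEval, hιsq, hεsq⟩ : ∃ E : GaussianInt, (E = 1 ∨ E = -1) ∧
      εinv^2 = E ∧ ε^2 = E := by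
    have hsq1 : ε^2 * εinv^2 = 1 := by linear_combination (ε*εinv + 1) * hεinv
    rcases unit_sq hεinvunit with h|h
    · exact ⟨1, Or.inl rfl, h, by linear_combination hsq1 - ε^2 * h⟩
    · exact ⟨-1, Or.inr rfl, h, by linear_combination -hsq1 + ε^2 * h⟩
  have hE2 : E^2 = 1 := by rcases hEval with rfl|rfl <;> ring
  -- the key equation
  have key : b^2*(a^2 + E*d^2) = c^2*(E*a^2 - d^2) := by
    have heqS : (a*b)^2 + (c*d)^2 = ((a*c)*εinv)^2 - (ε*(b*d))^2 := by
      rw [← hnab, ← hmcd, ← hn'eq', ← hm'eq]; exact heq1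
    linear_combination heqS + (a*c)^2 * hιsq - (b*d)^2 * hεsq
  -- extract w
  have hc2dvd : c^2 ∣ a^2 + E*d^2 := by
    apply (hcb.pow (m := 2) (n := 2)).dvd_of_dvd_mul_left
    exact ⟨E*a^2 - d^2, key⟩
  obtain ⟨w, hw⟩ := hc2dvd
  have hbw : E*a^2 - d^2 = b^2 * w := by
    apply mul_left_cancel₀ (pow_ne_zero 2 hc0)
    rw [← key, hw]; ring
  -- w is an odd unit
  have hwodd : ¬ μ ∣ w := by
    intro hmw
    apply haodd
    have h1' : μ ∣ a^2 + E*d^2 := by rw [hw]; exact hmw.mul_left _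
    have h2' : μ ∣ E*d^2 := (hdeven.trans (dvd_pow_self d two_ne_zero)).mul_left E
    have h3' : μ ∣ a^2 := by
      have := dvd_sub h1' h2'
      simpa using this
    rcases prime_mu.2.2 _ _ (by rwa [pow_two] at h3') with h|h <;> exact h
  have hwdvd2 : w ∣ 2 := by
    have h2a : w ∣ 2*a^2 := ⟨c^2 + E*b^2, by linear_combination hw + E * hbw - a^2 * hE2⟩
    have h2d : w ∣ 2*d^2 := ⟨E*c^2 - b^2, by linear_combination E * hw - hbw - d^2 * hE2⟩
    obtain ⟨r, s', hrs⟩ := had.pow (m := 2) (n := 2)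
    have h2eq : (2:GaussianInt) = r*(2*a^2) + s'*(2*d^2) := by linear_combination -2*hrs
    rw [h2eq]
    exact dvd_add (h2a.mul_left r) (h2d.mul_left s')
  have hwunit : IsUnit w := by
    obtain ⟨p, q, hpq⟩ := coprime_two_of_odd hwodd
    apply isUnit_of_dvd_one
    rw [← hpq]
    have hp2 : w ∣ p * 2 := hwdvd2.mul_left p
    exact dvd_add hp2 (dvd_mul_left w q)
  -- the quartic equation
  have hfac : (a^2 + E*d^2) * (E*a^2 - d^2) = E*(a^4 - d^4) := by
    linear_combination a^2*d^2 * hE2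
  rw [hw, hbw] at hfac
  have hfinal : a^4 - d^4 = E*(b*c*w)^2 := by
    linear_combination -E*hfac - (a^4-d^4)*hE2
  have hbcwodd : ¬ μ ∣ b*c*w := odd_mul (odd_mul hbodd hcodd) hwodd
  obtain ⟨e, heodd, he⟩ : ∃ e : GaussianInt, (¬ μ ∣ e) ∧ e^2 = a^4 - d^4 := by
    rcases hEval with rfl|rfl
    · exact ⟨b*c*w, hbcwodd, by linear_combination -hfinal⟩
    · exact ⟨sqrtd*(b*c*w), odd_mul (odd_unit isUnit_sqrtd) hbcwodd,
        by linear_combination -hfinal + (b*c*w)^2 * sqrtd_sq⟩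
  -- decompose d
  obtain ⟨k, t, htodd, hdkt⟩ := mu_pow_factor d hd0
  have hk1 : 1 ≤ k := by
    rcases Nat.eq_zero_or_pos k with rfl|h
    · exfalso
      apply htodd
      rw [pow_zero, one_mul] at hdkt
      rw [← hdkt]
      exact hdeven
    · exact h
  have hd4 : d^4 = (-4)^k * t^4 := by
    rw [hdkt, mul_pow, ← pow_mul, mul_comm k 4, pow_mul, mu_pow4]
  have hcopat : IsCoprime a t :=
    had.of_isCoprime_of_dvd_right ⟨μ^k, by rw [hdkt]; ring⟩
  rcases Nat.even_or_odd k with hk|hk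
  · exact master k hk1 (-1) a t e (Or.inr rfl) haodd htodd heodd hcopat
      (by rw [he, hd4, hk.neg_pow]; ring)
  · exact master k hk1 1 a t e (Or.inl rfl) haodd htodd heodd hcopat
      (by rw [he, hd4, hk.neg_pow]; ring)
end
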